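/- arXiv:2001.05420 — 3 statements merged into one kernel-verified Lean document; each statement's English description precedes it below -/
import Mathlib

section
/- Fisher–Tippett theorem: Let F be a distribution function and suppose there exist constants aₙ > 0, bₙ ∈ ℝ and a distribution function G that is nondegenerate (there exists x with 0 < G(x) < 1) such that F(aₙx + bₙ)ⁿ → G(x) as n → ∞ at every continuity point x of G. Then there exist μ ∈ ℝ and σ > 0 such that exactly one of the following holds for all x ∈ ℝ: (i) there is α > 0 with G(x) = Φ_α((x − μ)/σ); (ii) there is α > 0 with G(x) = Ψ_α((x − μ)/σ); (iii) G(x) = Λ((x − μ)/σ). -/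
open Filter Topology

/-- A (cumulative) distribution function on ℝ: nondecreasing, right-continuous,
with limits 0 at -∞ and 1 at +∞. -/
def IsDistFun (F : ℝ → ℝ) : Prop :=
  Monotone F ∧ (∀ x, ContinuousWithinAt F (Set.Ici x) x) ∧
    Tendsto F atBot (𝓝 0) ∧ Tendsto F atTop (𝓝 1)

/-- The Fréchet law `Φ_α`. -/
noncomputable def frechet (α : ℝ) (x : ℝ) : ℝ :=
  if 0 < x then Real.exp (-(x ^ (-α))) else 0

/-- The Weibull law `Ψ_α`. -/
noncomputable def weibull (α : ℝ) (x : ℝ) : ℝ :=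
  if x < 0 then Real.exp (-((-x) ^ α)) else 1

/-- The Gumbel law `Λ`. -/
noncomputable def gumbel (x : ℝ) : ℝ :=
  Real.exp (-Real.exp (-x))

namespace FT
variable {G H : ℝ → ℝ}

lemma nonneg (hG : IsDistFun G) (x : ℝ) : 0 ≤ G x :=
  le_of_tendsto hG.2.2.1 (eventually_atBot.2 ⟨x, fun y hy => hG.1 hy⟩)

lemma le_one (hG : IsDistFun G) (x : ℝ) : G x ≤ 1 :=
  ge_of_tendsto hG.2.2.2 (eventually_atTop.2 ⟨x, fun y hy => hG.1 hy⟩)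

lemma dense_cocountable {S : Set ℝ} (hS : Set.Countable Sᶜ) {x y : ℝ} (hxy : x < y) :
    ∃ z ∈ S, x < z ∧ z < y := by
  by_contra h
  push_neg at h
  have hsub : Set.Ioo x y ⊆ Sᶜ := fun z hz hzS => absurd (h z hzS hz.1) (not_le.2 hz.2)
  have hcnt : (Set.Ioo x y).Countable := hS.mono hsub
  rw [← Cardinal.le_aleph0_iff_set_countable, Cardinal.mk_Ioo_real hxy] at hcnt
  exact absurd hcnt (by simpa using Cardinal.aleph0_lt_continuum.not_ge)

lemma cont_dense (hG : Monotone G) {x y : ℝ} (hxy : x < y) :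
    ∃ z, ContinuousAt G z ∧ x < z ∧ z < y := by
  have h := hG.countable_not_continuousAt
  have : Set.Countable {z | ContinuousAt G z}ᶜ := by
    exact h
  obtain ⟨z, hz, h1, h2⟩ := dense_cocountable this hxy
  exact ⟨z, hz, h1, h2⟩

lemma right_lim {x : ℝ} (hG : ContinuousWithinAt G (Set.Ici x) x) {u : ℕ → ℝ}
    (hu : Tendsto u atTop (𝓝 x)) (hux : ∀ n, x ≤ u n) :
    Tendsto (fun n => G (u n)) atTop (𝓝 (G x)) :=
  hG.tendsto.comp (tendsto_nhdsWithin_iff.2 ⟨hu, Eventually.of_forall hux⟩)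

lemma ext_cocountable {S : Set ℝ} (hS : Set.Countable Sᶜ)
    (hGr : ∀ x, ContinuousWithinAt G (Set.Ici x) x)
    (hHr : ∀ x, ContinuousWithinAt H (Set.Ici x) x)
    (hagree : ∀ x ∈ S, G x = H x) : ∀ x, G x = H x := by
  intro x
  have hex : ∀ k : ℕ, ∃ z ∈ S, x < z ∧ z < x + 1/(k+1) := fun k =>
    dense_cocountable hS (lt_add_of_pos_right x (by positivity))
  choose u hu h1 h2 using hex
  have hut : Tendsto u atTop (𝓝 x) := by
    have h0 : Tendsto (fun k : ℕ => x + 1/((k:ℝ)+1)) atTop (𝓝 (x+0)) :=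
      tendsto_const_nhds.add (tendsto_one_div_add_atTop_nhds_zero_nat)
    rw [add_zero] at h0
    exact tendsto_of_tendsto_of_tendsto_of_le_of_le tendsto_const_nhds h0
      (fun k => (h1 k).le) (fun k => (h2 k).le)
  have hG' := right_lim (hGr x) hut (fun k => (h1 k).le)
  have hH' := right_lim (hHr x) hut (fun k => (h1 k).le)
  have : (fun k => G (u k)) = fun k => H (u k) := funext fun k => hagree _ (hu k)
  rw [this] at hG'
  exact tendsto_nhds_unique hG' hH'


lemma squeeze {Gn : ℕ → ℝ → ℝ} (hmono : ∀ n, Monotone (Gn n)) (hGm : Monotone G)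
    (h1 : ∀ x, ContinuousAt G x → Tendsto (fun n => Gn n x) atTop (𝓝 (G x)))
    {t : ℝ} (ht : ContinuousAt G t) {tn : ℕ → ℝ} (htn : Tendsto tn atTop (𝓝 t)) :
    Tendsto (fun n => Gn n (tn n)) atTop (𝓝 (G t)) := by
  rw [Metric.tendsto_atTop]
  intro ε hε
  obtain ⟨δ, hδ, hball⟩ := Metric.continuousAt_iff.1 ht (ε/2) (by linarith)
  obtain ⟨p, hpc, hp1, hp2⟩ := cont_dense hGm (show t - δ < t by linarith)
  obtain ⟨q, hqc, hq1, hq2⟩ := cont_dense hGm (show t < t + δ by linarith)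
  have hGp : |G p - G t| < ε/2 := by
    have := hball (show dist p t < δ by rw [Real.dist_eq, abs_lt]; constructor <;> linarith)
    rwa [Real.dist_eq] at this
  have hGq : |G q - G t| < ε/2 := by
    have := hball (show dist q t < δ by rw [Real.dist_eq, abs_lt]; constructor <;> linarith)
    rwa [Real.dist_eq] at this
  have e1 : ∀ᶠ n in atTop, tn n ∈ Set.Ioo p q := htn (Ioo_mem_nhds hp2 hq1)
  have e2 : ∀ᶠ n in atTop, |Gn n p - G p| < ε/2 := by
    have := (h1 p hpc).eventually (eventually_abs_sub_lt (G p) (show (0:ℝ) < ε/2 by linarith))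
    simpa using this
  have e3 : ∀ᶠ n in atTop, |Gn n q - G q| < ε/2 := by
    have := (h1 q hqc).eventually (eventually_abs_sub_lt (G q) (show (0:ℝ) < ε/2 by linarith))
    simpa using this
  have key : ∀ᶠ n in atTop, dist (Gn n (tn n)) (G t) < ε := by
    filter_upwards [e1, e2, e3] with n h1' h2' h3'
    have hu : Gn n (tn n) ≤ Gn n q := hmono n h1'.2.le
    have hl : Gn n p ≤ Gn n (tn n) := hmono n h1'.1.le
    rw [Real.dist_eq, abs_lt]
    rw [abs_lt] at h2' h3' hGp hGq
    constructor <;> linarith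
  obtain ⟨N, hN⟩ := eventually_atTop.1 key
  exact ⟨N, hN⟩

lemma UB1 {Gn : ℕ → ℝ → ℝ} (hmono : ∀ n, Monotone (Gn n)) (hG : IsDistFun G)
    {c d : ℕ → ℝ}
    (h1 : ∀ x, ContinuousAt G x → Tendsto (fun n => Gn n x) atTop (𝓝 (G x)))
    (h2 : ∀ x, ContinuousAt H x → Tendsto (fun n => Gn n (c n * x + d n)) atTop (𝓝 (H x)))
    {z : ℝ} (hzc : ContinuousAt H z) (hz0 : 0 < H z) (hz1 : H z < 1) :
    ∃ u v : ℝ, ∀ᶠ n in atTop, u ≤ c n * z + d n ∧ c n * z + d n ≤ v := by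
  obtain ⟨u₀, hu₀⟩ := eventually_atBot.1 (hG.2.2.1.eventually_lt_const hz0)
  obtain ⟨u, huc, hu1, hu2⟩ := cont_dense hG.1 (show u₀ - 1 < u₀ by linarith)
  have hGu : G u < H z := lt_of_le_of_lt (hG.1 hu2.le) (hu₀ u₀ le_rfl)
  obtain ⟨v₀, hv₀⟩ := eventually_atTop.1 (hG.2.2.2.eventually_const_lt hz1)
  obtain ⟨v, hvc, hv1, hv2⟩ := cont_dense hG.1 (show v₀ < v₀ + 1 by linarith)
  have hGv : H z < G v := lt_of_lt_of_le (hv₀ v₀ le_rfl) (hG.1 hv1.le)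
  have ev1 : ∀ᶠ n in atTop, Gn n u < Gn n (c n * z + d n) :=
    (h1 u huc).eventually_lt (h2 z hzc) hGu
  have ev2 : ∀ᶠ n in atTop, Gn n (c n * z + d n) < Gn n v :=
    (h2 z hzc).eventually_lt (h1 v hvc) hGv
  refine ⟨u, v, (ev1.and ev2).mono (fun n ⟨e1, e2⟩ => ⟨?_, ?_⟩)⟩
  · by_contra h
    exact absurd (hmono n (le_of_not_ge h)) (not_le.2 e1)
  · by_contra h
    exact absurd (hmono n (le_of_not_ge h)) (not_le.2 e2)

lemma two_points (hG : IsDistFun G) (hnd : ∃ x, 0 < G x ∧ G x < 1) :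
    ∃ z₁ z₂, z₁ < z₂ ∧ ContinuousAt G z₁ ∧ ContinuousAt G z₂ ∧
      0 < G z₁ ∧ G z₁ < 1 ∧ 0 < G z₂ ∧ G z₂ < 1 := by
  obtain ⟨x₀, hx0, hx1⟩ := hnd
  have hrc := (hG.2.1 x₀).tendsto
  have hev : ∀ᶠ y in 𝓝[Set.Ici x₀] x₀, G y < 1 := hrc.eventually_lt_const hx1
  obtain ⟨δ, hδ, hsub⟩ := Metric.mem_nhdsWithin_iff.1 hev
  obtain ⟨z₁, hz₁c, hz₁1, hz₁2⟩ := cont_dense hG.1 (show x₀ < x₀ + δ/2 by linarith)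
  obtain ⟨z₂, hz₂c, hz₂1, hz₂2⟩ := cont_dense hG.1 (show z₁ < x₀ + δ by linarith)
  have hmem : ∀ y, x₀ < y → y < x₀ + δ → G y < 1 := by
    intro y hy1 hy2
    exact hsub ⟨by rw [Metric.mem_ball, Real.dist_eq, abs_lt]; constructor <;> linarith,
      Set.mem_Ici.2 hy1.le⟩
  exact ⟨z₁, z₂, hz₂1, hz₁c, hz₂c,
    lt_of_lt_of_le hx0 (hG.1 hz₁1.le), hmem z₁ hz₁1 (by linarith),
    lt_of_lt_of_le hx0 (hG.1 (hz₁1.trans hz₂1).le), hmem z₂ (hz₁1.trans hz₂1) hz₂2⟩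


lemma CTex {Gn : ℕ → ℝ → ℝ} (hmono : ∀ n, Monotone (Gn n))
    (hG : IsDistFun G) (hH : IsDistFun H)
    (hGnd : ∃ x, 0 < G x ∧ G x < 1) (hHnd : ∃ x, 0 < H x ∧ H x < 1)
    {c d : ℕ → ℝ} (hc : ∀ n, 0 < c n)
    (h1 : ∀ x, ContinuousAt G x → Tendsto (fun n => Gn n x) atTop (𝓝 (G x)))
    (h2 : ∀ x, ContinuousAt H x → Tendsto (fun n => Gn n (c n * x + d n)) atTop (𝓝 (H x))) :
    ∃ A B : ℝ, 0 < A ∧ ∀ x, H x = G (A * x + B) := by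
  obtain ⟨z₁, z₂, hz12, hz₁c, hz₂c, hz₁0, hz₁1, hz₂0, hz₂1⟩ := two_points hH hHnd
  obtain ⟨u₁, v₁, ev₁⟩ := UB1 hmono hG h1 h2 hz₁c hz₁0 hz₁1
  obtain ⟨u₂, v₂, ev₂⟩ := UB1 hmono hG h1 h2 hz₂c hz₂0 hz₂1
  set U : ℝ := (v₂ - u₁) / (z₂ - z₁) with hU
  have evcU : ∀ᶠ n in atTop, c n ≤ U := by
    filter_upwards [ev₁, ev₂] with n e1 e2
    rw [le_div_iff₀ (by linarith)]
    nlinarith [e1.1, e2.2]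
  -- symmetric application to bound c from below
  have hmono' : ∀ n, Monotone (fun y => Gn n (c n * y + d n)) := fun n x y hxy =>
    hmono n (by nlinarith [hc n])
  have h2' : ∀ x, ContinuousAt G x →
      Tendsto (fun n => Gn n (c n * ((c n)⁻¹ * x + (-(d n) / (c n))) + d n)) atTop (𝓝 (G x)) := by
    intro x hx
    have : (fun n => Gn n (c n * ((c n)⁻¹ * x + (-(d n) / (c n))) + d n)) = fun n => Gn n x := by
      funext n
      congr 1
      have hcne : c n ≠ 0 := ne_of_gt (hc n)
      field_simp; ring
    rw [this]
    exact h1 x hx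
  obtain ⟨w₁, w₂, hw12, hw₁c, hw₂c, hw₁0, hw₁1, hw₂0, hw₂1⟩ := two_points hG hGnd
  obtain ⟨u₁', v₁', ev₁'⟩ := UB1 (Gn := fun n y => Gn n (c n * y + d n)) (G := H) (H := G)
    hmono' hH (c := fun n => (c n)⁻¹) (d := fun n => -(d n) / (c n)) h2 h2' hw₁c hw₁0 hw₁1
  obtain ⟨u₂', v₂', ev₂'⟩ := UB1 (Gn := fun n y => Gn n (c n * y + d n)) (G := H) (H := G)
    hmono' hH (c := fun n => (c n)⁻¹) (d := fun n => -(d n) / (c n)) h2 h2' hw₂c hw₂0 hw₂1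
  set U' : ℝ := (v₂' - u₁') / (w₂ - w₁) with hU'
  have evcU' : ∀ᶠ n in atTop, (c n)⁻¹ ≤ U' := by
    filter_upwards [ev₁', ev₂'] with n e1 e2
    rw [le_div_iff₀ (by linarith)]
    nlinarith [e1.1, e2.2]
  have hU'pos : 0 < U' := by
    obtain ⟨n, hn⟩ := evcU'.exists
    exact lt_of_lt_of_le (inv_pos.2 (hc n)) hn
  have evcl : ∀ᶠ n in atTop, U'⁻¹ ≤ c n := by
    filter_upwards [evcU'] with n hn
    rw [inv_le_comm₀ hU'pos (hc n)]
    exact hn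
  set l : ℝ := U'⁻¹ with hl
  have hlpos : 0 < l := inv_pos.2 hU'pos
  set D : ℝ := |u₁| + |v₁| + U * |z₁| with hD
  have evd : ∀ᶠ n in atTop, -D ≤ d n ∧ d n ≤ D := by
    filter_upwards [ev₁, evcU, evcl] with n e1 e2 e3
    have hcz : |c n * z₁| ≤ U * |z₁| := by
      rw [abs_mul, abs_of_pos (hc n)]
      exact mul_le_mul_of_nonneg_right e2 (abs_nonneg _)
    have h1' := e1.1
    have h2' := e1.2
    cases abs_le.1 hcz with
    | intro hh1 hh2 =>
      constructor
      · nlinarith [abs_nonneg u₁, neg_abs_le u₁, le_abs_self u₁, abs_nonneg v₁]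
      · nlinarith [le_abs_self v₁, abs_nonneg u₁]
  have evK : ∀ᶠ n in atTop, (c n, d n) ∈ Set.Icc l U ×ˢ Set.Icc (-D) D := by
    filter_upwards [evcU, evcl, evd] with n e1 e2 e3
    exact ⟨⟨e2, e1⟩, e3.1, e3.2⟩
  obtain ⟨⟨A, B⟩, hABK, φ, hφ, hlim⟩ :=
    ((isCompact_Icc (a := l) (b := U)).prod (isCompact_Icc (a := -D) (b := D))).tendsto_subseq'
      (evK.frequently)
  have hA : 0 < A := lt_of_lt_of_le hlpos hABK.1.1
  have hψ : Tendsto φ atTop atTop := hφ.tendsto_atTop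
  have hclim : Tendsto (fun k => c (φ k)) atTop (𝓝 A) := by
    have := (continuous_fst.tendsto ((A, B) : ℝ × ℝ)).comp hlim
    exact this
  have hdlim : Tendsto (fun k => d (φ k)) atTop (𝓝 B) := by
    have := (continuous_snd.tendsto ((A, B) : ℝ × ℝ)).comp hlim
    exact this
  set S : Set ℝ := {x | ContinuousAt H x ∧ ContinuousAt G (A * x + B)} with hSdef
  have hSc : Set.Countable Sᶜ := by
    have hinj : Function.Injective (fun x : ℝ => A * x + B) := fun x y hxy => by
      simp only [add_left_inj] at hxy
      exact mul_left_cancel₀ (ne_of_gt hA) hxy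
    have hsub : Sᶜ ⊆ {x | ¬ContinuousAt H x} ∪
        (fun x : ℝ => A * x + B) ⁻¹' {y | ¬ContinuousAt G y} := by
      intro x hx
      by_contra hcon
      simp only [Set.mem_union, Set.mem_setOf_eq, Set.mem_preimage, not_or, not_not] at hcon
      exact hx ⟨hcon.1, hcon.2⟩
    exact ((hH.1.countable_not_continuousAt).union
      ((hG.1.countable_not_continuousAt).preimage hinj)).mono hsub
  have key : ∀ x ∈ S, H x = G (A * x + B) := by
    intro x hx
    have t1 : Tendsto (fun k => Gn (φ k) (c (φ k) * x + d (φ k))) atTop (𝓝 (H x)) :=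
      (h2 x hx.1).comp hψ
    have ttn : Tendsto (fun k => c (φ k) * x + d (φ k)) atTop (𝓝 (A * x + B)) :=
      (hclim.mul_const x).add hdlim
    have t2 : Tendsto (fun k => Gn (φ k) (c (φ k) * x + d (φ k))) atTop (𝓝 (G (A * x + B))) :=
      squeeze (fun k => hmono (φ k)) hG.1 (fun y hy => (h1 y hy).comp hψ) hx.2 ttn
    exact tendsto_nhds_unique t1 t2
  refine ⟨A, B, hA, ?_⟩
  have hrcH := hH.2.1
  have hrcG : ∀ x, ContinuousWithinAt (fun x => G (A * x + B)) (Set.Ici x) x := by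
    intro x
    have hmap : Set.MapsTo (fun x : ℝ => A * x + B) (Set.Ici x) (Set.Ici (A * x + B)) := by
      intro y hy
      simp only [Set.mem_Ici] at *
      nlinarith
    exact ContinuousWithinAt.comp (hG.2.1 (A * x + B))
      ((continuous_const.mul continuous_id).add continuous_const).continuousWithinAt hmap
  exact ext_cocountable hSc hrcH hrcG key


lemma eq_zero_of_abs_le {e K : ℝ} (h : ∀ n : ℕ, |e| ≤ K / (n + 1)) : e = 0 := by
  by_contra he
  have habs : 0 < |e| := abs_pos.2 he
  obtain ⟨n, hn⟩ := exists_nat_gt (K / |e|)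
  have h1 : K < ((n : ℝ) + 1) * |e| := by
    have := (div_lt_iff₀ habs).1 (hn.trans (lt_add_one _))
    linarith
  have h2 : K / ((n : ℝ) + 1) < |e| := by
    rw [div_lt_iff₀ (by positivity)]
    nlinarith
  exact absurd (h n) (not_le.2 h2)

lemma additive_int {f : ℝ → ℝ} (hf : ∀ u v, f (u + v) = f u + f v) (m : ℤ) (u : ℝ) :
    f (m * u) = m * f u := by
  have f0 : f 0 = 0 := by have := hf 0 0; simp at this; linarith
  induction m using Int.induction_on with
  | zero => simpa using f0
  | succ k ih =>
    have : ((k : ℤ) + 1 : ℝ) * u = (k : ℝ) * u + u := by push_cast; ring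
    push_cast
    push_cast at ih
    rw [add_mul, one_mul, hf, ih]
    ring
  | pred k ih =>
    have key : f ((-(k:ℝ) - 1) * u) + f u = f ((-(k:ℝ)) * u) := by
      rw [← hf]; ring_nf
    push_cast
    push_cast at ih
    nlinarith [key, ih]

lemma additive_linear {f : ℝ → ℝ} (hf : ∀ u v, f (u + v) = f u + f v)
    {c M : ℝ} (hc : 0 < c) (hM : ∀ u ∈ Set.Icc 0 c, f u ≤ M) :
    ∀ x, f x = x * (f c / c) := by
  have hlow : ∀ u ∈ Set.Icc 0 c, f c - M ≤ f u := by
    intro u hu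
    have h1 : f c = f u + f (c - u) := by rw [← hf]; ring_nf
    have h2 : f (c - u) ≤ M := hM _ ⟨by linarith [hu.2], by linarith [hu.1]⟩
    linarith
  set K₀ : ℝ := |M| + |f c - M| with hK₀
  have hfr : ∀ u ∈ Set.Icc 0 c, |f u| ≤ K₀ := by
    intro u hu
    rw [abs_le]
    constructor
    · have := hlow u hu
      have := neg_abs_le (f c - M)
      have := neg_abs_le M
      nlinarith [abs_nonneg M, abs_nonneg (f c - M)]
    · have := hM u hu
      have := le_abs_self M
      nlinarith [abs_nonneg (f c - M)]
  intro x
  apply sub_eq_zero.1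
  apply eq_zero_of_abs_le (K := K₀ + |f c|)
  intro n
  set N : ℝ := (n : ℝ) + 1 with hN
  have hNpos : (0:ℝ) < N := by positivity
  set y : ℝ := N * x with hy
  set m : ℤ := ⌊y / c⌋ with hm
  set r : ℝ := y - m * c with hr
  have hm1 : (m : ℝ) ≤ y / c := Int.floor_le _
  have hm2 : y / c < (m : ℝ) + 1 := Int.lt_floor_add_one _
  have hy1 : (m : ℝ) * c ≤ y := by rw [← le_div_iff₀ hc]; exact hm1
  have hy2 : y < ((m : ℝ) + 1) * c := by rw [← div_lt_iff₀ hc]; exact hm2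
  have hr0 : 0 ≤ r := by simp only [hr]; linarith
  have hr1 : r < c := by simp only [hr]; nlinarith
  have hNE : N * f x = (m : ℝ) * f c + f r := by
    have e1 : f y = f ((m : ℝ) * c + r) := by congr 1; simp [hr]
    have e2 : f ((m : ℝ) * c + r) = f ((m : ℝ) * c) + f r := hf _ _
    have e3 : f ((m : ℝ) * c) = (m : ℝ) * f c := additive_int hf m c
    have e4 : f y = N * f x := by
      have : y = ((n + 1 : ℤ) : ℝ) * x := by push_cast [hy]; ring
      rw [this, additive_int hf]
      push_cast; ring
    rw [e1, e2, e3] at e4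
    linarith
  set ρ : ℝ := y / c - m with hρ
  have hρ0 : 0 ≤ ρ := by simp only [hρ]; linarith
  have hρ1 : ρ < 1 := by simp only [hρ]; linarith
  have hE : f x - x * (f c / c) = (f r - f c * ρ) / N := by
    rw [hρ, hy, eq_div_iff hNpos.ne']
    linear_combination hNE
  rw [hE, abs_div, abs_of_pos hNpos]
  have hnum : |f r - f c * ρ| ≤ K₀ + |f c| := by
    have h1 : |f r| ≤ K₀ := hfr r ⟨hr0, hr1.le⟩
    have h2 : |f c * ρ| ≤ |f c| := by
      rw [abs_mul, abs_of_nonneg hρ0]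
      nlinarith [abs_nonneg (f c)]
    rw [sub_eq_add_neg]
    exact (abs_add_le _ _).trans (by rw [abs_neg]; linarith)
  gcongr


lemma Ucore (hG : IsDistFun G) (hnd : ∃ x, 0 < G x ∧ G x < 1)
    {p q : ℝ} (hp : 1 < p) (hR : ∀ x, G (p * x + q) = G x) : False := by
  obtain ⟨x₀, hx0, hx1⟩ := hnd
  set xs : ℝ := q / (1 - p) with hxs
  have hfix : p * xs + q = xs := by
    have h1 : (1:ℝ) - p ≠ 0 := by intro hh; nlinarith
    rw [hxs]
    field_simp
    ring
  have hiter : ∀ (n : ℕ) (x : ℝ), G (p ^ n * (x - xs) + xs) = G x := by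
    intro n
    induction n with
    | zero => intro x; simp
    | succ k ih =>
      intro x
      have harg : p ^ (k + 1) * (x - xs) + xs = p * (p ^ k * (x - xs) + xs) + q := by
        rw [mul_add, ← mul_assoc, ← pow_succ']
        linarith [hfix]
      rw [harg, hR, ih]
  have hone : ∀ x, xs < x → G x = 1 := by
    intro x hx
    have htop : Tendsto (fun n : ℕ => p ^ n * (x - xs) + xs) atTop atTop := by
      apply tendsto_atTop_add_const_right
      exact (tendsto_pow_atTop_atTop_of_one_lt hp).atTop_mul_const (by linarith)
    have h1 : Tendsto (fun n : ℕ => G (p ^ n * (x - xs) + xs)) atTop (𝓝 1) :=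
      hG.2.2.2.comp htop
    have h2 : (fun n : ℕ => G (p ^ n * (x - xs) + xs)) = fun _ => G x :=
      funext fun n => hiter n x
    rw [h2] at h1
    exact tendsto_nhds_unique tendsto_const_nhds h1
  have hzero : ∀ x, x < xs → G x = 0 := by
    intro x hx
    have hbot : Tendsto (fun n : ℕ => p ^ n * (x - xs) + xs) atTop atBot := by
      apply tendsto_atBot_add_const_right
      exact (tendsto_pow_atTop_atTop_of_one_lt hp).atTop_mul_const_of_neg (by linarith)
    have h1 : Tendsto (fun n : ℕ => G (p ^ n * (x - xs) + xs)) atTop (𝓝 0) :=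
      hG.2.2.1.comp hbot
    have h2 : (fun n : ℕ => G (p ^ n * (x - xs) + xs)) = fun _ => G x :=
      funext fun n => hiter n x
    rw [h2] at h1
    exact tendsto_nhds_unique tendsto_const_nhds h1
  have hxsval : G xs = 1 := by
    have hu : Tendsto (fun k : ℕ => xs + 1 / ((k : ℝ) + 1)) atTop (𝓝 xs) := by
      have h0 : Tendsto (fun k : ℕ => xs + 1 / ((k : ℝ) + 1)) atTop (𝓝 (xs + 0)) :=
        tendsto_const_nhds.add tendsto_one_div_add_atTop_nhds_zero_nat
      rwa [add_zero] at h0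
    have h1 := right_lim (hG.2.1 xs) hu (fun k => le_add_of_nonneg_right (by positivity))
    have h2 : (fun k : ℕ => G (xs + 1 / ((k : ℝ) + 1))) = fun _ => 1 :=
      funext fun k => hone _ (lt_add_of_pos_right xs (by positivity))
    rw [h2] at h1
    exact (tendsto_nhds_unique tendsto_const_nhds h1).symm
  rcases lt_trichotomy x₀ xs with h | h | h
  · rw [hzero x₀ h] at hx0; exact lt_irrefl _ hx0
  · rw [h, hxsval] at hx1; exact lt_irrefl _ hx1
  · rw [hone x₀ h] at hx1; exact lt_irrefl _ hx1

lemma uniq (hG : IsDistFun G) (hnd : ∃ x, 0 < G x ∧ G x < 1)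
    {p q : ℝ} (hp : 0 < p) (hR : ∀ x, G (p * x + q) = G x) : p = 1 ∧ q = 0 := by
  rcases lt_trichotomy p 1 with h | h | h
  · exfalso
    have hR' : ∀ y, G (p⁻¹ * y + (-q / p)) = G y := by
      intro y
      have h1 := hR ((y - q) / p)
      have h2 : p * ((y - q) / p) + q = y := by field_simp; ring
      rw [h2] at h1
      rw [show p⁻¹ * y + -q / p = (y - q) / p by field_simp; ring]
      exact h1.symm
    exact Ucore hG hnd ((one_lt_inv₀ hp).2 h) hR'
  · subst h
    refine ⟨rfl, ?_⟩
    obtain ⟨x₀, hx0, hx1⟩ := hnd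
    have hiter : ∀ (n : ℕ) (x : ℝ), G (x + n * q) = G x := by
      intro n
      induction n with
      | zero => intro x; simp
      | succ k ih =>
        intro x
        have harg : x + (k + 1 : ℕ) * q = 1 * (x + k * q) + q := by push_cast; ring
        rw [harg, hR, ih]
    rcases lt_trichotomy q 0 with hq | hq | hq
    · exfalso
      have hbot : Tendsto (fun n : ℕ => x₀ + n * q) atTop atBot := by
        apply tendsto_atBot_add_const_left
        exact tendsto_natCast_atTop_atTop.atTop_mul_const_of_neg hq
      have h1 : Tendsto (fun n : ℕ => G (x₀ + n * q)) atTop (𝓝 0) := hG.2.2.1.comp hbot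
      rw [funext fun n => hiter n x₀] at h1
      have := tendsto_nhds_unique tendsto_const_nhds h1
      rw [this] at hx0; exact lt_irrefl _ hx0
    · exact hq
    · exfalso
      have htop : Tendsto (fun n : ℕ => x₀ + n * q) atTop atTop := by
        apply tendsto_atTop_add_const_left
        exact tendsto_natCast_atTop_atTop.atTop_mul_const hq
      have h1 : Tendsto (fun n : ℕ => G (x₀ + n * q)) atTop (𝓝 1) := hG.2.2.2.comp htop
      rw [funext fun n => hiter n x₀] at h1
      have := tendsto_nhds_unique tendsto_const_nhds h1
      rw [this] at hx1; exact lt_irrefl _ hx1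
  · exact absurd (Ucore hG hnd h hR) id

lemma uniq2 (hG : IsDistFun G) (hnd : ∃ x, 0 < G x ∧ G x < 1)
    {p q r s : ℝ} (hp : 0 < p) (hr : 0 < r)
    (hR : ∀ x, G (p * x + q) = G (r * x + s)) : p = r ∧ q = s := by
  have hkey : ∀ x, G ((p / r) * x + (q - p * s / r)) = G x := by
    intro x
    have h1 := hR ((x - s) / r)
    have h2 : r * ((x - s) / r) + s = x := by field_simp; ring
    rw [h2] at h1
    rw [← h1]
    congr 1
    field_simp
    ring
  obtain ⟨h1, h2⟩ := uniq hG hnd (div_pos hp hr) hkey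
  have hpr : p = r := by
    field_simp at h1
    exact h1
  refine ⟨hpr, ?_⟩
  rw [hpr] at h2
  have : r * s / r = s := by field_simp
  rw [this] at h2
  linarith


lemma maxstable {F : ℝ → ℝ} (hF : IsDistFun F) (hG : IsDistFun G)
    (hnd : ∃ x, 0 < G x ∧ G x < 1)
    {a b : ℕ → ℝ} (ha : ∀ n, 0 < a n)
    (hconv : ∀ x : ℝ, ContinuousAt G x →
      Tendsto (fun n => F (a n * x + b n) ^ n) atTop (𝓝 (G x)))
    {t : ℝ} (ht : 0 < t) :
    ∃ A B : ℝ, 0 < A ∧ ∀ x, G (A * x + B) = G x ^ t := by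
  set s : ℝ := t⁻¹ with hsdef
  have hs : 0 < s := inv_pos.2 ht
  set m : ℕ → ℕ := fun n => ⌈(n : ℝ) * s⌉₊ with hmdef
  set Gn : ℕ → ℝ → ℝ := fun n x => F (a n * x + b n) ^ m n with hGndef
  set Gs : ℝ → ℝ := fun x => G x ^ s with hGsdef
  have hGs_df : IsDistFun Gs := by
    refine ⟨fun x y hxy => Real.rpow_le_rpow (nonneg hG x) (hG.1 hxy) hs.le,
      fun x => (Real.continuousAt_rpow_const (G x) s (Or.inr hs.le)).comp_continuousWithinAt
        (hG.2.1 x), ?_, ?_⟩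
    · have := ((Real.continuousAt_rpow_const 0 s (Or.inr hs.le)).tendsto).comp hG.2.2.1
      rw [Real.zero_rpow hs.ne'] at this; exact this
    · have := ((Real.continuousAt_rpow_const 1 s (Or.inr hs.le)).tendsto).comp hG.2.2.2
      rw [Real.one_rpow] at this; exact this
  obtain ⟨x₀, hx0, hx1⟩ := hnd
  have hGsnd : ∃ x, 0 < Gs x ∧ Gs x < 1 :=
    ⟨x₀, Real.rpow_pos_of_pos hx0 s, Real.rpow_lt_one (nonneg hG x₀) hx1 hs⟩
  have hm_top : Tendsto m atTop atTop := by
    rw [← tendsto_natCast_atTop_iff (R := ℝ)]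
    apply tendsto_atTop_mono (fun n : ℕ => Nat.le_ceil ((n : ℝ) * s))
    exact tendsto_natCast_atTop_atTop.atTop_mul_const hs
  have he : Tendsto (fun n : ℕ => (m n : ℝ) / n) atTop (𝓝 s) := by
    have hup : Tendsto (fun n : ℕ => s + 1 / (n : ℝ)) atTop (𝓝 (s + 0)) :=
      tendsto_const_nhds.add tendsto_one_div_atTop_nhds_zero_nat
    rw [add_zero] at hup
    apply tendsto_of_tendsto_of_tendsto_of_le_of_le' tendsto_const_nhds hup
    · filter_upwards [eventually_ge_atTop 1] with n hn
      have hnpos : (0:ℝ) < n := by exact_mod_cast hn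
      rw [le_div_iff₀ hnpos]
      calc s * n = (n : ℝ) * s := by ring
        _ ≤ (m n : ℝ) := Nat.le_ceil _
    · filter_upwards [eventually_ge_atTop 1] with n hn
      have hnpos : (0:ℝ) < n := by exact_mod_cast hn
      rw [div_le_iff₀ hnpos]
      have := Nat.ceil_lt_add_one (show (0:ℝ) ≤ (n:ℝ) * s by positivity)
      calc (m n : ℝ) ≤ (n : ℝ) * s + 1 := this.le
        _ = (s + 1/n) * n := by field_simp
  have hmono : ∀ n, Monotone (Gn n) := by
    intro n x y hxy
    exact pow_le_pow_left₀ (nonneg hF _) (hF.1 (by nlinarith [ha n])) (m n)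
  have h1 : ∀ x, ContinuousAt Gs x → Tendsto (fun n => Gn n x) atTop (𝓝 (Gs x)) := by
    intro x hx
    have hcong : (fun y => Gs y ^ (s⁻¹ : ℝ)) = G := by
      funext y
      rw [hGsdef]
      rw [← Real.rpow_mul (nonneg hG y), mul_inv_cancel₀ hs.ne', Real.rpow_one]
    have hxG : ContinuousAt G x := by
      rw [← hcong]
      exact (Real.continuousAt_rpow_const (Gs x) s⁻¹ (Or.inr (inv_pos.2 hs).le)).comp hx
    have hFn := hconv x hxG
    have hpair : Tendsto (fun n => ((F (a n * x + b n) ^ n : ℝ), (m n : ℝ) / n)) atTop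
        (𝓝 (G x, s)) := hFn.prodMk_nhds he
    have hrpw : ContinuousAt (fun p : ℝ × ℝ => p.1 ^ p.2) (G x, s) :=
      Real.continuousAt_rpow _ (Or.inr hs)
    have hcomp := hrpw.tendsto.comp hpair
    apply hcomp.congr'
    filter_upwards [eventually_ge_atTop 1] with n hn
    have hnne : ((n : ℝ)) ≠ 0 := by positivity
    have hu : (0:ℝ) ≤ F (a n * x + b n) := nonneg hF _
    simp only [Function.comp]
    rw [← Real.rpow_natCast (F (a n * x + b n)) n, ← Real.rpow_mul hu,
      mul_comm ((n:ℝ)) ((m n : ℝ)/(n:ℝ)), div_mul_cancel₀ _ hnne, Real.rpow_natCast]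
  set c : ℕ → ℝ := fun n => a (m n) / a n with hcdef
  set d : ℕ → ℝ := fun n => (b (m n) - b n) / a n with hddef
  have hc : ∀ n, 0 < c n := fun n => div_pos (ha _) (ha _)
  have h2 : ∀ x, ContinuousAt G x →
      Tendsto (fun n => Gn n (c n * x + d n)) atTop (𝓝 (G x)) := by
    intro x hx
    have harg : ∀ n, a n * (c n * x + d n) + b n = a (m n) * x + b (m n) := by
      intro n
      have hane : a n ≠ 0 := (ha n).ne'
      rw [hcdef, hddef]
      field_simp
      ring
    have := (hconv x hx).comp hm_top
    apply this.congr
    intro n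
    simp only [Function.comp, hGndef, harg n]
  obtain ⟨A, B, hA, hAB⟩ := CTex hmono hGs_df hG hGsnd ⟨x₀, hx0, hx1⟩ hc h1 h2
  refine ⟨A, B, hA, fun x => ?_⟩
  have h := hAB x
  rw [h, hGsdef]
  rw [← Real.rpow_mul (nonneg hG _), hsdef, inv_mul_cancel₀ ht.ne', Real.rpow_one]


lemma caseF (hG : IsDistFun G) {x₀ C ρ : ℝ} (hx0 : 0 < G x₀) (hx1 : G x₀ < 1)
    (hρ : ρ < 0) (hGt : ∀ (u t : ℝ), 0 < t → G (t ^ ρ * u - C) = G (u - C) ^ t) :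
    ∃ σ α : ℝ, 0 < σ ∧ 0 < α ∧ ∀ x, G x = frechet α ((x + C) / σ) := by
  have hGnn := nonneg hG
  have hzero : ∀ y : ℝ, y < 0 → G (y - C) = 0 := by
    intro y hy
    by_contra hne
    have hpos : 0 < G (y - C) := lt_of_le_of_ne (hGnn _) (Ne.symm hne)
    set tn : ℕ → ℝ := fun n => ((n : ℝ) + 1)⁻¹ with htn
    have htnpos : ∀ n, 0 < tn n := fun n => by positivity
    have htn0 : Tendsto tn atTop (𝓝 0) := by
      have := tendsto_one_div_add_atTop_nhds_zero_nat (𝕜 := ℝ)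
      simpa [htn, one_div] using this
    have hrtop : Tendsto (fun n => tn n ^ ρ) atTop atTop := by
      have h1 : ∀ n, tn n ^ ρ = ((n : ℝ) + 1) ^ (-ρ) := by
        intro n
        rw [htn, Real.inv_rpow (by positivity), ← Real.rpow_neg (by positivity)]
      rw [funext h1]
      exact (tendsto_rpow_atTop (by linarith)).comp
        (tendsto_atTop_add_const_right _ 1 tendsto_natCast_atTop_atTop)
    have harg : Tendsto (fun n => tn n ^ ρ * y - C) atTop atBot := by
      apply tendsto_atBot_add_const_right
      exact hrtop.atTop_mul_const_of_neg hy
    have h0 : Tendsto (fun n => G (tn n ^ ρ * y - C)) atTop (𝓝 0) := hG.2.2.1.comp harg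
    have heqn : (fun n => G (tn n ^ ρ * y - C)) = fun n => G (y - C) ^ tn n :=
      funext fun n => hGt y (tn n) (htnpos n)
    rw [heqn] at h0
    have h1 : Tendsto (fun n => G (y - C) ^ tn n) atTop (𝓝 1) := by
      have hc := Real.continuousAt_const_rpow (a := G (y - C)) (b := 0) hpos.ne'
      have := hc.tendsto.comp htn0
      rw [Real.rpow_zero] at this; exact this
    exact zero_ne_one (tendsto_nhds_unique h0 h1)
  have hzero0 : G (0 - C) = 0 := by
    have h := hGt 0 2 two_pos
    rw [mul_zero] at h
    have hu : G (0 - C) = G (0 - C) ^ (2 : ℝ) := h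
    rw [show ((2:ℝ)) = ((2:ℕ):ℝ) by norm_num, Real.rpow_natCast] at hu
    have hcases : G (0 - C) = 0 ∨ G (0 - C) = 1 := by
      have h2 : G (0 - C) * (G (0 - C) - 1) = 0 := by linear_combination -hu
      rcases mul_eq_zero.1 h2 with h3 | h3
      · exact Or.inl h3
      · exact Or.inr (by linarith)
    rcases hcases with h3 | h3
    · exact h3
    · exfalso
      have hall : ∀ x, G x = 0 ∨ G x = 1 := by
        intro x
        rcases lt_trichotomy (x + C) 0 with hc | hc | hc
        · left
          have := hzero (x + C) hc
          rwa [show x + C - C = x by ring] at this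
        · right
          have hx : x = 0 - C := by linarith
          rw [hx, h3]
        · right
          have hle : G (0 - C) ≤ G x := hG.1 (by linarith)
          have := le_one hG x
          rw [h3] at hle
          linarith
      rcases hall x₀ with h4 | h4 <;> rw [h4] at hx0 hx1 <;> linarith
  have hz₀ : 0 < x₀ + C := by
    rcases lt_trichotomy (x₀ + C) 0 with h | h | h
    · exfalso
      have := hzero (x₀ + C) h
      rw [show x₀ + C - C = x₀ by ring] at this
      rw [this] at hx0; linarith
    · exfalso
      have hx : x₀ = 0 - C := by linarith
      rw [hx, hzero0] at hx0; linarith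
    · exact h
  set z₀ : ℝ := x₀ + C with hz₀def
  set L : ℝ := -Real.log (G x₀) with hL
  have hLpos : 0 < L := by
    have := Real.log_neg hx0 hx1
    rw [hL]; linarith
  set α : ℝ := -(1 / ρ) with hα
  have hαpos : 0 < α := by
    have : 1 / ρ < 0 := div_neg_of_pos_of_neg one_pos hρ
    rw [hα]; linarith
  set σ : ℝ := z₀ * L ^ (1 / α) with hσdef
  have hσ : 0 < σ := mul_pos hz₀ (Real.rpow_pos_of_pos hLpos _)
  refine ⟨σ, α, hσ, hαpos, fun x => ?_⟩
  rcases lt_trichotomy (x + C) 0 with hy | hy | hy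
  · have h1 : G x = 0 := by
      have := hzero (x + C) hy
      rwa [show x + C - C = x by ring] at this
    have h2 : ¬(0 < (x + C) / σ) := not_lt.2 (div_nonpos_of_nonpos_of_nonneg hy.le hσ.le)
    rw [h1, frechet, if_neg h2]
  · have hx : x = 0 - C := by linarith
    have h2 : ¬(0 < (x + C) / σ) := by rw [hy]; simp [zero_div]
    rw [hx, hzero0, frechet, if_neg (by rw [show (0:ℝ) - C + C = 0 by ring]; simp)]
  · set y : ℝ := x + C with hydef
    have hyz : 0 < y / z₀ := div_pos hy hz₀
    set t : ℝ := (y / z₀) ^ (ρ⁻¹) with htdef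
    have htpos : 0 < t := Real.rpow_pos_of_pos hyz _
    have htρ : t ^ ρ = y / z₀ := by
      rw [htdef, ← Real.rpow_mul hyz.le, inv_mul_cancel₀ hρ.ne, Real.rpow_one]
    have hkey := hGt z₀ t htpos
    rw [htρ, div_mul_cancel₀ _ hz₀.ne', show y - C = x by rw [hydef]; ring,
      show z₀ - C = x₀ by rw [hz₀def]; ring] at hkey
    rw [hkey, frechet, if_pos (div_pos hy hσ), Real.rpow_def_of_pos hx0]
    congr 1
    have hρα : ρ⁻¹ = -α := by rw [hα, one_div]; ring
    have ht' : t = (y / z₀) ^ (-α) := by rw [htdef, hρα]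
    have hσα : σ ^ α = z₀ ^ α * L := by
      rw [hσdef, Real.mul_rpow hz₀.le (Real.rpow_pos_of_pos hLpos _).le,
        ← Real.rpow_mul hLpos.le, one_div, inv_mul_cancel₀ hαpos.ne', Real.rpow_one]
    have hstep : (y / σ) ^ (-α) = L * t := by
      rw [Real.rpow_neg (div_pos hy hσ).le, Real.div_rpow hy.le hσ.le, ht',
        Real.rpow_neg hyz.le, Real.div_rpow hy.le hz₀.le, hσα]
      have hy' : 0 < y ^ α := Real.rpow_pos_of_pos hy _
      have hz' : 0 < z₀ ^ α := Real.rpow_pos_of_pos hz₀ _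
      field_simp
    rw [hstep, hL]
    ring

lemma caseW (hG : IsDistFun G) {x₀ C ρ : ℝ} (hx0 : 0 < G x₀) (hx1 : G x₀ < 1)
    (hρ : 0 < ρ) (hGt : ∀ (u t : ℝ), 0 < t → G (t ^ ρ * u - C) = G (u - C) ^ t) :
    ∃ σ α : ℝ, 0 < σ ∧ 0 < α ∧ ∀ x, G x = weibull α ((x + C) / σ) := by
  have hGnn := nonneg hG
  have hone : ∀ y : ℝ, 0 < y → G (y - C) = 1 := by
    intro y hy
    by_contra hne
    have hlt : G (y - C) < 1 := lt_of_le_of_ne (le_one hG _) hne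
    set tn : ℕ → ℝ := fun n => (n : ℝ) + 1 with htn
    have htntop : Tendsto tn atTop atTop :=
      tendsto_atTop_add_const_right _ 1 tendsto_natCast_atTop_atTop
    have hrtop : Tendsto (fun n => tn n ^ ρ) atTop atTop :=
      (tendsto_rpow_atTop hρ).comp htntop
    have harg : Tendsto (fun n => tn n ^ ρ * y - C) atTop atTop := by
      apply tendsto_atTop_add_const_right
      exact hrtop.atTop_mul_const hy
    have h1 : Tendsto (fun n => G (tn n ^ ρ * y - C)) atTop (𝓝 1) := hG.2.2.2.comp harg
    have heqn : (fun n => G (tn n ^ ρ * y - C)) = fun n => G (y - C) ^ tn n :=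
      funext fun n => hGt y (tn n) (by positivity)
    rw [heqn] at h1
    have h0 : Tendsto (fun n => G (y - C) ^ tn n) atTop (𝓝 0) := by
      have := (tendsto_rpow_atTop_of_base_lt_one (G (y - C))
        (by linarith [hGnn (y - C)]) hlt).comp htntop
      exact this
    exact zero_ne_one (tendsto_nhds_unique h0 h1)
  have hone0 : G (0 - C) = 1 := by
    have hu : Tendsto (fun k : ℕ => 1 / ((k : ℝ) + 1) + (0 - C)) atTop (𝓝 (0 - C)) := by
      have h0 : Tendsto (fun k : ℕ => 1 / ((k : ℝ) + 1) + (0 - C)) atTop (𝓝 (0 + (0 - C))) :=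
        tendsto_one_div_add_atTop_nhds_zero_nat.add tendsto_const_nhds
      rwa [zero_add] at h0
    have h1 := right_lim (hG.2.1 (0 - C)) hu (fun k => le_add_of_nonneg_left (by positivity))
    have h2 : (fun k : ℕ => G (1 / ((k : ℝ) + 1) + (0 - C))) = fun _ => 1 := by
      funext k
      have := hone (1 / ((k : ℝ) + 1)) (by positivity)
      rwa [show 1 / ((k : ℝ) + 1) - C = 1 / ((k : ℝ) + 1) + (0 - C) by ring] at this
    rw [h2] at h1
    exact (tendsto_nhds_unique tendsto_const_nhds h1).symm
  have hz₀ : x₀ + C < 0 := by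
    rcases lt_trichotomy (x₀ + C) 0 with h | h | h
    · exact h
    · exfalso
      have hx : x₀ = 0 - C := by linarith
      rw [hx, hone0] at hx1; linarith
    · exfalso
      have := hone (x₀ + C) h
      rw [show x₀ + C - C = x₀ by ring] at this
      rw [this] at hx1; linarith
  set z₀ : ℝ := x₀ + C with hz₀def
  set L : ℝ := -Real.log (G x₀) with hL
  have hLpos : 0 < L := by
    have := Real.log_neg hx0 hx1
    rw [hL]; linarith
  set α : ℝ := 1 / ρ with hα
  have hαpos : 0 < α := by rw [hα]; positivity
  set σ : ℝ := -z₀ * L ^ (-(1 / α)) with hσdef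
  have hσ : 0 < σ := mul_pos (by linarith) (Real.rpow_pos_of_pos hLpos _)
  refine ⟨σ, α, hσ, hαpos, fun x => ?_⟩
  rcases lt_trichotomy (x + C) 0 with hy | hy | hy
  · set y : ℝ := x + C with hydef
    have hyz : 0 < y / z₀ := div_pos_iff.2 (Or.inr ⟨hy, hz₀⟩)
    set t : ℝ := (y / z₀) ^ (ρ⁻¹) with htdef
    have htpos : 0 < t := Real.rpow_pos_of_pos hyz _
    have htρ : t ^ ρ = y / z₀ := by
      rw [htdef, ← Real.rpow_mul hyz.le, inv_mul_cancel₀ hρ.ne', Real.rpow_one]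
    have hkey := hGt z₀ t htpos
    rw [htρ, div_mul_cancel₀ _ hz₀.ne, show y - C = x by rw [hydef]; ring,
      show z₀ - C = x₀ by rw [hz₀def]; ring] at hkey
    have hyneg : y / σ < 0 := div_neg_of_neg_of_pos hy hσ
    rw [hkey, weibull, if_pos hyneg, Real.rpow_def_of_pos hx0]
    congr 1
    have hρα : ρ⁻¹ = α := by rw [hα, one_div]
    have ht' : t = (y / z₀) ^ α := by rw [htdef, hρα]
    have hσα : σ ^ α = (-z₀) ^ α * L⁻¹ := by
      rw [hσdef, Real.mul_rpow (by linarith) (Real.rpow_pos_of_pos hLpos _).le,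
        ← Real.rpow_mul hLpos.le]
      congr 1
      rw [show -(1 / α) * α = -1 by field_simp, Real.rpow_neg_one]
    have hyy : y / z₀ = (-y) / (-z₀) := by field_simp
    have hstep : (-(y / σ)) ^ α = L * t := by
      rw [show -(y / σ) = (-y) / σ by ring, Real.div_rpow (by linarith) hσ.le, ht', hyy,
        Real.div_rpow (by linarith) (by linarith), hσα]
      have h1 : 0 < (-y) ^ α := Real.rpow_pos_of_pos (by linarith) _
      have h2 : 0 < (-z₀) ^ α := Real.rpow_pos_of_pos (by linarith) _
      field_simp
    rw [hstep, hL]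
    ring
  · have hx : x = 0 - C := by linarith
    rw [hx, hone0, weibull, if_neg (by rw [show (0:ℝ) - C + C = 0 by ring]; simp)]
  · have h1 : G x = 1 := by
      have := hone (x + C) hy
      rwa [show x + C - C = x by ring] at this
    have h2 : ¬((x + C) / σ < 0) := not_lt.2 (div_nonneg hy.le hσ.le)
    rw [h1, weibull, if_neg h2]

lemma caseG (hG : IsDistFun G) {x₀ σ : ℝ} (hx0 : 0 < G x₀) (hx1 : G x₀ < 1) (hσ : 0 < σ)
    (heq : ∀ t : ℝ, 0 < t → ∀ x, G (x - σ * Real.log t) = G x ^ t) :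
    ∃ μ : ℝ, ∀ x, G x = gumbel ((x - μ) / σ) := by
  set L : ℝ := -Real.log (G x₀) with hL
  have hLpos : 0 < L := by
    have := Real.log_neg hx0 hx1
    rw [hL]; linarith
  refine ⟨x₀ + σ * Real.log L, fun y => ?_⟩
  set t : ℝ := Real.exp ((x₀ - y) / σ) with htdef
  have htpos : 0 < t := Real.exp_pos _
  have hkey := heq t htpos x₀
  rw [htdef, Real.log_exp, show x₀ - σ * ((x₀ - y) / σ) = y by field_simp; ring] at hkey
  rw [hkey, Real.rpow_def_of_pos hx0, gumbel]
  congr 1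
  have hexp : Real.exp (-((y - (x₀ + σ * Real.log L)) / σ)) = L * t := by
    rw [show -((y - (x₀ + σ * Real.log L)) / σ) = (x₀ - y) / σ + Real.log L by field_simp; ring,
      Real.exp_add, htdef, Real.exp_log hLpos]
    ring
  rw [hexp, hL]
  ring

end FT

lemma frechet_zero (α : ℝ) : frechet α 0 = 0 := by simp [frechet]
lemma weibull_zero (α : ℝ) : weibull α 0 = 1 := by simp [weibull]
lemma gumbel_zero : gumbel 0 = Real.exp (-1) := by simp [gumbel]
lemma frechet_lt_one (α : ℝ) (hα : 0 < α) (x : ℝ) : frechet α x < 1 := by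
  unfold frechet
  split
  · rename_i h
    have h1 : 0 < x ^ (-α) := Real.rpow_pos_of_pos h _
    calc Real.exp (-(x ^ (-α))) < Real.exp 0 := Real.exp_lt_exp.2 (by linarith)
      _ = 1 := Real.exp_zero
  · norm_num
lemma weibull_pos (α : ℝ) (x : ℝ) : 0 < weibull α x := by
  unfold weibull
  split
  · exact Real.exp_pos _
  · norm_num
lemma gumbel_pos (x : ℝ) : 0 < gumbel x := Real.exp_pos _
lemma gumbel_lt_one (x : ℝ) : gumbel x < 1 := by
  unfold gumbel
  calc Real.exp (-Real.exp (-x)) < Real.exp 0 :=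
    Real.exp_lt_exp.2 (by linarith [Real.exp_pos (-x)])
    _ = 1 := Real.exp_zero

/-- **Fisher–Tippett theorem.**  If the normalised maxima of an iid sample with
distribution function `F` converge in distribution to a nondegenerate law `G`
(i.e. `F(aₙ x + bₙ)ⁿ → G(x)` at every continuity point `x` of `G`), then, to
within type (location `μ` and scale `σ`), `G` is exactly one of the Fréchet,
Weibull or Gumbel laws. -/
theorem fisher_tippett (F G : ℝ → ℝ) (hF : IsDistFun F) (hG : IsDistFun G)
    (hnondeg : ∃ x, 0 < G x ∧ G x < 1)
    (a b : ℕ → ℝ) (ha : ∀ n, 0 < a n)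
    (hconv : ∀ x : ℝ, ContinuousAt G x →
      Tendsto (fun n => F (a n * x + b n) ^ n) atTop (𝓝 (G x))) :
    ∃ μ σ : ℝ, 0 < σ ∧
      (((∃ α > (0:ℝ), ∀ x, G x = frechet α ((x - μ) / σ)) ∧
          ¬ (∃ α > (0:ℝ), ∀ x, G x = weibull α ((x - μ) / σ)) ∧
          ¬ (∀ x, G x = gumbel ((x - μ) / σ))) ∨
        (¬ (∃ α > (0:ℝ), ∀ x, G x = frechet α ((x - μ) / σ)) ∧
          (∃ α > (0:ℝ), ∀ x, G x = weibull α ((x - μ) / σ)) ∧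
          ¬ (∀ x, G x = gumbel ((x - μ) / σ))) ∨
        (¬ (∃ α > (0:ℝ), ∀ x, G x = frechet α ((x - μ) / σ)) ∧
          ¬ (∃ α > (0:ℝ), ∀ x, G x = weibull α ((x - μ) / σ)) ∧
          (∀ x, G x = gumbel ((x - μ) / σ)))) := by
  
  classical
  obtain ⟨x₀, hx0, hx1⟩ := hnondeg
  have hnd : ∃ x, 0 < G x ∧ G x < 1 := ⟨x₀, hx0, hx1⟩
  have hGnn := FT.nonneg hG
  have key : ∀ t : ℝ, ∃ A B : ℝ, 0 < t → 0 < A ∧ ∀ x, G (A * x + B) = G x ^ t := by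
    intro t
    by_cases ht : 0 < t
    · obtain ⟨A, B, hA, h⟩ := FT.maxstable hF hG hnd ha hconv ht
      exact ⟨A, B, fun _ => ⟨hA, h⟩⟩
    · exact ⟨1, 0, fun h => absurd h ht⟩
  choose 𝔞 𝔟 hab using key
  have hapos : ∀ t : ℝ, 0 < t → 0 < 𝔞 t := fun t ht => (hab t ht).1
  have heq : ∀ t : ℝ, 0 < t → ∀ x, G (𝔞 t * x + 𝔟 t) = G x ^ t := fun t ht => (hab t ht).2
  have hone : 𝔞 1 = 1 ∧ 𝔟 1 = 0 := by
    have h1 : ∀ x, G (𝔞 1 * x + 𝔟 1) = G (1 * x + 0) := by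
      intro x
      rw [heq 1 one_pos x, Real.rpow_one, one_mul, add_zero]
    exact FT.uniq2 hG hnd (hapos 1 one_pos) one_pos h1
  have hmul : ∀ s u : ℝ, 0 < s → 0 < u →
      𝔞 (s * u) = 𝔞 s * 𝔞 u ∧ 𝔟 (s * u) = 𝔞 u * 𝔟 s + 𝔟 u := by
    intro s u hs hu
    have h1 : ∀ x, G (𝔞 (s * u) * x + 𝔟 (s * u)) =
        G ((𝔞 u * 𝔞 s) * x + (𝔞 u * 𝔟 s + 𝔟 u)) := by
      intro x
      rw [heq (s * u) (mul_pos hs hu) x,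
        show (𝔞 u * 𝔞 s) * x + (𝔞 u * 𝔟 s + 𝔟 u) = 𝔞 u * (𝔞 s * x + 𝔟 s) + 𝔟 u by ring,
        heq u hu, heq s hs, ← Real.rpow_mul (hGnn x), mul_comm s u]
    have h2 := FT.uniq2 hG hnd (hapos _ (mul_pos hs hu))
      (mul_pos (hapos u hu) (hapos s hs)) h1
    exact ⟨h2.1.trans (mul_comm _ _), h2.2⟩
  -- two reference points
  set x₂ : ℝ := x₀ with hx₂def
  set x₁ : ℝ := 𝔞 2 * x₀ + 𝔟 2 with hx₁def
  have hx₁v : G x₁ = G x₀ ^ (2:ℝ) := heq 2 two_pos x₀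
  have hx₁0 : 0 < G x₁ := by rw [hx₁v]; exact Real.rpow_pos_of_pos hx0 _
  have hx₁1 : G x₁ < 1 := by rw [hx₁v]; exact Real.rpow_lt_one (hGnn _) hx1 two_pos
  have hlt : G x₁ < G x₂ := by
    rw [hx₁v]
    calc G x₀ ^ (2:ℝ) < G x₀ ^ (1:ℝ) :=
      Real.rpow_lt_rpow_of_exponent_gt hx0 hx1 one_lt_two
      _ = G x₂ := by rw [Real.rpow_one]
  have hx12 : x₁ < x₂ := by
    by_contra h
    exact absurd (hG.1 (le_of_not_gt h)) (not_le.2 hlt)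
  -- strict antitonicity of the orbit of a point
  have hanti : ∀ z : ℝ, 0 < G z → G z < 1 → ∀ s u : ℝ, 0 < s → s < u →
      𝔞 u * z + 𝔟 u < 𝔞 s * z + 𝔟 s := by
    intro z hz0 hz1 s u hs hsu
    have h1 : G (𝔞 u * z + 𝔟 u) < G (𝔞 s * z + 𝔟 s) := by
      rw [heq u (hs.trans hsu) z, heq s hs z]
      exact Real.rpow_lt_rpow_of_exponent_gt hz0 hz1 hsu
    by_contra hcon
    exact absurd (hG.1 (le_of_not_gt hcon)) (not_le.2 h1)
  -- bound for 𝔞 on [1,2]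
  set M : ℝ := ((𝔞 1 * x₂ + 𝔟 1) - (𝔞 2 * x₁ + 𝔟 2)) / (x₂ - x₁) with hMdef
  have hM : ∀ t : ℝ, 1 ≤ t → t ≤ 2 → 𝔞 t ≤ M := by
    intro t h1t ht2
    have htpos : 0 < t := by linarith
    have hA2 : 𝔞 t * x₂ + 𝔟 t ≤ 𝔞 1 * x₂ + 𝔟 1 := by
      rcases eq_or_lt_of_le h1t with h | h
      · rw [← h]
      · exact (hanti x₂ hx0 hx1 1 t one_pos h).le
    have hA1 : 𝔞 2 * x₁ + 𝔟 2 ≤ 𝔞 t * x₁ + 𝔟 t := by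
      rcases eq_or_lt_of_le ht2 with h | h
      · rw [h]
      · exact (hanti x₁ hx₁0 hx₁1 t 2 htpos h).le
    rw [hMdef, le_div_iff₀ (by linarith)]
    nlinarith
  -- the multiplicative structure of 𝔞 : a power law
  set f : ℝ → ℝ := fun u => Real.log (𝔞 (Real.exp u)) with hfdef
  have hfadd : ∀ u v, f (u + v) = f u + f v := by
    intro u v
    rw [hfdef]
    simp only
    rw [Real.exp_add, (hmul _ _ (Real.exp_pos u) (Real.exp_pos v)).1,
      Real.log_mul (hapos _ (Real.exp_pos u)).ne' (hapos _ (Real.exp_pos v)).ne']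
  have hfb : ∀ u ∈ Set.Icc 0 (Real.log 2), f u ≤ Real.log M := by
    intro u hu
    have h1 : (1:ℝ) ≤ Real.exp u := Real.one_le_exp hu.1
    have h2 : Real.exp u ≤ 2 := by
      calc Real.exp u ≤ Real.exp (Real.log 2) := Real.exp_le_exp.2 hu.2
        _ = 2 := Real.exp_log two_pos
    exact Real.log_le_log (hapos _ (Real.exp_pos u)) (hM _ h1 h2)
  have hflin := FT.additive_linear hfadd (Real.log_pos one_lt_two) hfb
  set ρ : ℝ := f (Real.log 2) / Real.log 2 with hρdef
  have hrho : ∀ t : ℝ, 0 < t → 𝔞 t = t ^ ρ := by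
    intro t ht
    have h1 := hflin (Real.log t)
    have h2 : f (Real.log t) = Real.log (𝔞 t) := by rw [hfdef]; simp [Real.exp_log ht]
    rw [h2] at h1
    rw [Real.rpow_def_of_pos ht, ← h1, Real.exp_log (hapos t ht)]
  -- relation for 𝔟
  have hbrel : ∀ s u : ℝ, 0 < s → 0 < u → 𝔟 s * (u ^ ρ - 1) = 𝔟 u * (s ^ ρ - 1) := by
    intro s u hs hu
    have h1 := (hmul s u hs hu).2
    have h2 := (hmul u s hu hs).2
    rw [mul_comm u s] at h2
    rw [hrho u hu] at h1
    rw [hrho s hs] at h2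
    linarith [h1, h2]
  rcases lt_trichotomy ρ 0 with hρneg | hρ0 | hρpos
  · -- Fréchet case
    have h2ρ : (2:ℝ) ^ ρ ≠ 1 := by
      intro h
      have h1 : Real.log ((2:ℝ) ^ ρ) = ρ * Real.log 2 := Real.log_rpow two_pos ρ
      rw [h, Real.log_one] at h1
      have h2 : Real.log 2 ≠ 0 := (Real.log_pos one_lt_two).ne'
      have : ρ = 0 := by
        rcases mul_eq_zero.1 h1.symm with h3 | h3
        · exact h3
        · exact absurd h3 h2
      linarith
    set C : ℝ := 𝔟 2 / ((2:ℝ) ^ ρ - 1) with hCdef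
    have hbt : ∀ t : ℝ, 0 < t → 𝔟 t = C * (t ^ ρ - 1) := by
      intro t ht
      have h := hbrel 2 t two_pos ht
      rw [hCdef]
      have hne : (2:ℝ) ^ ρ - 1 ≠ 0 := sub_ne_zero.2 h2ρ
      field_simp
      linarith [h]
    have hGt : ∀ (u t : ℝ), 0 < t → G (t ^ ρ * u - C) = G (u - C) ^ t := by
      intro u t ht
      have h := heq t ht (u - C)
      rw [hrho t ht, hbt t ht] at h
      rw [← h]
      congr 1
      ring
    obtain ⟨σ, α, hσ, hα, hform⟩ := FT.caseF hG hx0 hx1 hρneg hGt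
    have hform' : ∀ x, G x = frechet α ((x - -C) / σ) := by
      intro x; rw [hform x, sub_neg_eq_add]
    have hGμ : G (-C) = 0 := by
      rw [hform' (-C), show (-C - -C) / σ = 0 by rw [sub_self, zero_div], frechet_zero]
    refine ⟨-C, σ, hσ, Or.inl ⟨⟨α, hα, hform'⟩, ?_, ?_⟩⟩
    · rintro ⟨α', hα', h'⟩
      have h2 := h' (-C)
      rw [show (-C - -C) / σ = 0 by rw [sub_self, zero_div], weibull_zero] at h2
      rw [hGμ] at h2
      norm_num at h2
    · intro h'
      have h2 := h' (-C)
      rw [show (-C - -C) / σ = 0 by rw [sub_self, zero_div], gumbel_zero] at h2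
      rw [hGμ] at h2
      have := Real.exp_pos (-1 : ℝ)
      linarith
  · -- Gumbel case
    have haone : ∀ t : ℝ, 0 < t → 𝔞 t = 1 := by
      intro t ht
      rw [hrho t ht, hρ0, Real.rpow_zero]
    set g : ℝ → ℝ := fun u => 𝔟 (Real.exp u) with hgdef
    have hgadd : ∀ u v, g (u + v) = g u + g v := by
      intro u v
      rw [hgdef]
      simp only
      rw [Real.exp_add, (hmul _ _ (Real.exp_pos u) (Real.exp_pos v)).2,
        haone _ (Real.exp_pos v), one_mul, add_comm]
    have hgb : ∀ u ∈ Set.Icc 0 (Real.log 2), g u ≤ 0 := by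
      intro u hu
      rcases eq_or_lt_of_le hu.1 with h | h
      · rw [hgdef]
        simp only
        rw [← h, Real.exp_zero, hone.2]
      · have hexp : (1:ℝ) < Real.exp u := by
          rw [← Real.exp_zero]
          exact Real.exp_lt_exp.2 h
        have := hanti x₂ hx0 hx1 1 (Real.exp u) one_pos hexp
        rw [haone _ (Real.exp_pos u), hone.1, hone.2] at this
        rw [hgdef]
        simp only
        linarith
    have hglin := FT.additive_linear hgadd (Real.log_pos one_lt_two) hgb
    have hg2 : g (Real.log 2) = 𝔟 2 := by rw [hgdef]; simp [Real.exp_log two_pos]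
    have hb2neg : 𝔟 2 < 0 := by
      have := hanti x₂ hx0 hx1 1 2 one_pos one_lt_two
      rw [haone 2 two_pos, hone.1, hone.2] at this
      linarith
    set σ : ℝ := -(𝔟 2 / Real.log 2) with hσdef
    have hσpos : 0 < σ := by
      rw [hσdef, neg_pos]
      exact div_neg_of_neg_of_pos hb2neg (Real.log_pos one_lt_two)
    have hb : ∀ t : ℝ, 0 < t → 𝔟 t = -σ * Real.log t := by
      intro t ht
      have h1 := hglin (Real.log t)
      rw [hg2] at h1
      have h2 : g (Real.log t) = 𝔟 t := by rw [hgdef]; simp [Real.exp_log ht]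
      rw [h2] at h1
      rw [h1, hσdef]
      ring
    have heqG : ∀ t : ℝ, 0 < t → ∀ x, G (x - σ * Real.log t) = G x ^ t := by
      intro t ht x
      have h := heq t ht x
      rw [haone t ht, hb t ht, one_mul] at h
      rw [← h]
      congr 1
      ring
    obtain ⟨μ, hform⟩ := FT.caseG hG hx0 hx1 hσpos heqG
    have hGμ : G μ = Real.exp (-1) := by
      rw [hform μ, show (μ - μ) / σ = 0 by rw [sub_self, zero_div], gumbel_zero]
    refine ⟨μ, σ, hσpos, Or.inr (Or.inr ⟨?_, ?_, hform⟩)⟩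
    · rintro ⟨α', hα', h'⟩
      have h2 := h' μ
      rw [show (μ - μ) / σ = 0 by rw [sub_self, zero_div], frechet_zero] at h2
      rw [hGμ] at h2
      have := Real.exp_pos (-1 : ℝ)
      linarith
    · rintro ⟨α', hα', h'⟩
      have h2 := h' μ
      rw [show (μ - μ) / σ = 0 by rw [sub_self, zero_div], weibull_zero] at h2
      rw [hGμ] at h2
      have : Real.exp (-1 : ℝ) < 1 := by
        rw [← Real.exp_zero]
        exact Real.exp_lt_exp.2 (by norm_num)
      linarith
  · -- Weibull case
    have h2ρ : (2:ℝ) ^ ρ ≠ 1 := by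
      intro h
      have h1 : Real.log ((2:ℝ) ^ ρ) = ρ * Real.log 2 := Real.log_rpow two_pos ρ
      rw [h, Real.log_one] at h1
      have h2 : Real.log 2 ≠ 0 := (Real.log_pos one_lt_two).ne'
      have : ρ = 0 := by
        rcases mul_eq_zero.1 h1.symm with h3 | h3
        · exact h3
        · exact absurd h3 h2
      linarith
    set C : ℝ := 𝔟 2 / ((2:ℝ) ^ ρ - 1) with hCdef
    have hbt : ∀ t : ℝ, 0 < t → 𝔟 t = C * (t ^ ρ - 1) := by
      intro t ht
      have h := hbrel 2 t two_pos ht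
      rw [hCdef]
      have hne : (2:ℝ) ^ ρ - 1 ≠ 0 := sub_ne_zero.2 h2ρ
      field_simp
      linarith [h]
    have hGt : ∀ (u t : ℝ), 0 < t → G (t ^ ρ * u - C) = G (u - C) ^ t := by
      intro u t ht
      have h := heq t ht (u - C)
      rw [hrho t ht, hbt t ht] at h
      rw [← h]
      congr 1
      ring
    obtain ⟨σ, α, hσ, hα, hform⟩ := FT.caseW hG hx0 hx1 hρpos hGt
    have hform' : ∀ x, G x = weibull α ((x - -C) / σ) := by
      intro x; rw [hform x, sub_neg_eq_add]
    have hGμ : G (-C) = 1 := by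
      rw [hform' (-C), show (-C - -C) / σ = 0 by rw [sub_self, zero_div], weibull_zero]
    refine ⟨-C, σ, hσ, Or.inr (Or.inl ⟨?_, ⟨α, hα, hform'⟩, ?_⟩)⟩
    · rintro ⟨α', hα', h'⟩
      have h2 := h' (-C)
      rw [show (-C - -C) / σ = 0 by rw [sub_self, zero_div], frechet_zero] at h2
      rw [hGμ] at h2
      norm_num at h2
    · intro h'
      have h2 := h' (-C)
      rw [show (-C - -C) / σ = 0 by rw [sub_self, zero_div], gumbel_zero] at h2
      rw [hGμ] at h2
      have : Real.exp (-1 : ℝ) < 1 := by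
        rw [← Real.exp_zero]
        exact Real.exp_lt_exp.2 (by norm_num)
      linarith
end

section
/- Gnedenko's Weibull domain-of-attraction theorem: Let F be a distribution function and α > 0. Then F ∈ D(Ψ_α) if and only if the upper end-point x₊ := sup{x : F(x) < 1} is finite and the function x ↦ F̄(x₊ − 1/x) is regularly varying at infinity with index −α. -/
set_option maxHeartbeats 1000000

open Filter Topology

/-- `F` lies in the domain of attraction of `G`. -/
def MemDomAttr (F G : ℝ → ℝ) : Prop :=
  ∃ a b : ℕ → ℝ, (∀ n, 0 < a n) ∧
    ∀ x : ℝ, ContinuousAt G x →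
      Tendsto (fun n => F (a n * x + b n) ^ n) atTop (𝓝 (G x))

/-- `g` is regularly varying at infinity with index `ρ`. -/
def RegVary (g : ℝ → ℝ) (ρ : ℝ) : Prop :=
  (∀ᶠ x in atTop, 0 < g x) ∧
    ∀ lam : ℝ, 0 < lam →
      Tendsto (fun x => g (lam * x) / g x) atTop (𝓝 (lam ^ ρ))

lemma weibull_eq (α : ℝ) (hα : 0 < α) :
    weibull α = fun x => Real.exp (-(max (-x) 0) ^ α) := by
  funext x
  unfold weibull
  split_ifs with h
  · rw [max_eq_left (by linarith)]
  · rw [max_eq_right (by linarith), Real.zero_rpow (ne_of_gt hα), neg_zero, Real.exp_zero]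

lemma continuous_weibull (α : ℝ) (hα : 0 < α) : Continuous (weibull α) := by
  rw [weibull_eq α hα]
  apply Real.continuous_exp.comp
  apply Continuous.neg
  apply Continuous.rpow_const
  · exact (continuous_neg.max continuous_const)
  · intro x; right; exact le_of_lt hα

lemma weibull_neg (α : ℝ) (x : ℝ) (hx : x < 0) : weibull α x = Real.exp (-((-x) ^ α)) := by
  simp [weibull, hx]

lemma weibull_nonneg_eq (α : ℝ) (x : ℝ) (hx : 0 ≤ x) : weibull α x = 1 := by
  simp [weibull, not_lt.mpr hx]

lemma weibull_lt_one (α : ℝ) (hα : 0 < α) {x : ℝ} (hx : x < 0) : weibull α x < 1 := by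
  rw [weibull_neg α x hx]
  rw [Real.exp_lt_one_iff]
  have : (0:ℝ) < (-x) ^ α := Real.rpow_pos_of_pos (by linarith) α
  linarith

lemma weibull_strict (α : ℝ) (hα : 0 < α) {x y : ℝ} (hx : x < y) (hy : y ≤ 0) :
    weibull α x < weibull α y := by
  rcases eq_or_lt_of_le hy with rfl | hy'
  · rw [weibull_nonneg_eq α 0 le_rfl]
    exact weibull_lt_one α hα hx
  · rw [weibull_neg α x (lt_trans hx hy'), weibull_neg α y hy']
    apply Real.exp_lt_exp.2
    have : (-y) ^ α < (-x) ^ α := Real.rpow_lt_rpow (by linarith) (by linarith) hα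
    linarith

lemma log_lower {y : ℝ} (hy : 0 < y) : -Real.log y ≤ (1 - y)/y := by
  have h := Real.log_le_sub_one_of_pos (inv_pos.mpr hy)
  rw [Real.log_inv] at h
  have : y⁻¹ - 1 = (1 - y)/y := by field_simp
  linarith [this ▸ h]

lemma npow_lim {y : ℕ → ℝ} {L : ℝ} (hy0 : ∀ n, 0 ≤ y n) (hL : 0 < L)
    (h : Tendsto (fun n : ℕ => y n ^ n) atTop (𝓝 L)) :
    Tendsto (fun n : ℕ => (n:ℝ) * (1 - y n)) atTop (𝓝 (-Real.log L)) ∧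
      Tendsto y atTop (𝓝 1) := by
  have hev : ∀ᶠ n : ℕ in atTop, 0 < y n := by
    filter_upwards [h.eventually (eventually_gt_nhds (half_lt_self hL)), eventually_ge_atTop 1]
      with n h1 h2
    rcases eq_or_lt_of_le (hy0 n) with he | hp
    · exfalso; rw [← he, zero_pow (by omega)] at h1; linarith
    · exact hp
  have hnlog : Tendsto (fun n : ℕ => (n:ℝ) * Real.log (y n)) atTop (𝓝 (Real.log L)) := by
    have hlog := ((Real.continuousAt_log (ne_of_gt hL)).tendsto).comp h
    apply hlog.congr
    intro n
    simp [Function.comp, Real.log_pow]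
  have hinv : Tendsto (fun n : ℕ => ((n:ℝ))⁻¹) atTop (𝓝 0) :=
    tendsto_inv_atTop_zero.comp tendsto_natCast_atTop_atTop
  have hyto1 : Tendsto y atTop (𝓝 1) := by
    have hlogy : Tendsto (fun n => Real.log (y n)) atTop (𝓝 0) := by
      have h2 := hnlog.mul hinv
      rw [mul_zero] at h2
      apply h2.congr'
      filter_upwards [eventually_ge_atTop 1] with n hn
      have : (n:ℝ) ≠ 0 := Nat.cast_ne_zero.mpr (by omega)
      field_simp
    have h3 := (Real.continuous_exp.tendsto 0).comp hlogy
    rw [Real.exp_zero] at h3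
    apply h3.congr'
    filter_upwards [hev] with n hn
    simp [Function.comp, Real.exp_log hn]
  refine ⟨?_, hyto1⟩
  have hglim : Tendsto (fun n : ℕ => y n * ((n:ℝ) * (-Real.log (y n)))) atTop (𝓝 (-Real.log L)) := by
    have h4 := hyto1.mul hnlog.neg
    rw [one_mul] at h4
    apply h4.congr
    intro n; ring
  have hhlim : Tendsto (fun n : ℕ => (n:ℝ) * (-Real.log (y n))) atTop (𝓝 (-Real.log L)) := by
    have h4 := hnlog.neg
    apply h4.congr
    intro n; ring
  have hlow : ∀ᶠ n : ℕ in atTop, y n * ((n:ℝ) * (-Real.log (y n))) ≤ (n:ℝ) * (1 - y n) := by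
    filter_upwards [hev] with n hn
    have h1 : -Real.log (y n) ≤ (1 - y n)/(y n) := log_lower hn
    have h2 : (0:ℝ) ≤ (n:ℝ) * y n := by positivity
    have h3 : ((n:ℝ) * y n) * (-Real.log (y n)) ≤ ((n:ℝ) * y n) * ((1 - y n)/(y n)) :=
      mul_le_mul_of_nonneg_left h1 h2
    have h4 : ((n:ℝ) * y n) * ((1 - y n)/(y n)) = (n:ℝ) * (1 - y n) := by
      field_simp
    nlinarith [h3]
  have hup : ∀ᶠ n : ℕ in atTop, (n:ℝ) * (1 - y n) ≤ (n:ℝ) * (-Real.log (y n)) := by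
    filter_upwards [hev] with n hn
    have h1 : Real.log (y n) ≤ y n - 1 := Real.log_le_sub_one_of_pos hn
    have h2 : (0:ℝ) ≤ (n:ℝ) := Nat.cast_nonneg n
    have h3 : 1 - y n ≤ -Real.log (y n) := by linarith
    exact mul_le_mul_of_nonneg_left h3 h2
  exact tendsto_of_tendsto_of_tendsto_of_le_of_le' hglim hhlim hlow hup

lemma npow_conv {t : ℕ → ℝ} {T : ℝ}
    (h : Tendsto t atTop (𝓝 T)) :
    Tendsto (fun n => (1 - t n / n) ^ n) atTop (𝓝 (Real.exp (-T))) := by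
  have hinv : Tendsto (fun n : ℕ => ((n:ℝ))⁻¹) atTop (𝓝 0) :=
    tendsto_inv_atTop_zero.comp tendsto_natCast_atTop_atTop
  have hdiv : Tendsto (fun n : ℕ => t n / n) atTop (𝓝 0) := by
    have h2 := h.mul hinv
    rw [mul_zero] at h2
    apply h2.congr; intro n; rw [div_eq_mul_inv]
  have hy : Tendsto (fun n : ℕ => 1 - t n / n) atTop (𝓝 1) := by
    have h2 := (tendsto_const_nhds (x := (1:ℝ)) (f := atTop)).sub hdiv
    rwa [sub_zero] at h2
  have hypos : ∀ᶠ n : ℕ in atTop, 0 < 1 - t n / n := by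
    filter_upwards [hy.eventually (eventually_gt_nhds (by norm_num : (1:ℝ)/2 < 1))] with n hn
    linarith
  have hglim : Tendsto (fun n : ℕ => -(t n / (1 - t n / n))) atTop (𝓝 (-T)) := by
    have h2 := (h.div hy (by norm_num)).neg
    rwa [div_one] at h2
  have hhlim : Tendsto (fun n : ℕ => -(t n)) atTop (𝓝 (-T)) := h.neg
  have hlow : ∀ᶠ n : ℕ in atTop,
      -(t n / (1 - t n / n)) ≤ (n:ℝ) * Real.log (1 - t n / n) := by
    filter_upwards [hypos, eventually_ge_atTop 1] with n hn h1
    have hne : (n:ℝ) ≠ 0 := Nat.cast_ne_zero.mpr (by omega)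
    have hl : -Real.log (1 - t n / n) ≤ (1 - (1 - t n / n))/(1 - t n / n) := log_lower hn
    have h2 : (1 - (1 - t n / n))/(1 - t n / n) = (t n / n) / (1 - t n / n) := by ring_nf
    rw [h2] at hl
    have h3 : (n:ℝ) * (-Real.log (1 - t n / n)) ≤ (n:ℝ) * ((t n / n) / (1 - t n / n)) :=
      mul_le_mul_of_nonneg_left hl (Nat.cast_nonneg n)
    have h4 : (n:ℝ) * ((t n / n) / (1 - t n / n)) = t n / (1 - t n / n) := by
      field_simp
    nlinarith [h3]
  have hup : ∀ᶠ n : ℕ in atTop, (n:ℝ) * Real.log (1 - t n / n) ≤ -(t n) := by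
    filter_upwards [hypos, eventually_ge_atTop 1] with n hn h1
    have hne : (n:ℝ) ≠ 0 := Nat.cast_ne_zero.mpr (by omega)
    have hl : Real.log (1 - t n / n) ≤ (1 - t n / n) - 1 := Real.log_le_sub_one_of_pos hn
    have h3 : (n:ℝ) * Real.log (1 - t n / n) ≤ (n:ℝ) * ((1 - t n / n) - 1) :=
      mul_le_mul_of_nonneg_left hl (Nat.cast_nonneg n)
    have h4 : (n:ℝ) * ((1 - t n / n) - 1) = -(t n) := by field_simp; ring
    linarith [h3, h4 ▸ h3]
  have hnlog : Tendsto (fun n : ℕ => (n:ℝ) * Real.log (1 - t n / n)) atTop (𝓝 (-T)) :=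
    tendsto_of_tendsto_of_tendsto_of_le_of_le' hglim hhlim hlow hup
  have h5 := (Real.continuous_exp.tendsto _).comp hnlog
  apply h5.congr'
  filter_upwards [hypos] with n hn
  simp only [Function.comp]
  rw [← Real.exp_log hn, ← Real.exp_nat_mul, Real.exp_log hn]

lemma exists_eps_pos {P : ℝ → Prop} (h : ∀ᶠ ε in 𝓝[>] (0:ℝ), P ε) : ∃ ε, 0 < ε ∧ P ε := by
  obtain ⟨ε, hP, hε⟩ := (h.and self_mem_nhdsWithin).exists
  exact ⟨ε, hε, hP⟩

section DF
variable {F : ℝ → ℝ}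

lemma F_nonneg (hmono : Monotone F) (hbot : Tendsto F atBot (𝓝 0)) : ∀ x, 0 ≤ F x := by
  intro x
  apply le_of_tendsto hbot
  filter_upwards [eventually_le_atBot x] with y hy using hmono hy

lemma F_le_one (hmono : Monotone F) (htop : Tendsto F atTop (𝓝 1)) : ∀ x, F x ≤ 1 := by
  intro x
  apply ge_of_tendsto htop
  filter_upwards [eventually_ge_atTop x] with y hy using hmono hy

lemma T_nonempty (hbot : Tendsto F atBot (𝓝 0)) : {x | F x < 1}.Nonempty := by
  have : ∀ᶠ y in atBot, F y < 1 :=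
    hbot.eventually (eventually_lt_nhds (by norm_num : (0:ℝ) < 1))
  obtain ⟨y, hy⟩ := this.exists
  exact ⟨y, hy⟩

lemma F_lt_one_of_lt_sSup (hmono : Monotone F) (hne : {x | F x < 1}.Nonempty)
    {z : ℝ} (hz : z < sSup {x | F x < 1}) : F z < 1 := by
  obtain ⟨w, hw, hzw⟩ := exists_lt_of_lt_csSup hne hz
  exact lt_of_le_of_lt (hmono (le_of_lt hzw)) hw

lemma F_eq_one_of_gt (hmono : Monotone F) (htop : Tendsto F atTop (𝓝 1))
    (hbdd : BddAbove {x | F x < 1}) {y : ℝ} (hy : sSup {x | F x < 1} < y) : F y = 1 := by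
  have h1 : y ∉ {x | F x < 1} := fun hmem => absurd (le_csSup hbdd hmem) (not_le.mpr hy)
  have h2 : F y ≤ 1 := F_le_one hmono htop y
  have h3 : ¬ (F y < 1) := h1
  linarith [lt_or_ge (F y) 1]

lemma F_eq_one_sSup (hmono : Monotone F) (hrc : ∀ x, ContinuousWithinAt F (Set.Ici x) x)
    (htop : Tendsto F atTop (𝓝 1)) (hbdd : BddAbove {x | F x < 1}) :
    F (sSup {x | F x < 1}) = 1 := by
  set x₀ := sSup {x | F x < 1}
  have h1 : ContinuousWithinAt F (Set.Ioi x₀) x₀ :=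
    (hrc x₀).mono (Set.Ioi_subset_Ici_self)
  have h2 : Tendsto F (𝓝[>] x₀) (𝓝 (F x₀)) := h1
  have h3 : Tendsto F (𝓝[>] x₀) (𝓝 1) := by
    apply Tendsto.congr' _ (tendsto_const_nhds (x := (1:ℝ)))
    filter_upwards [self_mem_nhdsWithin] with y hy
    exact (F_eq_one_of_gt hmono htop hbdd hy).symm
  exact tendsto_nhds_unique h2 h3
end DF

section SQ
variable {g : ℝ → ℝ} {α : ℝ}

lemma seq_to_rv (hg0 : ∀ x, 0 < x → 0 < g x)
    (hganti : ∀ x y, 0 < x → x ≤ y → g y ≤ g x)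
    {d : ℕ → ℝ} (hd0 : ∀ n, 0 < d n) (hdtop : Tendsto d atTop atTop)
    (hlim : ∀ x, 0 < x → Tendsto (fun n : ℕ => (n:ℝ) * g (d n * x)) atTop (𝓝 (x ^ (-α))))
    {lam : ℝ} (hlam : 0 < lam) :
    Tendsto (fun t => g (lam * t) / g t) atTop (𝓝 (lam ^ (-α))) := by
  set m : ℝ → ℕ := fun t => sSup {n | d n ≤ t} with hm
  have hbddset : ∀ t : ℝ, BddAbove {n : ℕ | d n ≤ t} := by
    intro t
    obtain ⟨N, hN⟩ := eventually_atTop.1 (hdtop.eventually_gt_atTop t)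
    refine ⟨N, fun n hn => ?_⟩
    by_contra hc
    exact absurd (hN n (by omega)) (not_lt.mpr hn)
  have hmem : ∀ t : ℝ, d 0 ≤ t → d (m t) ≤ t := by
    intro t ht
    exact Nat.sSup_mem ⟨0, ht⟩ (hbddset t)
  have hnot : ∀ t : ℝ, t < d (m t + 1) := by
    intro t
    by_contra hc
    push_neg at hc
    have : m t + 1 ≤ m t := le_csSup (hbddset t) hc
    omega
  have hmtop : Tendsto m atTop atTop := by
    apply tendsto_atTop.2
    intro N
    filter_upwards [eventually_ge_atTop (d N)] with t ht
    exact le_csSup (hbddset t) ht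
  have hratio : Tendsto (fun n : ℕ => (n:ℝ) / ((n:ℝ) + 1)) atTop (𝓝 1) :=
    tendsto_natCast_div_add_atTop (1:ℝ)
  have hshift : Tendsto (fun n : ℕ => n + 1) atTop atTop := tendsto_add_atTop_nat 1
  have hA : Tendsto (fun n : ℕ => (n:ℝ) * g (lam * d n)) atTop (𝓝 (lam ^ (-α))) := by
    apply (hlim lam hlam).congr
    intro n; rw [mul_comm (d n) lam]
  have hB : Tendsto (fun n : ℕ => (n:ℝ) * g (d n)) atTop (𝓝 1) := by
    have h1 := hlim 1 one_pos
    rw [Real.one_rpow] at h1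
    apply h1.congr
    intro n; rw [mul_one]
  have shift_lim : ∀ (u : ℕ → ℝ) (L : ℝ), Tendsto (fun n : ℕ => (n:ℝ) * u n) atTop (𝓝 L) →
      Tendsto (fun n : ℕ => (n:ℝ) * u (n + 1)) atTop (𝓝 L) := by
    intro u L hu
    have h1 : Tendsto (fun n : ℕ => ((n+1:ℕ):ℝ) * u (n + 1)) atTop (𝓝 L) := hu.comp hshift
    have h2 := hratio.mul h1
    rw [one_mul] at h2
    apply h2.congr
    intro n
    push_cast
    have hne : ((n:ℝ) + 1) ≠ 0 := by positivity
    field_simp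
  have hA' : Tendsto (fun n : ℕ => (n:ℝ) * g (lam * d (n+1))) atTop (𝓝 (lam ^ (-α))) :=
    shift_lim _ _ hA
  have hB' : Tendsto (fun n : ℕ => (n:ℝ) * g (d (n+1))) atTop (𝓝 1) :=
    shift_lim _ _ hB
  have hU : Tendsto (fun t : ℝ => ((m t : ℝ) * g (lam * d (m t))) / ((m t : ℝ) * g (d (m t + 1))))
      atTop (𝓝 (lam ^ (-α))) := by
    have h1 := hA.div hB' (one_ne_zero)
    rw [div_one] at h1
    exact h1.comp hmtop
  have hL : Tendsto (fun t : ℝ => ((m t : ℝ) * g (lam * d (m t + 1))) / ((m t : ℝ) * g (d (m t))))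
      atTop (𝓝 (lam ^ (-α))) := by
    have h1 := hA'.div hB (one_ne_zero)
    rw [div_one] at h1
    exact h1.comp hmtop
  have hev : ∀ᶠ t : ℝ in atTop,
      ((m t : ℝ) * g (lam * d (m t + 1))) / ((m t : ℝ) * g (d (m t))) ≤ g (lam * t) / g t ∧
      g (lam * t) / g t ≤ ((m t : ℝ) * g (lam * d (m t))) / ((m t : ℝ) * g (d (m t + 1))) := by
    filter_upwards [eventually_ge_atTop (d 0), eventually_gt_atTop (0:ℝ),
      hmtop.eventually (eventually_ge_atTop 1)] with t ht htpos hm1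
    have hd1 : d (m t) ≤ t := hmem t ht
    have hd2 : t < d (m t + 1) := hnot t
    have hdm : 0 < d (m t) := hd0 _
    have hdm1 : 0 < d (m t + 1) := hd0 _
    have hmne : ((m t : ℝ)) ≠ 0 := by
      have : (1:ℝ) ≤ (m t : ℝ) := by exact_mod_cast hm1
      linarith
    rw [mul_div_mul_left _ _ hmne, mul_div_mul_left _ _ hmne]
    constructor
    · apply div_le_div₀ (le_of_lt (hg0 _ (by positivity)))
        (hganti _ _ (by positivity) (mul_le_mul_of_nonneg_left (le_of_lt hd2) (le_of_lt hlam)))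
        (hg0 _ htpos)
        (hganti _ _ hdm hd1)
    · apply div_le_div₀ (le_of_lt (hg0 _ (by positivity)))
        (hganti _ _ (by positivity) (mul_le_mul_of_nonneg_left hd1 (le_of_lt hlam)))
        (hg0 _ hdm1)
        (hganti _ _ htpos (le_of_lt hd2))
  exact tendsto_of_tendsto_of_tendsto_of_le_of_le' hL hU
    (hev.mono fun t h => h.1) (hev.mono fun t h => h.2)
end SQ


lemma weibull_sqrt (α : ℝ) (hα : 0 < α) (x : ℝ) :
    Real.sqrt (weibull α x) = weibull α ((2:ℝ) ^ (-α⁻¹) * x) := by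
  set cc : ℝ := (2:ℝ) ^ (-α⁻¹) with hccdef
  have hccpos : 0 < cc := Real.rpow_pos_of_pos two_pos _
  rcases lt_or_ge x 0 with hx | hx
  · have hccx : cc * x < 0 := mul_neg_of_pos_of_neg hccpos hx
    rw [weibull_neg α x hx, weibull_neg α _ hccx]
    have h1 : (-(cc * x)) ^ α = cc ^ α * (-x) ^ α := by
      rw [show -(cc * x) = cc * (-x) by ring]
      exact Real.mul_rpow (le_of_lt hccpos) (by linarith)
    have h2 : cc ^ α = 1/2 := by
      rw [hccdef, ← Real.rpow_mul (by norm_num : (0:ℝ) ≤ 2)]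
      rw [show -α⁻¹ * α = -1 by field_simp]
      rw [Real.rpow_neg_one]
      norm_num
    have h3 : Real.exp (-((-x) ^ α)) = (Real.exp (-((1:ℝ)/2 * (-x) ^ α))) ^ 2 := by
      rw [← Real.exp_nat_mul]
      congr 1
      push_cast
      ring
    rw [h3, Real.sqrt_sq (le_of_lt (Real.exp_pos _)), h1, h2]
  · have hccx : 0 ≤ cc * x := mul_nonneg (le_of_lt hccpos) hx
    rw [weibull_nonneg_eq α x hx, weibull_nonneg_eq α _ hccx, Real.sqrt_one]

lemma cross_lt {F : ℝ → ℝ} (hmono : Monotone F) (h0 : ∀ x, 0 ≤ F x) {u v : ℕ → ℝ} {p : ℝ}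
    (hu : ∀ᶠ n : ℕ in atTop, F (u n) ^ n < p) (hv : ∀ᶠ n : ℕ in atTop, p < F (v n) ^ n) :
    ∀ᶠ n : ℕ in atTop, u n < v n := by
  filter_upwards [hu, hv] with n hn1 hn2
  by_contra hcon
  push_neg at hcon
  have : F (v n) ^ n ≤ F (u n) ^ n := pow_le_pow_left₀ (h0 _) (hmono hcon) n
  linarith

lemma types_aux {F : ℝ → ℝ} (hmono : Monotone F) (h0 : ∀ x, 0 ≤ F x) {α : ℝ} (hα : 0 < α)
    {a b a' b' : ℕ → ℝ} (ha : ∀ n, 0 < a n) {cc : ℝ} (hcc : 0 < cc)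
    (h1 : ∀ x : ℝ, Tendsto (fun n : ℕ => F (a n * x + b n) ^ n) atTop (𝓝 (weibull α x)))
    (h2 : ∀ x : ℝ, Tendsto (fun n : ℕ => F (a' n * x + b' n) ^ n) atTop
      (𝓝 (weibull α (cc * x)))) :
    Tendsto (fun n => a' n / a n) atTop (𝓝 cc) ∧
      Tendsto (fun n => (b' n - b n) / a n) atTop (𝓝 0) := by
  set A : ℕ → ℝ := fun n => a' n / a n with hAdef
  set B : ℕ → ℝ := fun n => (b' n - b n) / a n with hBdef
  have key : ∀ ε : ℝ, 0 < ε → ε ≤ 1 → cc * ε ≤ 1 →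
      ∀ᶠ n : ℕ in atTop,
        (-1 - ε < A n * (-(1/cc) + ε) + B n ∧ A n * (-(1/cc) - ε) + B n < -1 + ε) ∧
        (-2 - ε < A n * (-(2/cc) + ε) + B n ∧ A n * (-(2/cc) - ε) + B n < -2 + ε) := by
    intro ε hε hε1 hεc
    have hccε : 0 < cc * ε := mul_pos hcc hε
    have e1 : ∀ᶠ n : ℕ in atTop,
        a n * (-1 - ε) + b n < a' n * (-(1/cc) + ε) + b' n := by
      apply cross_lt hmono h0 (p := weibull α (-1))
      · exact (h1 (-1 - ε)).eventually
          (eventually_lt_nhds (weibull_strict α hα (by linarith) (by linarith)))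
      · apply (h2 (-(1/cc) + ε)).eventually (eventually_gt_nhds ?_)
        have hpt : cc * (-(1/cc) + ε) = -1 + cc * ε := by field_simp; try ring
        rw [hpt]
        exact weibull_strict α hα (by linarith) (by linarith)
    have e2 : ∀ᶠ n : ℕ in atTop,
        a' n * (-(1/cc) - ε) + b' n < a n * (-1 + ε) + b n := by
      apply cross_lt hmono h0 (p := weibull α (-1))
      · apply (h2 (-(1/cc) - ε)).eventually (eventually_lt_nhds ?_)
        have hpt : cc * (-(1/cc) - ε) = -1 - cc * ε := by field_simp; try ring
        rw [hpt]
        exact weibull_strict α hα (by linarith) (by linarith)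
      · exact (h1 (-1 + ε)).eventually
          (eventually_gt_nhds (weibull_strict α hα (by linarith) (by linarith)))
    have e3 : ∀ᶠ n : ℕ in atTop,
        a n * (-2 - ε) + b n < a' n * (-(2/cc) + ε) + b' n := by
      apply cross_lt hmono h0 (p := weibull α (-2))
      · exact (h1 (-2 - ε)).eventually
          (eventually_lt_nhds (weibull_strict α hα (by linarith) (by linarith)))
      · apply (h2 (-(2/cc) + ε)).eventually (eventually_gt_nhds ?_)
        have hpt : cc * (-(2/cc) + ε) = -2 + cc * ε := by field_simp; try ring
        rw [hpt]
        exact weibull_strict α hα (by linarith) (by linarith)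
    have e4 : ∀ᶠ n : ℕ in atTop,
        a' n * (-(2/cc) - ε) + b' n < a n * (-2 + ε) + b n := by
      apply cross_lt hmono h0 (p := weibull α (-2))
      · apply (h2 (-(2/cc) - ε)).eventually (eventually_lt_nhds ?_)
        have hpt : cc * (-(2/cc) - ε) = -2 - cc * ε := by field_simp; try ring
        rw [hpt]
        exact weibull_strict α hα (by linarith) (by linarith)
      · exact (h1 (-2 + ε)).eventually
          (eventually_gt_nhds (weibull_strict α hα (by linarith) (by linarith)))
    filter_upwards [e1, e2, e3, e4] with n he1 he2 he3 he4
    have han := ha n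
    refine ⟨⟨?_, ?_⟩, ?_, ?_⟩
    · have hh : A n * (-(1/cc) + ε) + B n
          = (a' n * (-(1/cc) + ε) + (b' n - b n)) / a n := by
        simp only [hAdef, hBdef]; field_simp; try ring
      rw [hh, lt_div_iff₀ han]
      linarith
    · have hh : A n * (-(1/cc) - ε) + B n
          = (a' n * (-(1/cc) - ε) + (b' n - b n)) / a n := by
        simp only [hAdef, hBdef]; field_simp; try ring
      rw [hh, div_lt_iff₀ han]
      linarith
    · have hh : A n * (-(2/cc) + ε) + B n
          = (a' n * (-(2/cc) + ε) + (b' n - b n)) / a n := by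
        simp only [hAdef, hBdef]; field_simp; try ring
      rw [hh, lt_div_iff₀ han]
      linarith
    · have hh : A n * (-(2/cc) - ε) + B n
          = (a' n * (-(2/cc) - ε) + (b' n - b n)) / a n := by
        simp only [hAdef, hBdef]; field_simp; try ring
      rw [hh, div_lt_iff₀ han]
      linarith
  have hccinv : 0 < 1/cc := by positivity
  have hAlim : Tendsto A atTop (𝓝 cc) := by
    refine tendsto_order.2 ⟨fun y hy => ?_, fun y hy => ?_⟩
    · -- lower
      have hcont : Tendsto (fun ε : ℝ => (1 - 2*ε)/(1/cc + 2*ε)) (𝓝[>] 0) (𝓝 cc) := by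
        have hc1 : ContinuousAt (fun ε : ℝ => (1 - 2*ε)/(1/cc + 2*ε)) 0 := by
          apply ContinuousAt.div
          · fun_prop
          · fun_prop
          · simp only [mul_zero, add_zero]; positivity
        have h5 := hc1.tendsto
        have hval : (1 - 2*(0:ℝ))/(1/cc + 2*0) = cc := by
          norm_num
        rw [hval] at h5
        exact h5.mono_left nhdsWithin_le_nhds
      have hIoo : Set.Ioo (0:ℝ) (min 1 cc⁻¹) ∈ 𝓝[>] (0:ℝ) :=
        Ioo_mem_nhdsGT_of_mem ⟨le_refl 0, lt_min one_pos (by positivity)⟩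
      obtain ⟨ε, hεpos, hεI, hεy⟩ := exists_eps_pos
        ((eventually_of_mem hIoo (fun _ h => h)).and
          (hcont.eventually (eventually_gt_nhds hy)))
      have hε1 : ε ≤ 1 := le_of_lt (lt_of_lt_of_le hεI.2 (min_le_left _ _))
      have hεc : cc * ε ≤ 1 := by
        have h6 : ε < cc⁻¹ := lt_of_lt_of_le hεI.2 (min_le_right _ _)
        have h7 := mul_lt_mul_of_pos_left h6 hcc
        rw [mul_inv_cancel₀ (ne_of_gt hcc)] at h7
        linarith
      filter_upwards [key ε hεpos hε1 hεc] with n hkey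
      obtain ⟨⟨hx1, _⟩, _, hx4⟩ := hkey
      have hD : 0 < 1/cc + 2*ε := by positivity
      have e5 : A n * (-(1/cc) + ε) - A n * (-(2/cc) - ε) = A n * (1/cc + 2*ε) := by ring
      have h5 : 1 - 2*ε < A n * (1/cc + 2*ε) := by linarith [hx1, hx4, e5]
      have h6 : (1 - 2*ε)/(1/cc + 2*ε) < A n := (div_lt_iff₀ hD).2 (by linarith)
      exact lt_trans hεy h6
    · -- upper
      have hcont : Tendsto (fun ε : ℝ => (1 + 2*ε)/(1/cc - 2*ε)) (𝓝[>] 0) (𝓝 cc) := by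
        have hc1 : ContinuousAt (fun ε : ℝ => (1 + 2*ε)/(1/cc - 2*ε)) 0 := by
          apply ContinuousAt.div
          · fun_prop
          · fun_prop
          · simp only [mul_zero, sub_zero]; positivity
        have h5 := hc1.tendsto
        have hval : (1 + 2*(0:ℝ))/(1/cc - 2*0) = cc := by
          norm_num
        rw [hval] at h5
        exact h5.mono_left nhdsWithin_le_nhds
      have hIoo : Set.Ioo (0:ℝ) (min 1 ((2*cc)⁻¹)) ∈ 𝓝[>] (0:ℝ) :=
        Ioo_mem_nhdsGT_of_mem ⟨le_refl 0, lt_min one_pos (by positivity)⟩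
      obtain ⟨ε, hεpos, hεI, hεy⟩ := exists_eps_pos
        ((eventually_of_mem hIoo (fun _ h => h)).and
          (hcont.eventually (eventually_lt_nhds hy)))
      have hε1 : ε ≤ 1 := le_of_lt (lt_of_lt_of_le hεI.2 (min_le_left _ _))
      have hε2c : ε < (2*cc)⁻¹ := lt_of_lt_of_le hεI.2 (min_le_right _ _)
      have hεc : cc * ε ≤ 1 := by
        have h7 : cc * ε < cc * (2*cc)⁻¹ := mul_lt_mul_of_pos_left hε2c hcc
        have h8 : cc * (2*cc)⁻¹ = 1/2 := by field_simp; try ring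
        linarith
      have hD : 0 < 1/cc - 2*ε := by
        have h7 : 2*((2*cc)⁻¹) = 1/cc := by field_simp
        have h8 : 2*ε < 2*((2*cc)⁻¹) := by linarith
        linarith
      filter_upwards [key ε hεpos hε1 hεc] with n hkey
      obtain ⟨⟨_, hx2⟩, hx3, _⟩ := hkey
      have e5 : A n * (-(1/cc) - ε) - A n * (-(2/cc) + ε) = A n * (1/cc - 2*ε) := by ring
      have h5 : A n * (1/cc - 2*ε) < 1 + 2*ε := by linarith [hx2, hx3, e5]
      have h6 : A n < (1 + 2*ε)/(1/cc - 2*ε) := (lt_div_iff₀ hD).2 (by linarith)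
      exact lt_trans h6 hεy
  refine ⟨hAlim, ?_⟩
  rw [Metric.tendsto_atTop]
  intro r hr
  obtain ⟨ε, hεpos, hε1, hεcc, hεr⟩ :
      ∃ ε : ℝ, 0 < ε ∧ ε ≤ 1 ∧ cc * ε ≤ 1 ∧ ε ≤ r/(2*(2+cc)) := by
    refine ⟨min (min 1 cc⁻¹) (r/(2*(2+cc))), ?_, ?_, ?_, ?_⟩
    · exact lt_min (lt_min one_pos (by positivity)) (by positivity)
    · exact le_trans (min_le_left _ _) (min_le_left _ _)
    · have h6 : min (min 1 cc⁻¹) (r/(2*(2+cc))) ≤ cc⁻¹ :=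
        le_trans (min_le_left _ _) (min_le_right _ _)
      calc cc * min (min 1 cc⁻¹) (r/(2*(2+cc))) ≤ cc * cc⁻¹ :=
            mul_le_mul_of_nonneg_left h6 (le_of_lt hcc)
        _ = 1 := mul_inv_cancel₀ (ne_of_gt hcc)
    · exact min_le_right _ _
  obtain ⟨δ, hδpos, hδ1, hδ2⟩ : ∃ δ : ℝ, 0 < δ ∧ δ ≤ 1 ∧ δ ≤ cc*r/4 :=
    ⟨min 1 (cc*r/4), lt_min one_pos (by positivity), min_le_left _ _, min_le_right _ _⟩
  have hAev : ∀ᶠ n : ℕ in atTop, |A n - cc| < δ := by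
    have h6 := hAlim
    rw [Metric.tendsto_atTop] at h6
    obtain ⟨N, hN⟩ := h6 δ hδpos
    filter_upwards [eventually_ge_atTop N] with n hn
    have := hN n hn
    rwa [Real.dist_eq] at this
  obtain ⟨N, hN⟩ := eventually_atTop.1 ((key ε hεpos hε1 hεcc).and hAev)
  refine ⟨N, fun n hn => ?_⟩
  obtain ⟨⟨⟨hx1, hx2⟩, _⟩, hAn⟩ := hN n hn
  rw [Real.dist_eq, sub_zero]
  rw [abs_lt] at hAn ⊢
  obtain ⟨hA1, hA2⟩ := hAn
  have hAub : A n < cc + 1 := by linarith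
  have hAlb : -(cc+1) < A n := by nlinarith
  have hAd1 : A n * (1/cc) - 1 < r/4 := by
    have h7 : (A n - cc) * (1/cc) < δ * (1/cc) := by
      apply mul_lt_mul_of_pos_right hA2 hccinv
    have h8 : δ * (1/cc) ≤ r/4 := by
      rw [mul_one_div, div_le_iff₀ hcc]
      calc δ ≤ cc*r/4 := hδ2
        _ = r/4*cc := by ring
    have h9 : cc * (1/cc) = 1 := by field_simp
    nlinarith
  have hAd2 : -(r/4) < A n * (1/cc) - 1 := by
    have h7 : -δ * (1/cc) < (A n - cc) * (1/cc) := by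
      apply mul_lt_mul_of_pos_right hA1 hccinv
    have h8 : δ * (1/cc) ≤ r/4 := by
      rw [mul_one_div, div_le_iff₀ hcc]
      calc δ ≤ cc*r/4 := hδ2
        _ = r/4*cc := by ring
    have h9 : cc * (1/cc) = 1 := by field_simp
    nlinarith
  have hAεub : A n * ε < r/2 := by
    have h7 : A n * ε < (cc+1) * ε := mul_lt_mul_of_pos_right hAub hεpos
    have h8 : (cc+1) * ε ≤ (cc+1) * (r/(2*(2+cc))) :=
      mul_le_mul_of_nonneg_left hεr (by linarith)
    have h9 : (cc+1) * (r/(2*(2+cc))) < r/2 := by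
      rw [← mul_div_assoc, div_lt_div_iff₀ (by positivity) (by norm_num : (0:ℝ) < 2)]
      nlinarith
    linarith
  have hAεlb : -(r/2) < A n * ε := by
    have h7 : -(cc+1) * ε < A n * ε := mul_lt_mul_of_pos_right hAlb hεpos
    have h8 : (cc+1) * ε ≤ (cc+1) * (r/(2*(2+cc))) :=
      mul_le_mul_of_nonneg_left hεr (by linarith)
    have h9 : (cc+1) * (r/(2*(2+cc))) < r/2 := by
      rw [← mul_div_assoc, div_lt_div_iff₀ (by positivity) (by norm_num : (0:ℝ) < 2)]
      nlinarith
    nlinarith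
  have hεsm : ε ≤ r/4 := by
    have : r/(2*(2+cc)) ≤ r/4 := by
      apply div_le_div_of_nonneg_left (le_of_lt hr) (by norm_num)
      nlinarith
    linarith
  constructor
  · -- -r < B n : from hx1
    have h7 : B n > -1 - ε + A n * (1/cc) - A n * ε := by nlinarith [hx1]
    nlinarith
  · -- B n < r : from hx2
    have h7 : B n < -1 + ε + A n * (1/cc) + A n * ε := by nlinarith [hx2]
    nlinarith

theorem sufficiency (F : ℝ → ℝ) (hmono : Monotone F)
    (hrc : ∀ x, ContinuousWithinAt F (Set.Ici x) x)
    (hbot : Tendsto F atBot (𝓝 0)) (htop : Tendsto F atTop (𝓝 1))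
    (α : ℝ) (hα : 0 < α)
    (hbdd : BddAbove {x | F x < 1})
    (hrv : RegVary (fun x => 1 - F (sSup {x | F x < 1} - 1 / x)) (-α)) :
    MemDomAttr F (weibull α) := by
  set x₀ := sSup {x | F x < 1} with hx₀
  set g : ℝ → ℝ := fun x => 1 - F (x₀ - 1 / x) with hg
  have hne : {x | F x < 1}.Nonempty := T_nonempty hbot
  have hgpos : ∀ x, 0 < x → 0 < g x := by
    intro x hx
    have h1 : x₀ - 1 / x < x₀ := by
      have : 0 < 1 / x := by positivity
      linarith
    have := F_lt_one_of_lt_sSup hmono hne h1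
    simp only [hg]
    linarith
  have hganti : ∀ x y, 0 < x → x ≤ y → g y ≤ g x := by
    intro x y hx hxy
    have h1 : 1 / y ≤ 1 / x := one_div_le_one_div_of_le hx hxy
    have h2 : F (x₀ - 1 / x) ≤ F (x₀ - 1 / y) := hmono (by linarith)
    simp only [hg]
    linarith
  have hgnonneg : ∀ x, 0 ≤ g x := by
    intro x
    have := F_le_one hmono htop (x₀ - 1 / x)
    simp only [hg]; linarith
  -- g tends to 0 at infinity
  have hgto0 : Tendsto g atTop (𝓝 0) := by
    set r : ℝ := ((2:ℝ) ^ (-α) + 1) / 2 with hrdef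
    have h2a : (2:ℝ) ^ (-α) < 1 :=
      Real.rpow_lt_one_of_one_lt_of_neg one_lt_two (by linarith)
    have h2b : (0:ℝ) < (2:ℝ) ^ (-α) := Real.rpow_pos_of_pos two_pos _
    have hr1 : r < 1 := by rw [hrdef]; linarith
    have hr0 : 0 < r := by rw [hrdef]; linarith
    have hrgt : (2:ℝ) ^ (-α) < r := by rw [hrdef]; linarith
    have hev : ∀ᶠ x in atTop, g (2 * x) / g x < r :=
      (hrv.2 2 two_pos).eventually (eventually_lt_nhds hrgt)
    obtain ⟨X', hX'⟩ := eventually_atTop.1 hev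
    set X := max X' 1 with hXdef
    have hXpos : 0 < X := lt_of_lt_of_le one_pos (le_max_right _ _)
    have hstep : ∀ x, X ≤ x → g (2 * x) ≤ r * g x := by
      intro x hx
      have h1 : g (2 * x) / g x < r := hX' x (le_trans (le_max_left _ _) hx)
      have h2 : 0 < g x := hgpos x (lt_of_lt_of_le hXpos hx)
      calc g (2 * x) = (g (2 * x) / g x) * g x := by field_simp
        _ ≤ r * g x := mul_le_mul_of_nonneg_right (le_of_lt h1) (le_of_lt h2)
    have hiter : ∀ k : ℕ, g (2 ^ k * X) ≤ r ^ k * g X := by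
      intro k
      induction k with
      | zero => simp
      | succ k ih =>
        have hk1 : (1:ℝ) ≤ 2 ^ k := one_le_pow₀ (by norm_num)
        have hXk : X ≤ 2 ^ k * X := le_mul_of_one_le_left (le_of_lt hXpos) hk1
        calc g (2 ^ (k+1) * X) = g (2 * (2 ^ k * X)) := by ring_nf
          _ ≤ r * g (2 ^ k * X) := hstep _ hXk
          _ ≤ r * (r ^ k * g X) := mul_le_mul_of_nonneg_left ih (le_of_lt hr0)
          _ = r ^ (k+1) * g X := by ring
    refine tendsto_order.2 ⟨fun y hy => ?_, fun y hy => ?_⟩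
    · filter_upwards [eventually_ge_atTop (1:ℝ)] with x _
      exact lt_of_lt_of_le hy (hgnonneg x)
    · have hgeo : Tendsto (fun k : ℕ => r ^ k * g X) atTop (𝓝 0) := by
        have := (tendsto_pow_atTop_nhds_zero_of_lt_one (le_of_lt hr0) hr1).mul_const (g X)
        rwa [zero_mul] at this
      obtain ⟨k, hk⟩ := (hgeo.eventually (eventually_lt_nhds hy)).exists
      filter_upwards [eventually_ge_atTop (2 ^ k * X)] with x hx
      calc g x ≤ g (2 ^ k * X) := hganti _ _ (by positivity) hx
        _ ≤ r ^ k * g X := hiter k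
        _ < y := hk
  -- the sequence c
  set c : ℕ → ℝ := fun n => sInf {x | 0 < x ∧ g x < (n:ℝ)⁻¹} with hc
  have hSbdd : ∀ n : ℕ, BddBelow {x | 0 < x ∧ g x < (n:ℝ)⁻¹} :=
    fun n => ⟨0, fun y hy => le_of_lt hy.1⟩
  have hSne : ∀ n : ℕ, 1 ≤ n → {x | 0 < x ∧ g x < (n:ℝ)⁻¹}.Nonempty := by
    intro n hn
    have hpos : (0:ℝ) < (n:ℝ)⁻¹ := by
      have : (0:ℝ) < (n:ℝ) := by exact_mod_cast hn
      positivity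
    have h1 : ∀ᶠ x in atTop, g x < (n:ℝ)⁻¹ := hgto0.eventually (eventually_lt_nhds hpos)
    obtain ⟨x, hx1, hx2⟩ := (h1.and (eventually_gt_atTop 0)).exists
    exact ⟨x, hx2, hx1⟩
  have hc_ge : ∀ M : ℝ, 0 < M → ∀ᶠ n : ℕ in atTop, M ≤ c n := by
    intro M hM
    have hgM : 0 < g M := hgpos M hM
    obtain ⟨N, hN⟩ := exists_nat_ge (max 1 (g M)⁻¹)
    filter_upwards [eventually_ge_atTop N] with n hn
    have hn1 : 1 ≤ n := by
      have h1 : (1:ℝ) ≤ N := le_trans (le_max_left _ _) hN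
      have : (1:ℝ) ≤ (n:ℝ) := le_trans h1 (by exact_mod_cast hn)
      exact_mod_cast this
    have hnn : (g M)⁻¹ ≤ (n:ℝ) :=
      le_trans (le_trans (le_max_right _ _) hN) (by exact_mod_cast hn)
    have hinv : (n:ℝ)⁻¹ ≤ g M := by
      have hnpos : (0:ℝ) < (n:ℝ) := lt_of_lt_of_le (by positivity) hnn
      rw [inv_le_comm₀ hnpos hgM] at *
      exact hnn
    apply le_csInf (hSne n hn1)
    intro x hx
    by_contra hcon
    push_neg at hcon
    have : g M ≤ g x := hganti x M hx.1 (le_of_lt hcon)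
    have : g x < g M := lt_of_lt_of_le hx.2 hinv
    linarith
  have hcpos : ∀ᶠ n : ℕ in atTop, 1 ≤ c n := hc_ge 1 one_pos
  have hctop : Tendsto c atTop atTop := by
    apply tendsto_atTop.2
    intro M
    filter_upwards [hc_ge (max M 1) (lt_of_lt_of_le one_pos (le_max_right _ _))] with n hn
    exact le_trans (le_max_left _ _) hn
  -- right-continuity of g and bounds at c n
  have hgrc : ∀ x : ℝ, 0 < x → ContinuousWithinAt g (Set.Ici x) x := by
    intro x hx
    have h1 : ContinuousWithinAt (fun y : ℝ => x₀ - 1 / y) (Set.Ici x) x := by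
      apply ContinuousAt.continuousWithinAt
      exact continuousAt_const.sub (continuousAt_const.div continuousAt_id (ne_of_gt hx))
    have hmaps : Set.MapsTo (fun y : ℝ => x₀ - 1 / y) (Set.Ici x) (Set.Ici (x₀ - 1 / x)) := by
      intro y hy
      have hy' : x ≤ y := hy
      have : 1 / y ≤ 1 / x := one_div_le_one_div_of_le hx hy'
      simp only [Set.mem_Ici]
      linarith
    have h2 : ContinuousWithinAt (fun y : ℝ => F (x₀ - 1 / y)) (Set.Ici x) x :=
      ContinuousWithinAt.comp (hrc (x₀ - 1 / x)) h1 hmaps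
    exact continuousWithinAt_const.sub h2
  have hgc_le : ∀ n : ℕ, 1 ≤ n → 0 < c n → g (c n) ≤ (n:ℝ)⁻¹ := by
    intro n hn hcn
    have h1 : Tendsto g (𝓝[>] (c n)) (𝓝 (g (c n))) :=
      ((hgrc (c n) hcn).mono Set.Ioi_subset_Ici_self)
    apply le_of_tendsto h1
    filter_upwards [self_mem_nhdsWithin] with y hy
    obtain ⟨z, hz, hzy⟩ := exists_lt_of_csInf_lt (hSne n hn) hy
    exact le_of_lt (lt_of_le_of_lt (hganti z y hz.1 (le_of_lt hzy)) hz.2)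
  have hglb : ∀ n : ℕ, ∀ x : ℝ, 0 < x → x < c n → (n:ℝ)⁻¹ ≤ g x := by
    intro n x hx hxc
    by_contra hcon
    push_neg at hcon
    have hmem : x ∈ {x | 0 < x ∧ g x < (n:ℝ)⁻¹} := ⟨hx, hcon⟩
    have h9 := csInf_le (hSbdd n) hmem
    have h10 : c n ≤ x := by simp only [hc]; exact h9
    linarith
  -- n * g (c n) → 1
  have hngc : Tendsto (fun n : ℕ => (n:ℝ) * g (c n)) atTop (𝓝 1) := by
    refine tendsto_order.2 ⟨fun y hy => ?_, fun y hy => ?_⟩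
    · -- lower bound via δ
      have hcont : Tendsto (fun δ : ℝ => (1 - δ) ^ α) (𝓝[>] 0) (𝓝 1) := by
        have h1 : ContinuousAt (fun δ : ℝ => (1 - δ) ^ α) 0 := by
          apply ContinuousAt.comp (g := fun z : ℝ => z ^ α)
          · have := Real.continuousAt_rpow_const 1 α (Or.inl one_ne_zero)
            simpa using this
          · exact continuousAt_const.sub continuousAt_id
        have h2 := h1.tendsto
        simp only [sub_zero, Real.one_rpow] at h2
        exact h2.mono_left nhdsWithin_le_nhds
      have hIoo : Set.Ioo (0:ℝ) 1 ∈ 𝓝[>] (0:ℝ) :=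
        Ioo_mem_nhdsGT_of_mem ⟨le_refl 0, one_pos⟩
      have hevδ : ∀ᶠ δ in 𝓝[>] (0:ℝ), y < (1 - δ) ^ α ∧ δ ∈ Set.Ioo (0:ℝ) 1 :=
        (hcont.eventually (eventually_gt_nhds hy)).and (eventually_of_mem hIoo (fun _ h => h))
      obtain ⟨δ, hδpos, hyδ, hδIoo⟩ := exists_eps_pos hevδ
      have hδ1 : δ < 1 := hδIoo.2
      have h1δ : 0 < 1 - δ := by linarith
      have hv : Tendsto (fun n : ℕ => g (c n) / g ((1 - δ) * c n)) atTop
          (𝓝 ((1 - δ) ^ α)) := by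
        have h1 := (hrv.2 (1 - δ) h1δ).comp hctop
        have h2 := h1.inv₀ (ne_of_gt (Real.rpow_pos_of_pos h1δ (-α)))
        have h3 : ((1 - δ:ℝ) ^ (-α))⁻¹ = (1 - δ) ^ α := by
          rw [Real.rpow_neg (le_of_lt h1δ), inv_inv]
        rw [h3] at h2
        apply h2.congr'
        filter_upwards [hcpos] with n hn
        have hcn : (0:ℝ) < c n := lt_of_lt_of_le one_pos hn
        have hgp : 0 < g ((1 - δ) * c n) := hgpos _ (by positivity)
        have hgp2 : 0 < g (c n) := hgpos _ hcn
        simp only [Function.comp]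
        rw [inv_div]
      have hev2 : ∀ᶠ n : ℕ in atTop, g (c n) / g ((1 - δ) * c n) ≤ (n:ℝ) * g (c n) := by
        filter_upwards [hcpos, eventually_ge_atTop 1] with n hcn hn1
        have hcnp : (0:ℝ) < c n := lt_of_lt_of_le one_pos hcn
        have hx : (0:ℝ) < (1 - δ) * c n := by positivity
        have hxc : (1 - δ) * c n < c n := by nlinarith
        have hge := hglb n _ hx hxc
        have hgp : 0 < g ((1 - δ) * c n) := hgpos _ hx
        rw [div_le_iff₀ hgp]
        have h2 : (1:ℝ) ≤ (n:ℝ) * g ((1 - δ) * c n) := by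
          have hnpos : (0:ℝ) < (n:ℝ) := by exact_mod_cast hn1
          calc (1:ℝ) = (n:ℝ) * (n:ℝ)⁻¹ := by field_simp
            _ ≤ (n:ℝ) * g ((1 - δ) * c n) :=
              mul_le_mul_of_nonneg_left hge (le_of_lt hnpos)
        calc g (c n) = 1 * g (c n) := (one_mul _).symm
          _ ≤ ((n:ℝ) * g ((1 - δ) * c n)) * g (c n) :=
            mul_le_mul_of_nonneg_right h2 (hgnonneg _)
          _ = (n:ℝ) * g (c n) * g ((1 - δ) * c n) := by ring
      have hev3 : ∀ᶠ n : ℕ in atTop, y < g (c n) / g ((1 - δ) * c n) :=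
        hv.eventually (eventually_gt_nhds hyδ)
      filter_upwards [hev2, hev3] with n h2 h3
      exact lt_of_lt_of_le h3 h2
    · filter_upwards [hcpos, eventually_ge_atTop 1] with n hcn hn1
      have hcnp : (0:ℝ) < c n := lt_of_lt_of_le one_pos hcn
      have h1 : g (c n) ≤ (n:ℝ)⁻¹ := hgc_le n hn1 hcnp
      have hnpos : (0:ℝ) < (n:ℝ) := by exact_mod_cast hn1
      have : (n:ℝ) * g (c n) ≤ (n:ℝ) * (n:ℝ)⁻¹ :=
        mul_le_mul_of_nonneg_left h1 (le_of_lt hnpos)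
      rw [mul_inv_cancel₀ (ne_of_gt hnpos)] at this
      exact lt_of_le_of_lt this hy
  -- key limit
  have hS5 : ∀ lam : ℝ, 0 < lam →
      Tendsto (fun n : ℕ => (n:ℝ) * g (c n * lam)) atTop (𝓝 (lam ^ (-α))) := by
    intro lam hlam
    have h1 := ((hrv.2 lam hlam).comp hctop).mul hngc
    rw [mul_one] at h1
    apply h1.congr'
    filter_upwards [hcpos] with n hn
    have hcnp : (0:ℝ) < c n := lt_of_lt_of_le one_pos hn
    have hgp : 0 < g (c n) := hgpos _ hcnp
    simp only [Function.comp]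
    rw [mul_comm lam (c n)]
    field_simp
  -- assemble
  refine ⟨fun n => (max (c n) 1)⁻¹, fun _ => x₀, fun n => by positivity, ?_⟩
  intro x _
  rcases le_or_gt 0 x with hx | hx
  · rw [weibull_nonneg_eq α x hx]
    have hFx₀ : F x₀ = 1 := F_eq_one_sSup hmono hrc htop hbdd
    have : ∀ n : ℕ, F ((max (c n) 1)⁻¹ * x + x₀) ^ n = 1 := by
      intro n
      have h1 : x₀ ≤ (max (c n) 1)⁻¹ * x + x₀ := by
        have : 0 ≤ (max (c n) 1)⁻¹ * x := by positivity
        linarith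
      have h3 := hmono h1
      rw [hFx₀] at h3
      have h2 : F ((max (c n) 1)⁻¹ * x + x₀) = 1 :=
        le_antisymm (F_le_one hmono htop _) h3
      rw [h2, one_pow]
    rw [show (fun n : ℕ => F ((max (c n) 1)⁻¹ * x + x₀) ^ n) = fun _ => (1:ℝ) from funext this]
    exact tendsto_const_nhds
  · have hmx : 0 < -x := by linarith
    have htn : Tendsto (fun n : ℕ => (n:ℝ) * g (c n * (-x)⁻¹)) atTop (𝓝 ((-x) ^ α)) := by
      have h1 := hS5 (-x)⁻¹ (by positivity)
      have h2 : ((-x)⁻¹ : ℝ) ^ (-α) = (-x) ^ α := by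
        rw [Real.inv_rpow (le_of_lt hmx), Real.rpow_neg (le_of_lt hmx), inv_inv]
      rwa [h2] at h1
    rw [weibull_neg α x hx]
    have hconv := npow_conv htn
    apply hconv.congr'
    filter_upwards [hcpos, eventually_ge_atTop 1] with n hcn hn1
    have hcnp : (0:ℝ) < c n := lt_of_lt_of_le one_pos hcn
    have hmax : max (c n) 1 = c n := max_eq_left hcn
    have hnpos : (0:ℝ) < (n:ℝ) := by exact_mod_cast hn1
    have harg : x₀ - 1 / (c n * (-x)⁻¹) = (max (c n) 1)⁻¹ * x + x₀ := by
      rw [hmax]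
      field_simp
      ring
    have hFval : F ((max (c n) 1)⁻¹ * x + x₀) = 1 - g (c n * (-x)⁻¹) := by
      simp only [hg]
      rw [harg]
      ring
    have : 1 - ((n:ℝ) * g (c n * (-x)⁻¹)) / n = 1 - g (c n * (-x)⁻¹) := by
      field_simp
    rw [this, hFval]

theorem necessity (F : ℝ → ℝ) (hmono : Monotone F)
    (hrc : ∀ x, ContinuousWithinAt F (Set.Ici x) x)
    (hbot : Tendsto F atBot (𝓝 0)) (htop : Tendsto F atTop (𝓝 1))
    (α : ℝ) (hα : 0 < α) (hmem : MemDomAttr F (weibull α)) :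
    BddAbove {x | F x < 1} ∧
      RegVary (fun x => 1 - F (sSup {x | F x < 1} - 1 / x)) (-α) := by
  obtain ⟨a, b, ha, hconv⟩ := hmem
  have hF0 : ∀ x, 0 ≤ F x := F_nonneg hmono hbot
  have hF1 : ∀ x, F x ≤ 1 := F_le_one hmono htop
  have hcv : ∀ x : ℝ, Tendsto (fun n : ℕ => F (a n * x + b n) ^ n) atTop (𝓝 (weibull α x)) :=
    fun x => hconv x ((continuous_weibull α hα).continuousAt)
  have hNF : ∀ x : ℝ, x < 0 →
      Tendsto (fun n : ℕ => (n:ℝ) * (1 - F (a n * x + b n))) atTop (𝓝 ((-x) ^ α)) ∧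
      Tendsto (fun n : ℕ => F (a n * x + b n)) atTop (𝓝 1) := by
    intro x hx
    have h := npow_lim (fun n => hF0 _) (weibull_pos α x) (hcv x)
    have heq : -Real.log (weibull α x) = (-x) ^ α := by
      rw [weibull_neg α x hx, Real.log_exp, neg_neg]
    rwa [heq] at h
  have hflt : ∀ x : ℝ, x < 0 → ∀ᶠ n : ℕ in atTop, F (a n * x + b n) < 1 := by
    intro x hx
    have hw := weibull_lt_one α hα hx
    have h1 : ∀ᶠ n : ℕ in atTop, F (a n * x + b n) ^ n < (weibull α x + 1)/2 :=
      (hcv x).eventually (eventually_lt_nhds (by linarith))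
    filter_upwards [h1, eventually_ge_atTop 1] with n h2 h3
    by_contra hcon
    push_neg at hcon
    have : (1:ℝ) ≤ F (a n * x + b n) ^ n := one_le_pow₀ hcon
    linarith
  obtain ⟨cc, hccpos, hcclt1, hdbl⟩ : ∃ cc : ℝ, 0 < cc ∧ cc < 1 ∧
      ∀ x : ℝ, Tendsto (fun n : ℕ => F (a (2*n) * x + b (2*n)) ^ n) atTop
        (𝓝 (weibull α (cc * x))) := by
    refine ⟨(2:ℝ) ^ (-α⁻¹), Real.rpow_pos_of_pos two_pos _, ?_, ?_⟩
    · apply Real.rpow_lt_one_of_one_lt_of_neg one_lt_two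
      have : 0 < α⁻¹ := by positivity
      linarith
    intro x
    have h2n : Tendsto (fun n : ℕ => 2*n) atTop atTop := by
      apply tendsto_atTop_mono (f := fun n : ℕ => n) _ tendsto_id
      intro n
      exact Nat.le_mul_of_pos_left n (by norm_num)
    have h1 := (hcv x).comp h2n
    have h2 := (Real.continuous_sqrt.tendsto _).comp h1
    rw [weibull_sqrt α hα x] at h2
    apply h2.congr
    intro n
    simp only [Function.comp]
    rw [show 2*n = n*2 by ring, pow_mul, Real.sqrt_sq (pow_nonneg (hF0 _) n)]
  obtain ⟨hA, hB0⟩ := types_aux hmono hF0 hα ha hccpos hcv hdbl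
  obtain ⟨c₁, hc₁lt, hc₁gt, hc₁pos⟩ : ∃ c₁ : ℝ, c₁ < 1 ∧ cc < c₁ ∧ 0 < c₁ :=
    ⟨(1 + cc)/2, by linarith, by linarith, by linarith⟩
  have hstep : ∀ ε : ℝ, 0 < ε → ∀ᶠ n : ℕ in atTop,
      a (2*n) ≤ c₁ * a n ∧ |b (2*n) - b n| ≤ ε * a n := by
    intro ε hε
    have h1 : ∀ᶠ n : ℕ in atTop, a (2*n) / a n < c₁ :=
      hA.eventually (eventually_lt_nhds hc₁gt)
    have h2 : ∀ᶠ n : ℕ in atTop, (b (2*n) - b n)/a n < ε :=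
      hB0.eventually (eventually_lt_nhds hε)
    have h3 : ∀ᶠ n : ℕ in atTop, -ε < (b (2*n) - b n)/a n :=
      hB0.eventually (eventually_gt_nhds (by linarith))
    filter_upwards [h1, h2, h3] with n k1 k2 k3
    constructor
    · have k4 := (div_lt_iff₀ (ha n)).1 k1
      nlinarith [k4]
    · have hup := (div_lt_iff₀ (ha n)).1 k2
      have hlo := (lt_div_iff₀ (ha n)).1 k3
      rw [abs_le]
      constructor <;> nlinarith
  -- boundedness of the support
  have hbdd : BddAbove {x | F x < 1} := by
    obtain ⟨N₀, hN₀⟩ := eventually_atTop.1 (hstep 1 one_pos)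
    set m : ℕ := N₀ + 1 with hmdef
    have hmge : ∀ j : ℕ, N₀ ≤ 2^j * m := by
      intro j
      have h1 : 1 ≤ 2^j := Nat.one_le_two_pow
      calc N₀ ≤ m := by omega
        _ = 1 * m := (one_mul m).symm
        _ ≤ 2^j * m := Nat.mul_le_mul_right m h1
    have haj : ∀ j : ℕ, a (2^j * m) ≤ c₁^j * a m := by
      intro j
      induction j with
      | zero => simp
      | succ j ih =>
        have h1 : 2^(j+1)*m = 2*(2^j*m) := by ring
        rw [h1]
        calc a (2*(2^j*m)) ≤ c₁ * a (2^j*m) := (hN₀ _ (hmge j)).1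
          _ ≤ c₁ * (c₁^j * a m) := mul_le_mul_of_nonneg_left ih (le_of_lt hc₁pos)
          _ = c₁^(j+1) * a m := by ring
    have hbj : ∀ j : ℕ, dist (b (2^j * m)) (b (2^(j+1) * m)) ≤ a m * c₁^j := by
      intro j
      rw [Real.dist_eq, abs_sub_comm]
      have h1 : 2^(j+1)*m = 2*(2^j*m) := by ring
      rw [h1]
      calc |b (2*(2^j*m)) - b (2^j*m)| ≤ 1 * a (2^j*m) := (hN₀ _ (hmge j)).2
        _ ≤ 1 * (c₁^j * a m) := by
            rw [one_mul, one_mul]; exact haj j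
        _ = a m * c₁^j := by ring
    have hcauchy : CauchySeq (fun j : ℕ => b (2^j * m)) :=
      cauchySeq_of_le_geometric c₁ (a m) hc₁lt hbj
    obtain ⟨L, hL⟩ := cauchySeq_tendsto_of_complete hcauchy
    refine ⟨L, fun y hy => ?_⟩
    by_contra hcon
    push_neg at hcon
    have hFy : F y < 1 := hy
    have hjm : Tendsto (fun j : ℕ => 2^j * m) atTop atTop := by
      apply tendsto_atTop_mono (f := fun j : ℕ => j) _ tendsto_id
      intro j
      have h1 : j < 2^j := Nat.lt_two_pow_self
      calc j ≤ 2^j := le_of_lt h1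
        _ = 2^j * 1 := (mul_one _).symm
        _ ≤ 2^j * m := Nat.mul_le_mul_left _ (by omega)
    have h1 : Tendsto (fun j : ℕ => F (b (2^j * m)) ^ (2^j * m)) atTop (𝓝 1) := by
      have h0 := hcv 0
      rw [weibull_nonneg_eq α 0 le_rfl] at h0
      simp only [mul_zero, zero_add] at h0
      exact h0.comp hjm
    have h2 : Tendsto (fun j : ℕ => F y ^ (2^j * m)) atTop (𝓝 0) :=
      (tendsto_pow_atTop_nhds_zero_of_lt_one (hF0 y) hFy).comp hjm
    have h3 : ∀ᶠ j : ℕ in atTop, F (b (2^j * m)) ^ (2^j*m) ≤ F y ^ (2^j*m) := by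
      filter_upwards [hL.eventually (eventually_lt_nhds hcon)] with j h5
      exact pow_le_pow_left₀ (hF0 _) (hmono (le_of_lt h5)) _
    have h4 := le_of_tendsto_of_tendsto h1 h2 h3
    linarith
  -- convergence of centers
  set x₀ : ℝ := sSup {x | F x < 1} with hx₀def
  have hne : {x | F x < 1}.Nonempty := T_nonempty hbot
  have hto_x0 : ∀ (u : ℕ → ℝ), (∀ᶠ n : ℕ in atTop, F (u n) < 1) →
      Tendsto (fun n => F (u n)) atTop (𝓝 1) → Tendsto u atTop (𝓝 x₀) := by
    intro u hult hu1
    refine tendsto_order.2 ⟨fun y hy => ?_, fun y hy => ?_⟩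
    · have hFy : F y < 1 := F_lt_one_of_lt_sSup hmono hne hy
      filter_upwards [hu1.eventually (eventually_gt_nhds hFy)] with n h1
      by_contra hcon
      push_neg at hcon
      exact absurd (hmono hcon) (not_le.mpr h1)
    · filter_upwards [hult] with n h1
      exact lt_of_le_of_lt (le_csSup hbdd h1) hy
  have hm1 : Tendsto (fun n => a n * (-1) + b n) atTop (𝓝 x₀) :=
    hto_x0 _ (hflt (-1) (by norm_num)) (hNF (-1) (by norm_num)).2
  have hm2 : Tendsto (fun n => a n * (-2) + b n) atTop (𝓝 x₀) :=
    hto_x0 _ (hflt (-2) (by norm_num)) (hNF (-2) (by norm_num)).2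
  have ha0 : Tendsto a atTop (𝓝 0) := by
    have h1 := hm1.sub hm2
    rw [sub_self] at h1
    apply h1.congr; intro n; ring
  have hb0 : Tendsto b atTop (𝓝 x₀) := by
    have h1 := hm1.add ha0
    rw [add_zero] at h1
    apply h1.congr; intro n; ring
  -- (x₀ - b n)/a n → 0
  have hu0 : Tendsto (fun n => (x₀ - b n)/a n) atTop (𝓝 0) := by
    rw [Metric.tendsto_atTop]
    intro r hr
    obtain ⟨ε, hεpos, hεeq⟩ : ∃ ε : ℝ, 0 < ε ∧ ε/(1-c₁) = r/2 := by
      have hne : (1:ℝ) - c₁ ≠ 0 := by linarith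
      refine ⟨(1 - c₁) * (r/2), mul_pos (by linarith) (by linarith), ?_⟩
      field_simp
    obtain ⟨N₁, hN₁⟩ := eventually_atTop.1 (hstep ε hεpos)
    refine ⟨N₁ + 1, fun n hn => ?_⟩
    have hnN₁ : ∀ j : ℕ, N₁ ≤ 2^j * n := by
      intro j
      have h1 : 1 ≤ 2^j := Nat.one_le_two_pow
      calc N₁ ≤ n := by omega
        _ = 1 * n := (one_mul n).symm
        _ ≤ 2^j * n := Nat.mul_le_mul_right n h1
    have haj : ∀ j : ℕ, a (2^j * n) ≤ c₁^j * a n := by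
      intro j
      induction j with
      | zero => simp
      | succ j ih =>
        have h1 : 2^(j+1)*n = 2*(2^j*n) := by ring
        rw [h1]
        calc a (2*(2^j*n)) ≤ c₁ * a (2^j*n) := (hN₁ _ (hnN₁ j)).1
          _ ≤ c₁ * (c₁^j * a n) := mul_le_mul_of_nonneg_left ih (le_of_lt hc₁pos)
          _ = c₁^(j+1) * a n := by ring
    have htel : ∀ J : ℕ, |b (2^J*n) - b n| ≤ (ε * a n) * ((1 - c₁^J)/(1-c₁)) := by
      intro J
      induction J with
      | zero => simp
      | succ J ih =>
        have h1 : 2^(J+1)*n = 2*(2^J*n) := by ring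
        have h2 : |b (2*(2^J*n)) - b (2^J*n)| ≤ ε * a (2^J*n) := (hN₁ _ (hnN₁ J)).2
        have h3 : ε * a (2^J*n) ≤ ε * (c₁^J * a n) :=
          mul_le_mul_of_nonneg_left (haj J) (le_of_lt hεpos)
        have h4 : |b (2^(J+1)*n) - b n| ≤ |b (2^(J+1)*n) - b (2^J*n)| + |b (2^J*n) - b n| :=
          abs_sub_le _ _ _
        have h5 : |b (2^(J+1)*n) - b (2^J*n)| ≤ ε * (c₁^J * a n) := by
          rw [h1]; linarith
        have hne : (1:ℝ) - c₁ ≠ 0 := by linarith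
        have h6 : ε * (c₁^J * a n) + (ε * a n) * ((1 - c₁^J)/(1-c₁))
            = (ε * a n) * ((1 - c₁^(J+1))/(1-c₁)) := by
          field_simp
          ring
        linarith
    have hle2 : ∀ J : ℕ, |b (2^J*n) - b n| ≤ (ε * a n)/(1-c₁) := by
      intro J
      have h6 : 0 ≤ c₁^J := pow_nonneg (le_of_lt hc₁pos) J
      have h7 : (1 - c₁^J)/(1-c₁) ≤ 1/(1-c₁) :=
        (div_le_div_iff_of_pos_right (show (0:ℝ) < 1-c₁ by linarith)).2 (by linarith)
      calc |b (2^J*n) - b n| ≤ (ε * a n) * ((1-c₁^J)/(1-c₁)) := htel J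
        _ ≤ (ε * a n) * (1/(1-c₁)) :=
            mul_le_mul_of_nonneg_left h7 (mul_nonneg (le_of_lt hεpos) (le_of_lt (ha n)))
        _ = (ε * a n)/(1-c₁) := by ring
    have hjn : Tendsto (fun J : ℕ => 2^J * n) atTop atTop := by
      apply tendsto_atTop_mono (f := fun j : ℕ => j) _ tendsto_id
      intro j
      have h1 : j < 2^j := Nat.lt_two_pow_self
      calc j ≤ 2^j := le_of_lt h1
        _ = 2^j * 1 := (mul_one _).symm
        _ ≤ 2^j * n := Nat.mul_le_mul_left _ (by omega)
    have hblim : Tendsto (fun J : ℕ => |b (2^J*n) - b n|) atTop (𝓝 |x₀ - b n|) := by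
      have h8 := (hb0.comp hjn).sub_const (b n)
      exact (continuous_abs.tendsto _).comp h8
    have h9 : |x₀ - b n| ≤ (ε * a n)/(1-c₁) :=
      le_of_tendsto hblim (Eventually.of_forall hle2)
    rw [Real.dist_eq, sub_zero, abs_div, abs_of_pos (ha n)]
    have h10 : (ε * a n)/(1-c₁) = (r/2) * a n := by
      rw [show (ε * a n)/(1-c₁) = (ε/(1-c₁)) * a n from by ring, hεeq]
    rw [h10] at h9
    have h11 : |x₀ - b n| / a n ≤ r/2 := by
      rw [div_le_iff₀ (ha n)]; linarith
    linarith
  -- the quantitative limit anchored at x₀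
  have hN7 : ∀ s : ℝ, 0 < s →
      Tendsto (fun n : ℕ => (n:ℝ) * (1 - F (x₀ - a n * s))) atTop (𝓝 (s ^ α)) := by
    intro s hs
    have habs : ∀ ε : ℝ, 0 < ε → ∀ᶠ n : ℕ in atTop, |x₀ - b n| ≤ ε * a n := by
      intro ε hε
      have h1 := hu0.eventually (eventually_lt_nhds hε)
      have h2 := hu0.eventually (eventually_gt_nhds (by linarith : -ε < (0:ℝ)))
      filter_upwards [h1, h2] with n k1 k2
      have k3 := (div_lt_iff₀ (ha n)).1 k1
      have k4 := (lt_div_iff₀ (ha n)).1 k2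
      rw [abs_le]
      constructor <;> nlinarith
    refine tendsto_order.2 ⟨fun y hy => ?_, fun y hy => ?_⟩
    · have hcont : Tendsto (fun ε : ℝ => (s - ε) ^ α) (𝓝[>] 0) (𝓝 (s ^ α)) := by
        have hc1 : ContinuousAt (fun ε : ℝ => (s - ε) ^ α) 0 := by
          apply ContinuousAt.comp (g := fun z : ℝ => z ^ α)
          · simpa using Real.continuousAt_rpow_const s α (Or.inl (ne_of_gt hs))
          · fun_prop
        have h5 := hc1.tendsto
        simp only [sub_zero] at h5
        exact h5.mono_left nhdsWithin_le_nhds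
      have hIoo : Set.Ioo (0:ℝ) s ∈ 𝓝[>] (0:ℝ) := Ioo_mem_nhdsGT_of_mem ⟨le_refl 0, hs⟩
      obtain ⟨ε, hεpos, hεI, hεy⟩ := exists_eps_pos
        ((eventually_of_mem hIoo (fun _ h => h)).and
          (hcont.eventually (eventually_gt_nhds hy)))
      have hxneg : -(s - ε) < 0 := by
        have := hεI.2; linarith
      have hlow := (hNF (-(s-ε)) hxneg).1
      rw [neg_neg] at hlow
      have h6 : ∀ᶠ n : ℕ in atTop,
          (n:ℝ) * (1 - F (a n * (-(s-ε)) + b n)) ≤ (n:ℝ) * (1 - F (x₀ - a n * s)) := by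
        filter_upwards [habs ε hεpos] with n k1
        have k3 : x₀ - b n ≤ ε * a n := (abs_le.1 k1).2
        have k2 : x₀ - a n * s ≤ a n * (-(s-ε)) + b n := by linarith
        have k4 := hmono k2
        have k5 : (0:ℝ) ≤ (n:ℝ) := Nat.cast_nonneg n
        apply mul_le_mul_of_nonneg_left _ k5
        linarith
      have h7 : ∀ᶠ n : ℕ in atTop, y < (n:ℝ) * (1 - F (a n * (-(s-ε)) + b n)) :=
        hlow.eventually (eventually_gt_nhds hεy)
      filter_upwards [h6, h7] with n k1 k2
      linarith
    · have hcont : Tendsto (fun ε : ℝ => (s + ε) ^ α) (𝓝[>] 0) (𝓝 (s ^ α)) := by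
        have hc1 : ContinuousAt (fun ε : ℝ => (s + ε) ^ α) 0 := by
          apply ContinuousAt.comp (g := fun z : ℝ => z ^ α)
          · simpa using Real.continuousAt_rpow_const s α (Or.inl (ne_of_gt hs))
          · fun_prop
        have h5 := hc1.tendsto
        simp only [add_zero] at h5
        exact h5.mono_left nhdsWithin_le_nhds
      obtain ⟨ε, hεpos, hεy⟩ := exists_eps_pos (hcont.eventually (eventually_lt_nhds hy))
      have hxneg : -(s + ε) < 0 := by linarith
      have hlow := (hNF (-(s+ε)) hxneg).1
      rw [neg_neg] at hlow
      have h6 : ∀ᶠ n : ℕ in atTop,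
          (n:ℝ) * (1 - F (x₀ - a n * s)) ≤ (n:ℝ) * (1 - F (a n * (-(s+ε)) + b n)) := by
        filter_upwards [habs ε hεpos] with n k1
        have k3 : -(ε * a n) ≤ x₀ - b n := (abs_le.1 k1).1
        have k2 : a n * (-(s+ε)) + b n ≤ x₀ - a n * s := by linarith
        have k4 := hmono k2
        have k5 : (0:ℝ) ≤ (n:ℝ) := Nat.cast_nonneg n
        apply mul_le_mul_of_nonneg_left _ k5
        linarith
      have h7 : ∀ᶠ n : ℕ in atTop, (n:ℝ) * (1 - F (a n * (-(s+ε)) + b n)) < y :=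
        hlow.eventually (eventually_lt_nhds hεy)
      filter_upwards [h6, h7] with n k1 k2
      linarith
  -- conclusion
  refine ⟨hbdd, ?_, ?_⟩
  · filter_upwards [eventually_gt_atTop (0:ℝ)] with x hx
    have h1 : (0:ℝ) < 1/x := by positivity
    have h2 : x₀ - 1/x < x₀ := by linarith
    have h3 := F_lt_one_of_lt_sSup hmono hne h2
    linarith
  · intro lam hlam
    have hg1 : ∀ x : ℝ, 0 < x → 0 < 1 - F (x₀ - 1/x) := by
      intro x hx
      have h1 : (0:ℝ) < 1/x := by positivity
      have h2 : x₀ - 1/x < x₀ := by linarith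
      have h3 := F_lt_one_of_lt_sSup hmono hne h2
      linarith
    have hg2 : ∀ x y : ℝ, 0 < x → x ≤ y → 1 - F (x₀ - 1/y) ≤ 1 - F (x₀ - 1/x) := by
      intro x y hx hxy
      have h1 : 1/y ≤ 1/x := one_div_le_one_div_of_le hx hxy
      have h2 : F (x₀ - 1/x) ≤ F (x₀ - 1/y) := hmono (by linarith)
      linarith
    have hd2 : Tendsto (fun n : ℕ => (a n)⁻¹) atTop atTop := by
      apply Filter.Tendsto.inv_tendsto_nhdsGT_zero
      apply tendsto_nhdsWithin_of_tendsto_nhds_of_eventually_within _ ha0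
      exact Eventually.of_forall (fun n => ha n)
    have hlim : ∀ x : ℝ, 0 < x → Tendsto
        (fun n : ℕ => (n:ℝ) * (1 - F (x₀ - 1/((a n)⁻¹ * x)))) atTop (𝓝 (x ^ (-α))) := by
      intro x hx
      have h1 := hN7 x⁻¹ (inv_pos.2 hx)
      have h2 : (x⁻¹ : ℝ) ^ α = x ^ (-α) := by
        rw [Real.inv_rpow (le_of_lt hx), ← Real.rpow_neg (le_of_lt hx)]
      rw [h2] at h1
      apply h1.congr
      intro n
      have h3 : x₀ - 1/((a n)⁻¹ * x) = x₀ - a n * x⁻¹ := by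
        congr 1
        field_simp
      rw [h3]
    exact seq_to_rv (g := fun x => 1 - F (x₀ - 1 / x)) (α := α) (lam := lam)
      hg1 hg2 (fun n => inv_pos.2 (ha n)) hd2 hlim hlam


/-- **Gnedenko's Weibull domain-of-attraction theorem.**  `F ∈ D(Ψ_α)` iff the
upper end-point `x₊ = sup {x | F x < 1}` is finite (the set is bounded above)
and `x ↦ F̄(x₊ - 1/x)` is regularly varying at infinity with index `-α`. -/
theorem gnedenko_weibull (F : ℝ → ℝ) (hF : IsDistFun F) (α : ℝ) (hα : 0 < α) :
    MemDomAttr F (weibull α) ↔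
      (BddAbove {x | F x < 1} ∧
        RegVary (fun x => 1 - F (sSup {x | F x < 1} - 1 / x)) (-α)) := by
  obtain ⟨hmono, hrc, hbot, htop⟩ := hF
  constructor
  · intro h
    exact necessity F hmono hrc hbot htop α hα h
  · rintro ⟨hbdd, hrv⟩
    exact sufficiency F hmono hrc hbot htop α hα hbdd hrv
end

section
/- De Haan's Gumbel domain-of-attraction theorem: Let F be a distribution function with upper end-point x₊ (possibly ∞). Then F ∈ D(Λ) if and only if there exists a function a, positive on (−∞, x₊), such that F̄(t + x a(t))/F̄(t) → e^{−x} as t ↑ x₊, for every x ∈ ℝ. -/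
open Filter Topology

open Classical in
/-- The filter of approach `t ↑ x₊` to the upper end-point
`x₊ = sup {x | F x < 1}` of `F`: convergence from the left if `x₊` is finite,
convergence to `+∞` if `x₊ = ∞`. -/
noncomputable def upperEndFilter (F : ℝ → ℝ) : Filter ℝ :=
  if BddAbove {x | F x < 1} then 𝓝[<] (sSup {x | F x < 1}) else atTop



lemma tendsto_eps {α : Type*} {l : Filter α} {f : α → ℝ} {c : ℝ}
    (h : ∀ ε > 0, ∀ᶠ t in l, c - ε ≤ f t ∧ f t ≤ c + ε) : Tendsto f l (𝓝 c) := by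
  rw [Metric.tendsto_nhds]
  intro ε hε
  filter_upwards [h (ε/2) (by linarith)] with t ht
  rw [Real.dist_eq, abs_lt]
  constructor <;> [linarith [ht.1]; linarith [ht.2]]

lemma log_one_sub_bounds {u : ℝ} (h0 : 0 ≤ u) (h1 : u < 1) :
    -(u/(1-u)) ≤ Real.log (1-u) ∧ Real.log (1-u) ≤ -u := by
  have hp : (0:ℝ) < 1 - u := by linarith
  constructor
  · have := Real.log_le_sub_one_of_pos (inv_pos.mpr hp)
    rw [Real.log_inv] at this
    have h2 : (1-u)⁻¹ - 1 = u / (1-u) := by field_simp; ring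
    rw [h2] at this
    linarith
  · have := Real.log_le_sub_one_of_pos hp
    linarith

lemma u_tendsto_zero {u : ℕ → ℝ} {c : ℝ}
    (h : Tendsto (fun n : ℕ => (n:ℝ) * u n) atTop (𝓝 c)) (h0 : ∀ᶠ n in atTop, 0 ≤ u n) :
    Tendsto u atTop (𝓝 0) := by
  have h2 : Tendsto (fun n : ℕ => ((n:ℝ) * u n) * (n:ℝ)⁻¹) atTop (𝓝 (c * 0)) :=
    h.mul (tendsto_inv_atTop_zero.comp tendsto_natCast_atTop_atTop)
  rw [mul_zero] at h2
  apply tendsto_of_tendsto_of_tendsto_of_le_of_le' tendsto_const_nhds h2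
  · exact h0
  · filter_upwards [eventually_ge_atTop 1] with n hn
    have : (1:ℝ) ≤ (n:ℝ) := by exact_mod_cast hn
    rw [mul_comm, inv_mul_cancel_left₀ (by linarith : (n:ℝ) ≠ 0)]

lemma pow_lim {u : ℕ → ℝ} {c : ℝ}
    (h : Tendsto (fun n : ℕ => (n:ℝ) * u n) atTop (𝓝 c))
    (h01 : ∀ᶠ n in atTop, 0 ≤ u n ∧ u n < 1) :
    Tendsto (fun n => (1 - u n) ^ n) atTop (𝓝 (Real.exp (-c))) := by
  have hu0 : Tendsto u atTop (𝓝 0) := u_tendsto_zero h (by filter_upwards [h01] with n hn using hn.1)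
  -- n * log (1 - u n) → -c
  have hlog : Tendsto (fun n : ℕ => (n:ℝ) * Real.log (1 - u n)) atTop (𝓝 (-c)) := by
    have hlo : Tendsto (fun n : ℕ => -((n:ℝ) * u n) * (1 - u n)⁻¹) atTop (𝓝 (-c)) := by
      have : Tendsto (fun n : ℕ => (1 - u n)⁻¹) atTop (𝓝 (1 - 0)⁻¹) :=
        ((tendsto_const_nhds.sub hu0).inv₀ (by norm_num))
      simpa using (h.neg.mul this)
    have hhi : Tendsto (fun n : ℕ => -((n:ℝ) * u n)) atTop (𝓝 (-c)) := h.neg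
    apply tendsto_of_tendsto_of_tendsto_of_le_of_le' hlo hhi
    · filter_upwards [h01] with n hn
      have hb := (log_one_sub_bounds hn.1 hn.2).1
      have hp : (0:ℝ) < 1 - u n := by linarith [hn.2]
      calc -((n:ℝ) * u n) * (1 - u n)⁻¹ = (n:ℝ) * -(u n / (1 - u n)) := by ring
        _ ≤ (n:ℝ) * Real.log (1 - u n) := by
            apply mul_le_mul_of_nonneg_left hb (Nat.cast_nonneg n)
    · filter_upwards [h01] with n hn
      have hb := (log_one_sub_bounds hn.1 hn.2).2
      calc (n:ℝ) * Real.log (1 - u n) ≤ (n:ℝ) * (-u n) :=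
            mul_le_mul_of_nonneg_left hb (Nat.cast_nonneg n)
        _ = -((n:ℝ) * u n) := by ring
  have := (Real.continuous_exp.tendsto _).comp hlog
  apply this.congr'
  filter_upwards [h01] with n hn
  have hp : (0:ℝ) < 1 - u n := by linarith [hn.2]
  simp only [Function.comp]
  rw [Real.exp_nat_mul, Real.exp_log hp]

lemma pow_lim_inv {u : ℕ → ℝ} {c : ℝ}
    (h : Tendsto (fun n => (1 - u n) ^ n) atTop (𝓝 (Real.exp (-c))))
    (h01 : ∀ᶠ n in atTop, 0 ≤ u n ∧ u n ≤ 1) :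
    Tendsto (fun n : ℕ => (n:ℝ) * u n) atTop (𝓝 c) := by
  have hpos : ∀ᶠ n in atTop, 0 < 1 - u n := by
    have hev : ∀ᶠ n in atTop, Real.exp (-c)/2 < (1 - u n)^n :=
      h.eventually (eventually_gt_nhds (by linarith [Real.exp_pos (-c)]))
    filter_upwards [hev, h01, eventually_ge_atTop 1] with n hn h01 hn1
    rcases lt_or_ge 0 (1 - u n) with h'|h'
    · exact h'
    · exfalso
      have : (1 - u n) ^ n ≤ 0 := by
        have h0 : 1 - u n = 0 := le_antisymm h' (by linarith [h01.2])
        rw [h0, zero_pow (by omega)]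
      nlinarith [Real.exp_pos (-c)]
  -- n * log(1 - u n) → -c
  have hlog : Tendsto (fun n : ℕ => (n:ℝ) * Real.log (1 - u n)) atTop (𝓝 (-c)) := by
    have hcont : Tendsto (fun n => Real.log ((1 - u n)^n)) atTop (𝓝 (-c)) := by
      have h2 := (Real.continuousAt_log (Real.exp_pos (-c)).ne').tendsto.comp h
      simp only [Function.comp_def] at h2
      simpa [Real.log_exp] using h2
    apply hcont.congr'
    filter_upwards [hpos] with n hn
    rw [Real.log_pow]
  -- u n → 0
  have hL : Tendsto (fun n : ℕ => (n:ℝ) * (-Real.log (1 - u n))) atTop (𝓝 c) := by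
    simpa using hlog.neg
  have hub : ∀ᶠ n in atTop, 0 ≤ u n ∧ u n ≤ -Real.log (1 - u n) := by
    filter_upwards [h01, hpos] with n h1 h2
    have hb := (log_one_sub_bounds h1.1 (by linarith)).2
    exact ⟨h1.1, by linarith⟩
  have hu0 : Tendsto u atTop (𝓝 0) := by
    have hL0 : Tendsto (fun n : ℕ => -Real.log (1 - u n)) atTop (𝓝 0) :=
      u_tendsto_zero hL (by filter_upwards [hub] with n hn using le_trans hn.1 hn.2)
    apply tendsto_of_tendsto_of_tendsto_of_le_of_le' tendsto_const_nhds hL0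
    · filter_upwards [hub] with n hn using hn.1
    · filter_upwards [hub] with n hn using hn.2
  -- squeeze n * u n between n*L*(1-u) and n*L
  have hlo : Tendsto (fun n : ℕ => ((n:ℝ) * (-Real.log (1 - u n))) * (1 - u n)) atTop (𝓝 c) := by
    have h2 := hL.mul ((tendsto_const_nhds (x := (1:ℝ))).sub hu0)
    simpa using h2
  apply tendsto_of_tendsto_of_tendsto_of_le_of_le' hlo hL
  · filter_upwards [h01, hpos] with n h1 h2
    have hb := (log_one_sub_bounds h1.1 (by linarith)).1
    have h3 : (-Real.log (1 - u n)) * (1 - u n) ≤ u n := by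
      rw [neg_mul]
      have : Real.log (1 - u n) * (1 - u n) ≥ -(u n / (1 - u n)) * (1 - u n) :=
        mul_le_mul_of_nonneg_right hb (le_of_lt h2)
      have h4 : -(u n / (1 - u n)) * (1 - u n) = -u n := by field_simp
      linarith [h4 ▸ this]
    calc (n:ℝ) * (-Real.log (1 - u n)) * (1 - u n) = (n:ℝ) * ((-Real.log (1 - u n)) * (1 - u n)) := by ring
      _ ≤ (n:ℝ) * u n := mul_le_mul_of_nonneg_left h3 (Nat.cast_nonneg n)
  · filter_upwards [hub] with n hn
    exact mul_le_mul_of_nonneg_left hn.2 (Nat.cast_nonneg n)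



section base
variable {F : ℝ → ℝ} (hF : IsDistFun F)
include hF

lemma F_le_one_s3 (x : ℝ) : F x ≤ 1 :=
  ge_of_tendsto hF.2.2.2 (by filter_upwards [eventually_ge_atTop x] with y hy using hF.1 hy)

lemma F_nonneg_s3 (x : ℝ) : 0 ≤ F x :=
  le_of_tendsto hF.2.2.1 (by filter_upwards [eventually_le_atBot x] with y hy using hF.1 hy)

lemma S_nonempty : {x | F x < 1}.Nonempty := by
  have := hF.2.2.1.eventually (eventually_lt_nhds (by norm_num : (0:ℝ) < 1))
  rcases this.exists with ⟨t, ht⟩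
  exact ⟨t, ht⟩

/-- limit of F from the right equals the value -/
lemma F_right_lim {c x : ℝ} (hev : ∀ s, x < s → F s = c) : F x = c := by
  have h1 : Tendsto F (𝓝[>] x) (𝓝 (F x)) :=
    (hF.2.1 x).tendsto.mono_left (nhdsWithin_mono x Set.Ioi_subset_Ici_self)
  have h2 : Tendsto F (𝓝[>] x) (𝓝 c) := by
    apply Tendsto.congr' _ (tendsto_const_nhds (x := c))
    filter_upwards [self_mem_nhdsWithin] with s hs using (hev s hs).symm
  exact tendsto_nhds_unique h1 h2

lemma F_eq_one_of_ge (hb : BddAbove {x | F x < 1}) {s : ℝ}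
    (hs : sSup {x | F x < 1} ≤ s) : F s = 1 := by
  rcases eq_or_lt_of_le hs with rfl | hlt
  · exact F_right_lim hF (fun u hu => le_antisymm (F_le_one_s3 hF u)
      (not_lt.mp (fun hc => absurd (le_csSup hb hc) (not_le.mpr hu))))
  · exact le_antisymm (F_le_one_s3 hF s) (not_lt.mp (fun hc => absurd (le_csSup hb hc) (not_le.mpr hlt)))

lemma F_lt_one_of_lt (hb : BddAbove {x | F x < 1}) {t : ℝ}
    (ht : t < sSup {x | F x < 1}) : F t < 1 := by
  obtain ⟨s, hs, hts⟩ := exists_lt_of_lt_csSup (S_nonempty hF) ht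
  exact lt_of_le_of_lt (hF.1 hts.le) hs

lemma F_lt_one_of_unbdd (hb : ¬ BddAbove {x | F x < 1}) (t : ℝ) : F t < 1 := by
  rw [bddAbove_def] at hb
  push_neg at hb
  obtain ⟨s, hs, hts⟩ := hb t
  exact lt_of_le_of_lt (hF.1 hts.le) hs

lemma upperEndFilter_neBot : (upperEndFilter F).NeBot := by
  unfold upperEndFilter
  split
  · exact nhdsLT_neBot _
  · exact atTop_neBot

lemma eventually_F_lt_one : ∀ᶠ t in upperEndFilter F, F t < 1 := by
  unfold upperEndFilter
  split
  · next hb =>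
    filter_upwards [self_mem_nhdsWithin] with t ht
    exact F_lt_one_of_lt hF hb ht
  · next hb => exact Eventually.of_forall (F_lt_one_of_unbdd hF hb)

end base

noncomputable def qtl (F : ℝ → ℝ) (n : ℕ) : ℝ := sInf {t | 1 - F t ≤ 1/((n:ℝ)+1)}

section qtl
variable {F : ℝ → ℝ} (hF : IsDistFun F)
  (hsmall : ∀ ε > 0, ∃ t, F t < 1 ∧ 1 - F t ≤ ε)
include hF

lemma lvl_pos (n : ℕ) : (0:ℝ) < 1/((n:ℝ)+1) := by positivity

include hsmall in
lemma qtl_set_nonempty (n : ℕ) : {t | 1 - F t ≤ 1/((n:ℝ)+1)}.Nonempty := by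
  obtain ⟨t, _, ht⟩ := hsmall _ (lvl_pos hF n)
  exact ⟨t, ht⟩

lemma qtl_set_bddBelow {n : ℕ} (hn : 1 ≤ n) : BddBelow {t | 1 - F t ≤ 1/((n:ℝ)+1)} := by
  have hhalf : 1/((n:ℝ)+1) ≤ 1/2 := by
    have : (2:ℝ) ≤ (n:ℝ)+1 := by
      have : (1:ℝ) ≤ (n:ℝ) := by exact_mod_cast hn
      linarith
    rw [div_le_div_iff₀ (by positivity) (by norm_num)]; linarith
  obtain ⟨t₀, ht₀⟩ := (hF.2.2.1.eventually (eventually_lt_nhds (by norm_num : (0:ℝ) < 1/2))).exists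
  refine ⟨t₀, fun s hs => ?_⟩
  by_contra hc
  push_neg at hc
  have := hF.1 hc.le
  simp only [Set.mem_setOf_eq] at hs
  linarith

include hsmall in
lemma qtl_le {n : ℕ} (hn : 1 ≤ n) {s : ℝ} (hs : 1 - F s ≤ 1/((n:ℝ)+1)) : qtl F n ≤ s :=
  csInf_le (qtl_set_bddBelow hF hn) hs

include hsmall in
lemma lt_qtl {n : ℕ} (hn : 1 ≤ n) {s : ℝ} (h : s < qtl F n) : 1/((n:ℝ)+1) < 1 - F s := by
  by_contra hc
  push_neg at hc
  exact absurd (qtl_le hF hsmall hn hc) (not_le.mpr h)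

include hsmall in
lemma F_qtl {n : ℕ} (hn : 1 ≤ n) : 1 - F (qtl F n) ≤ 1/((n:ℝ)+1) := by
  have hlim : Tendsto F (𝓝[>] (qtl F n)) (𝓝 (F (qtl F n))) :=
    (hF.2.1 _).tendsto.mono_left (nhdsWithin_mono _ Set.Ioi_subset_Ici_self)
  have hev : ∀ᶠ s in 𝓝[>] (qtl F n), 1 - 1/((n:ℝ)+1) ≤ F s := by
    filter_upwards [self_mem_nhdsWithin] with s hs
    obtain ⟨u, hu, hus⟩ := exists_lt_of_csInf_lt (qtl_set_nonempty hF hsmall n) hs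
    simp only [Set.mem_setOf_eq] at hu
    have := hF.1 hus.le
    linarith
  have := ge_of_tendsto hlim hev
  linarith

include hsmall in
lemma F_qtl_lt_one {n : ℕ} (hn : 1 ≤ n) : F (qtl F n) < 1 := by
  obtain ⟨t, htl, hts⟩ := hsmall _ (lvl_pos hF n)
  have hqt : qtl F n ≤ t := qtl_le hF hsmall hn hts
  by_cases hb : BddAbove {x | F x < 1}
  · have ht_lt : t < sSup {x | F x < 1} := by
      rcases lt_or_eq_of_le (le_csSup hb (by exact htl)) with h | h
      · exact h
      · exact absurd (h ▸ F_eq_one_of_ge hF hb le_rfl) (ne_of_lt htl)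
    exact F_lt_one_of_lt hF hb (lt_of_le_of_lt hqt ht_lt)
  · exact F_lt_one_of_unbdd hF hb _

include hsmall in
lemma qtl_mono {m n : ℕ} (hm : 1 ≤ m) (hmn : m ≤ n) : qtl F m ≤ qtl F n := by
  apply csInf_le_csInf (qtl_set_bddBelow hF hm) (qtl_set_nonempty hF hsmall n)
  intro s hs
  simp only [Set.mem_setOf_eq] at hs ⊢
  refine le_trans hs (one_div_le_one_div_of_le (by positivity) ?_)
  have : (m:ℝ) ≤ (n:ℝ) := by exact_mod_cast hmn
  linarith

include hsmall in
lemma le_qtl_eventually {y : ℝ} (hy : F y < 1) : ∀ᶠ n in atTop, y ≤ qtl F n := by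
  obtain ⟨N, hN⟩ := exists_nat_gt (1/(1 - F y))
  filter_upwards [eventually_ge_atTop N] with n hn
  have h1 : 1/((n:ℝ)+1) < 1 - F y := by
    rw [div_lt_iff₀ (by positivity)]
    rw [div_lt_iff₀ (by linarith)] at hN
    have : (N:ℝ) ≤ (n:ℝ) := by exact_mod_cast hn
    nlinarith [F_le_one_s3 hF y]
  apply le_csInf (qtl_set_nonempty hF hsmall n)
  intro s hs
  simp only [Set.mem_setOf_eq] at hs
  by_contra hc
  push_neg at hc
  have := hF.1 hc.le
  linarith

include hsmall in
lemma qtl_tendsto : Tendsto (qtl F) atTop (upperEndFilter F) := by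
  unfold upperEndFilter
  split
  · next hb =>
    rw [tendsto_nhdsWithin_iff]
    constructor
    · apply tendsto_eps
      intro ε hε
      have hy : F (sSup {x | F x < 1} - ε/2) < 1 :=
        F_lt_one_of_lt hF hb (by linarith)
      filter_upwards [le_qtl_eventually hF hsmall hy, eventually_ge_atTop 1] with n h1 h2
      constructor
      · linarith
      · have hq : qtl F n < sSup {x | F x < 1} := by
          have hql : F (qtl F n) < 1 := F_qtl_lt_one hF hsmall h2
          rcases lt_or_eq_of_le (le_csSup hb (by exact hql)) with h | h
          · exact h
          · exact absurd (h ▸ F_eq_one_of_ge hF hb le_rfl) (ne_of_lt hql)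
        linarith
    · filter_upwards [eventually_ge_atTop 1] with n h2
      have hql : F (qtl F n) < 1 := F_qtl_lt_one hF hsmall h2
      rcases lt_or_eq_of_le (le_csSup hb (by exact hql)) with h | h
      · exact h
      · exact absurd (h ▸ F_eq_one_of_ge hF hb le_rfl) (ne_of_lt hql)
  · next hb =>
    rw [tendsto_atTop]
    intro y
    filter_upwards [le_qtl_eventually hF hsmall (F_lt_one_of_unbdd hF hb y)] with n hn using hn

end qtl

lemma squeeze_lims {α : Type*} {l : Filter α} {f : α → ℝ} {c : ℝ}
    (h : ∀ ε > 0, ∃ glo ghi : α → ℝ, ∃ lg lh : ℝ,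
      Tendsto glo l (𝓝 lg) ∧ Tendsto ghi l (𝓝 lh) ∧ c - ε ≤ lg ∧ lh ≤ c + ε ∧
      ∀ᶠ n in l, glo n ≤ f n ∧ f n ≤ ghi n) :
    Tendsto f l (𝓝 c) := by
  apply tendsto_eps
  intro ε hε
  obtain ⟨glo, ghi, lg, lh, hg, hh, hlg, hlh, hev⟩ := h (ε/2) (by linarith)
  have h1 : ∀ᶠ n in l, lg - ε/2 ≤ glo n :=
    hg.eventually (eventually_ge_nhds (by linarith))
  have h2 : ∀ᶠ n in l, ghi n ≤ lh + ε/2 :=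
    hh.eventually (eventually_le_nhds (by linarith))
  filter_upwards [hev, h1, h2] with n he h1 h2
  exact ⟨by linarith [he.1], by linarith [he.2]⟩

lemma exp_eps (x : ℝ) {ε' : ℝ} (hε' : 0 < ε') :
    ∃ ε > 0, Real.exp (-x) - ε' ≤ Real.exp (-(x+ε)) ∧
      Real.exp (-(x-ε)) ≤ Real.exp (-x) + ε' := by
  have hc : ContinuousAt (fun d : ℝ => Real.exp (-(x+d))) 0 := by
    apply Real.continuous_exp.continuousAt.comp
    exact (continuous_neg.comp (continuous_const.add continuous_id)).continuousAt
  rw [Metric.continuousAt_iff] at hc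
  obtain ⟨δ, hδ, hd⟩ := hc ε' hε'
  refine ⟨δ/2, by linarith, ?_, ?_⟩
  · have := hd (x := δ/2) (by rw [Real.dist_eq, sub_zero, abs_of_pos (by linarith)]; linarith)
    rw [Real.dist_eq, abs_lt] at this
    simp only [add_zero] at this
    linarith [this.1]
  · have := hd (x := -(δ/2)) (by rw [Real.dist_eq, sub_zero, abs_of_nonpos (by linarith)]; linarith)
    rw [Real.dist_eq, abs_lt] at this
    simp only [add_zero] at this
    have heq : x + -(δ/2) = x - δ/2 := by ring
    rw [heq] at this
    linarith [this.2]



section back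
variable {F : ℝ → ℝ} (hF : IsDistFun F) {a : ℝ → ℝ}
  (hapos : ∀ t, F t < 1 → 0 < a t)
  (hlim : ∀ x : ℝ, Tendsto (fun t => (1 - F (t + x * a t)) / (1 - F t))
    (upperEndFilter F) (𝓝 (Real.exp (-x))))
include hF hapos hlim

lemma back_hsmall : ∀ ε > 0, ∃ t, F t < 1 ∧ 1 - F t ≤ ε := by
  intro ε hε
  by_cases hb : BddAbove {x | F x < 1}
  · by_contra hc
    push_neg at hc
    -- all tails below xstar are > ε ; get contradiction from hlim
    set xstar := sSup {x | F x < 1} with hxs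
    have htail : ∀ t, t < xstar → ε < 1 - F t := fun t ht =>
      hc t (F_lt_one_of_lt hF hb ht)
    set x := 1 - Real.log ε with hx
    have hex : Real.exp (-x) = ε / Real.exp 1 := by
      rw [hx]
      rw [show -(1 - Real.log ε) = Real.log ε + (-1) by ring, Real.exp_add,
        Real.exp_log hε, Real.exp_neg]
      rw [div_eq_mul_inv]
    have hexlt : Real.exp (-x) < ε := by
      rw [hex]
      rw [div_lt_iff₀ (Real.exp_pos 1)]
      nlinarith [Real.exp_one_gt_d9, hε]
    have hexpos : 0 < Real.exp (-x) := Real.exp_pos _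
    have hL : upperEndFilter F = 𝓝[<] xstar := by unfold upperEndFilter; rw [if_pos hb]
    have hev : ∀ᶠ t in 𝓝[<] xstar,
        0 < (1 - F (t + x * a t)) / (1 - F t) ∧ (1 - F (t + x * a t)) / (1 - F t) < ε := by
      have := (hlim x)
      rw [hL] at this
      rw [Metric.tendsto_nhds] at this
      filter_upwards [this (min (Real.exp (-x)) (ε - Real.exp (-x))) (by
        apply lt_min hexpos; linarith)] with t ht
      rw [Real.dist_eq, abs_lt] at ht
      have hm1 := min_le_left (Real.exp (-x)) (ε - Real.exp (-x))
      have hm2 := min_le_right (Real.exp (-x)) (ε - Real.exp (-x))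
      exact ⟨by linarith [ht.1], by linarith [ht.2]⟩
    have : ∃ t, t < xstar ∧ (0 < (1 - F (t + x * a t)) / (1 - F t) ∧
        (1 - F (t + x * a t)) / (1 - F t) < ε) := by
      have hne : (𝓝[<] xstar).NeBot := nhdsLT_neBot _
      have hmem : ∀ᶠ t in 𝓝[<] xstar, t ∈ Set.Iio xstar := self_mem_nhdsWithin
      rcases (hmem.and hev).exists with ⟨t, h1, h2⟩
      exact ⟨t, h1, h2⟩
    obtain ⟨t, htx, hpos, hlt⟩ := this
    have htF : ε < 1 - F t := htail t htx
    have htF1 : 1 - F t ≤ 1 := by linarith [F_nonneg_s3 hF t]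
    rcases lt_or_ge (t + x * a t) xstar with hs | hs
    · -- ratio ≥ ε
      have h1 : ε < 1 - F (t + x * a t) := htail _ hs
      have : ε ≤ (1 - F (t + x * a t)) / (1 - F t) := by
        rw [le_div_iff₀ (by linarith : (0:ℝ) < 1 - F t)]
        nlinarith
      linarith
    · -- ratio = 0
      have h1 : F (t + x * a t) = 1 := F_eq_one_of_ge hF hb hs
      rw [h1] at hpos
      simp at hpos
  · obtain ⟨t, ht⟩ := (hF.2.2.2.eventually (eventually_gt_nhds (by linarith : 1 - ε < 1))).exists
    exact ⟨t, F_lt_one_of_unbdd hF hb t, by linarith⟩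

lemma back_nq : Tendsto (fun n : ℕ => (n:ℝ) * (1 - F (qtl F n))) atTop (𝓝 1) := by
  have hsmall := back_hsmall hF hapos hlim
  have hqt : Tendsto (qtl F) atTop (upperEndFilter F) := qtl_tendsto hF hsmall
  apply squeeze_lims
  intro ε hε
  set s := min 1 ε with hs
  have hs0 : 0 < s := lt_min one_pos hε
  have hsε : s ≤ ε := min_le_right _ _
  have hes : 1 - ε ≤ Real.exp (-s) := by
    have := Real.add_one_le_exp (-s)
    linarith
  refine ⟨fun n => ((n:ℝ)/((n:ℝ)+1)) *
      ((1 - F (qtl F n)) / (1 - F (qtl F n + (-s) * a (qtl F n)))),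
    fun _ => 1, 1 * Real.exp (-s), 1, ?_, tendsto_const_nhds, by linarith, by linarith, ?_⟩
  · apply Tendsto.mul
    · -- n/(n+1) → 1
      have := tendsto_natCast_div_add_atTop (1:ℝ)
      simpa using this
    · have h1 : Tendsto (fun n : ℕ =>
          ((1 - F (qtl F n + (-s) * a (qtl F n))) / (1 - F (qtl F n)))⁻¹) atTop
          (𝓝 (Real.exp (-(-s)))⁻¹) := ((hlim (-s)).comp hqt).inv₀ (Real.exp_ne_zero _)
      have h2 : (Real.exp (-(-s)))⁻¹ = Real.exp (-s) := by
        rw [← Real.exp_neg]; ring_nf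
      rw [h2] at h1
      apply h1.congr
      intro n
      rw [inv_div]
  · filter_upwards [eventually_ge_atTop 1] with n hn
    have hn1 : (1:ℝ) ≤ (n:ℝ) := by exact_mod_cast hn
    have hq1 : 1 - F (qtl F n) ≤ 1/((n:ℝ)+1) := F_qtl hF hsmall hn
    have hqlt : F (qtl F n) < 1 := F_qtl_lt_one hF hsmall hn
    have hqa : 0 < a (qtl F n) := hapos _ hqlt
    have harg : qtl F n + (-s) * a (qtl F n) < qtl F n := by nlinarith
    have hD : 1/((n:ℝ)+1) < 1 - F (qtl F n + (-s) * a (qtl F n)) :=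
      lt_qtl hF hsmall hn harg
    constructor
    · -- glo ≤ n * tail
      have hA : 0 ≤ 1 - F (qtl F n) := by linarith
      have hdiv : (1 - F (qtl F n)) / (1 - F (qtl F n + (-s) * a (qtl F n)))
          ≤ (1 - F (qtl F n)) * ((n:ℝ)+1) := by
        rw [div_le_iff₀ (by linarith : (0:ℝ) < 1 - F (qtl F n + (-s) * a (qtl F n)))]
        rw [div_lt_iff₀ (by positivity : (0:ℝ) < (n:ℝ)+1)] at hD
        nlinarith [mul_le_mul_of_nonneg_left hD.le hA]
      calc ((n:ℝ)/((n:ℝ)+1)) * ((1 - F (qtl F n)) / (1 - F (qtl F n + (-s) * a (qtl F n))))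
          ≤ ((n:ℝ)/((n:ℝ)+1)) * ((1 - F (qtl F n)) * ((n:ℝ)+1)) := by
            apply mul_le_mul_of_nonneg_left hdiv (by positivity)
        _ = (n:ℝ) * (1 - F (qtl F n)) := by field_simp
    · calc (n:ℝ) * (1 - F (qtl F n)) ≤ (n:ℝ) * (1/((n:ℝ)+1)) := by
            apply mul_le_mul_of_nonneg_left hq1 (by positivity)
        _ ≤ 1 := by rw [mul_one_div, div_le_one (by positivity)]; linarith

lemma back_main : MemDomAttr F gumbel := by
  have hsmall := back_hsmall hF hapos hlim
  have hqt : Tendsto (qtl F) atTop (upperEndFilter F) := qtl_tendsto hF hsmall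
  refine ⟨fun n => if F (qtl F n) < 1 then a (qtl F n) else 1, qtl F, ?_, ?_⟩
  · intro n
    dsimp only
    split
    · next h => exact hapos _ h
    · exact one_pos
  · intro x _
    set a' : ℕ → ℝ := fun n => if F (qtl F n) < 1 then a (qtl F n) else 1 with ha'
    set u : ℕ → ℝ := fun n => 1 - F (a' n * x + qtl F n) with hu
    have hnu : Tendsto (fun n : ℕ => (n:ℝ) * u n) atTop (𝓝 (Real.exp (-x))) := by
      have hprod := ((hlim x).comp hqt).mul (back_nq hF hapos hlim)
      rw [mul_one] at hprod
      apply hprod.congr'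
      filter_upwards [eventually_ge_atTop 1] with n hn
      have hqlt : F (qtl F n) < 1 := F_qtl_lt_one hF hsmall hn
      have ha'n : a' n = a (qtl F n) := if_pos hqlt
      have harg : a' n * x + qtl F n = qtl F n + x * a (qtl F n) := by rw [ha'n]; ring
      simp only [Function.comp, hu, harg]
      have hB : 1 - F (qtl F n) ≠ 0 := by intro h; rw [sub_eq_zero] at h; exact absurd h.symm (ne_of_lt hqlt)
      field_simp
    have h01 : ∀ᶠ n in atTop, 0 ≤ u n ∧ u n < 1 := by
      have hu0 : Tendsto u atTop (𝓝 0) :=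
        u_tendsto_zero hnu (Eventually.of_forall fun n => by
          simp only [hu]; linarith [F_le_one_s3 hF (a' n * x + qtl F n)])
      filter_upwards [hu0.eventually (eventually_lt_nhds one_pos)] with n hn
      exact ⟨by simp only [hu]; linarith [F_le_one_s3 hF (a' n * x + qtl F n)], hn⟩
    have := pow_lim hnu h01
    unfold gumbel
    apply this.congr
    intro n
    simp only [hu]
    ring_nf

end back

section fwd
variable {F : ℝ → ℝ} (hF : IsDistFun F) {a b : ℕ → ℝ}
  (hapos : ∀ n, 0 < a n)
  (hconv : ∀ x : ℝ, Tendsto (fun n => F (a n * x + b n) ^ n) atTop (𝓝 (gumbel x)))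
include hF hapos hconv

lemma fwd_nu (x : ℝ) :
    Tendsto (fun n : ℕ => (n:ℝ) * (1 - F (a n * x + b n))) atTop (𝓝 (Real.exp (-x))) := by
  apply pow_lim_inv (c := Real.exp (-x))
  · have := hconv x
    unfold gumbel at this
    apply this.congr
    intro n
    norm_num
  · refine Eventually.of_forall fun n => ⟨?_, ?_⟩
    · linarith [F_le_one_s3 hF (a n * x + b n)]
    · linarith [F_nonneg_s3 hF (a n * x + b n)]

lemma fwd_hsmall : ∀ ε > 0, ∃ t, F t < 1 ∧ 1 - F t ≤ ε := by
  intro ε hε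
  have h0 := fwd_nu hF hapos hconv 0
  rw [neg_zero, Real.exp_zero] at h0
  have h1 : ∀ᶠ n : ℕ in atTop, (1:ℝ)/2 ≤ (n:ℝ) * (1 - F (a n * 0 + b n)) :=
    h0.eventually (eventually_ge_nhds (by norm_num))
  have h2 : ∀ᶠ n : ℕ in atTop, (n:ℝ) * (1 - F (a n * 0 + b n)) ≤ 3/2 :=
    h0.eventually (eventually_le_nhds (by norm_num))
  obtain ⟨M, hM⟩ := exists_nat_gt (2/ε)
  have h3 : ∀ᶠ n : ℕ in atTop, M + 1 ≤ n := eventually_ge_atTop (M+1)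
  rcases (h1.and (h2.and h3)).exists with ⟨n, hn1, hn2, hn3⟩
  have hnpos : (0:ℝ) < (n:ℝ) := by
    have : (1:ℕ) ≤ n := le_trans (Nat.le_add_left 1 M) hn3
    exact_mod_cast Nat.lt_of_lt_of_le Nat.zero_lt_one this
  refine ⟨a n * 0 + b n, ?_, ?_⟩
  · nlinarith
  · have hMn : (2/ε) ≤ (n:ℝ) := by
      have : (M:ℝ) ≤ (n:ℝ) := by exact_mod_cast le_trans (Nat.le_add_right M 1) hn3
      linarith
    rw [div_le_iff₀ hε] at hMn
    have := hn2
    rw [← le_div_iff₀' hnpos] at this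
    calc 1 - F (a n * 0 + b n) ≤ 3/2 / n := this
      _ ≤ ε := by rw [div_le_iff₀ hnpos]; nlinarith

omit hapos hconv in
lemma lt_sSup_of_lt_one (hb : BddAbove {x | F x < 1}) {y : ℝ} (hy : F y < 1) :
    y < sSup {x | F x < 1} := by
  rcases lt_or_eq_of_le (le_csSup hb hy) with h | h
  · exact h
  · exact absurd (h ▸ F_eq_one_of_ge hF hb le_rfl) (ne_of_lt hy)

omit hapos hconv in
lemma eventually_gt_L {y : ℝ} (hy : F y < 1) : ∀ᶠ t in upperEndFilter F, y < t := by
  unfold upperEndFilter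
  split
  · next hb =>
      exact eventually_nhdsWithin_of_eventually_nhds
        (eventually_gt_nhds (lt_sSup_of_lt_one hF hb hy))
  · exact eventually_gt_atTop y

omit hapos hconv in
lemma le_qtl (hsmall : ∀ ε > 0, ∃ t, F t < 1 ∧ 1 - F t ≤ ε) {n : ℕ} {y : ℝ}
    (h : 1/((n:ℝ)+1) < 1 - F y) : y ≤ qtl F n := by
  apply le_csInf (qtl_set_nonempty hF hsmall n)
  intro s hs
  simp only [Set.mem_setOf_eq] at hs
  by_contra hc
  push_neg at hc
  have := hF.1 hc.le
  linarith

lemma fwd_shift {s : ℝ} (hs : 0 < s) :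
    ∀ᶠ n : ℕ in atTop, b n - s * a n ≤ qtl F n ∧ qtl F n ≤ b n + s * a n := by
  have hsmall := fwd_hsmall hF hapos hconv
  have hup := fwd_nu hF hapos hconv s
  have hlo := fwd_nu hF hapos hconv (-s)
  set c' : ℝ := (1 + Real.exp (-s))/2 with hc'
  have hec : Real.exp (-s) < 1 := by
    rw [Real.exp_lt_one_iff]; linarith
  have hc1 : c' < 1 := by rw [hc']; linarith
  have hc0 : 0 < c' := by have := Real.exp_pos (-s); rw [hc']; linarith
  have he1 : 1 < Real.exp (-(-s)) := by
    rw [neg_neg, ← Real.exp_zero]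
    exact Real.exp_lt_exp.mpr hs
  have ev1 : ∀ᶠ n : ℕ in atTop, (n:ℝ) * (1 - F (a n * s + b n)) ≤ c' :=
    hup.eventually (eventually_le_nhds (by rw [hc']; linarith))
  have ev2 : ∀ᶠ n : ℕ in atTop, 1 ≤ (n:ℝ) * (1 - F (a n * (-s) + b n)) :=
    hlo.eventually (eventually_ge_nhds (by linarith))
  obtain ⟨M, hM⟩ := exists_nat_gt (c'/(1 - c'))
  filter_upwards [ev1, ev2, eventually_ge_atTop (M+1), eventually_ge_atTop 1]
    with n h1 h2 h3 hn1
  have hnpos : (0:ℝ) < (n:ℝ) := by exact_mod_cast Nat.lt_of_lt_of_le Nat.zero_lt_one hn1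
  constructor
  · -- lower bound
    have : 1/((n:ℝ)+1) < 1 - F (a n * (-s) + b n) := by
      rw [div_lt_iff₀ (by positivity)]
      have hge : (n:ℝ) * (1 - F (a n * (-s) + b n)) ≥ 1 := h2
      nlinarith [F_le_one_s3 hF (a n * (-s) + b n)]
    have := le_qtl hF hsmall this
    calc b n - s * a n = a n * (-s) + b n := by ring
      _ ≤ qtl F n := this
  · -- upper bound
    have hMn : c'/(1-c') < (n:ℝ) := by
      have h4 : (M:ℝ) ≤ (n:ℝ) := by exact_mod_cast le_trans (Nat.le_add_right M 1) h3
      linarith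
    have hkey : 1 - F (a n * s + b n) ≤ 1/((n:ℝ)+1) := by
      rw [div_lt_iff₀ (by linarith)] at hMn
      have hF1 : 1 - F (a n * s + b n) ≤ c'/(n:ℝ) := by
        rw [le_div_iff₀ hnpos]; linarith [mul_comm ((n:ℝ)) (1 - F (a n * s + b n))]
      refine le_trans hF1 ?_
      rw [div_le_div_iff₀ hnpos (by positivity)]
      nlinarith
    have := qtl_le hF hsmall hn1 hkey
    calc qtl F n ≤ a n * s + b n := this
      _ = b n + s * a n := by ring

lemma fwd_hc (x : ℝ) :
    Tendsto (fun n : ℕ => (n:ℝ) * (1 - F (a n * x + qtl F n))) atTop (𝓝 (Real.exp (-x))) := by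
  apply squeeze_lims
  intro ε' hε'
  obtain ⟨ε, hε, he1, he2⟩ := exp_eps x hε'
  refine ⟨fun n => (n:ℝ) * (1 - F (a n * (x + ε) + b n)),
    fun n => (n:ℝ) * (1 - F (a n * (x - ε) + b n)),
    Real.exp (-(x+ε)), Real.exp (-(x-ε)),
    fwd_nu hF hapos hconv (x+ε), fwd_nu hF hapos hconv (x-ε), by linarith, by linarith, ?_⟩
  filter_upwards [fwd_shift hF hapos hconv hε] with n hn
  have hap := hapos n
  constructor
  · apply mul_le_mul_of_nonneg_left _ (Nat.cast_nonneg n)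
    have : a n * x + qtl F n ≤ a n * (x + ε) + b n := by nlinarith [hn.2]
    linarith [hF.1 this]
  · apply mul_le_mul_of_nonneg_left _ (Nat.cast_nonneg n)
    have : a n * (x - ε) + b n ≤ a n * x + qtl F n := by nlinarith [hn.1]
    linarith [hF.1 this]

lemma fwd_nq : Tendsto (fun n : ℕ => (n:ℝ) * (1 - F (qtl F n))) atTop (𝓝 1) := by
  have := fwd_hc hF hapos hconv 0
  rw [neg_zero, Real.exp_zero] at this
  apply this.congr
  intro n
  norm_num

lemma fwd_shift2 {ε : ℝ} (hε : 0 < ε) :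
    ∀ᶠ n : ℕ in atTop, qtl F n ≤ qtl F (n+1) ∧ qtl F (n+1) ≤ qtl F n + ε * a n := by
  have hsmall := fwd_hsmall hF hapos hconv
  have hup := fwd_hc hF hapos hconv ε
  set c' : ℝ := (1 + Real.exp (-ε))/2 with hc'
  have hec : Real.exp (-ε) < 1 := by rw [Real.exp_lt_one_iff]; linarith
  have hc1 : c' < 1 := by rw [hc']; linarith
  have hc0 : 0 < c' := by have := Real.exp_pos (-ε); rw [hc']; linarith
  have ev1 : ∀ᶠ n : ℕ in atTop, (n:ℝ) * (1 - F (a n * ε + qtl F n)) ≤ c' :=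
    hup.eventually (eventually_le_nhds (by rw [hc']; linarith))
  obtain ⟨M, hM⟩ := exists_nat_gt (2*c'/(1 - c'))
  filter_upwards [ev1, eventually_ge_atTop (M+1), eventually_ge_atTop 1] with n h1 h3 hn1
  have hnpos : (0:ℝ) < (n:ℝ) := by exact_mod_cast Nat.lt_of_lt_of_le Nat.zero_lt_one hn1
  refine ⟨qtl_mono hF hsmall hn1 (Nat.le_succ n), ?_⟩
  have hMn : 2*c'/(1-c') < (n:ℝ) := by
    have h4 : (M:ℝ) ≤ (n:ℝ) := by exact_mod_cast le_trans (Nat.le_add_right M 1) h3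
    linarith
  rw [div_lt_iff₀ (by linarith)] at hMn
  have hkey : 1 - F (a n * ε + qtl F n) ≤ 1/((((n+1):ℕ):ℝ)+1) := by
    have hF1 : 1 - F (a n * ε + qtl F n) ≤ c'/(n:ℝ) := by
      rw [le_div_iff₀ hnpos]; linarith [mul_comm ((n:ℝ)) (1 - F (a n * ε + qtl F n))]
    refine le_trans hF1 ?_
    push_cast
    rw [div_le_div_iff₀ hnpos (by positivity)]
    nlinarith
  calc qtl F (n+1) ≤ a n * ε + qtl F n := qtl_le hF hsmall (by omega) hkey
    _ = qtl F n + ε * a n := by ring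

lemma fwd_div_succ : Tendsto (fun n : ℕ => (n:ℝ)/((n:ℝ)+1)) atTop (𝓝 1) := by
  have := tendsto_natCast_div_add_atTop (1:ℝ)
  simpa using this

lemma fwd_t1 (x : ℝ) :
    Tendsto (fun n : ℕ => (n:ℝ) * (1 - F (a (n+1) * x + qtl F (n+1)))) atTop
      (𝓝 (Real.exp (-x))) := by
  have h := (fwd_hc hF hapos hconv x).comp (tendsto_add_atTop_nat 1)
  have h2 := (fwd_div_succ hF hapos hconv).mul h
  rw [one_mul] at h2
  apply h2.congr
  intro n
  simp only [Function.comp]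
  push_cast
  have : ((n:ℝ)+1) ≠ 0 := by positivity
  field_simp

lemma fwd_ratio : Tendsto (fun n : ℕ => a (n+1) / a n) atTop (𝓝 1) := by
  apply tendsto_eps
  intro ε' hε'
  set ε := min (ε'/2) (1/4) with hε
  have hε0 : 0 < ε := by apply lt_min; linarith; norm_num
  have hε4 : ε ≤ 1/4 := min_le_right _ _
  have hε2 : ε ≤ ε'/2 := min_le_left _ _
  -- upper bound: a (n+1) ≤ (1+ε) a n eventually
  have hup : ∀ᶠ n : ℕ in atTop, a (n+1) ≤ (1+ε) * a n := by
    have hgap : Real.exp (-(1+ε)) < Real.exp (-1) := by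
      apply Real.exp_lt_exp.mpr; linarith
    set δ := (Real.exp (-1) - Real.exp (-(1+ε)))/3 with hδ
    have hδ0 : 0 < δ := by rw [hδ]; linarith
    have ev1 : ∀ᶠ n : ℕ in atTop,
        Real.exp (-1) - δ < (n:ℝ) * (1 - F (a (n+1) * 1 + qtl F (n+1))) :=
      (fwd_t1 hF hapos hconv 1).eventually (eventually_gt_nhds (by linarith))
    have ev2 : ∀ᶠ n : ℕ in atTop,
        (n:ℝ) * (1 - F (a n * (1+ε) + qtl F n)) < Real.exp (-(1+ε)) + δ :=
      (fwd_hc hF hapos hconv (1+ε)).eventually (eventually_lt_nhds (by linarith))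
    filter_upwards [ev1, ev2, fwd_shift2 hF hapos hconv hε0] with n h1 h2 h3
    by_contra hc
    push_neg at hc
    have harg : a n * (1+ε) + qtl F n ≤ a (n+1) * 1 + qtl F (n+1) := by
      have := h3.1; nlinarith
    have hmono : 1 - F (a (n+1) * 1 + qtl F (n+1)) ≤ 1 - F (a n * (1+ε) + qtl F n) := by
      linarith [hF.1 harg]
    have : (n:ℝ) * (1 - F (a (n+1) * 1 + qtl F (n+1))) ≤
        (n:ℝ) * (1 - F (a n * (1+ε) + qtl F n)) :=
      mul_le_mul_of_nonneg_left hmono (Nat.cast_nonneg n)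
    rw [hδ] at h1 h2
    linarith
  -- lower bound: (1 - 2ε) a n ≤ a (n+1) eventually
  have hlo : ∀ᶠ n : ℕ in atTop, (1-2*ε) * a n ≤ a (n+1) := by
    have hgap : Real.exp (-1) < Real.exp (-(1-ε)) := by
      apply Real.exp_lt_exp.mpr; linarith
    set δ := (Real.exp (-(1-ε)) - Real.exp (-1))/3 with hδ
    have hδ0 : 0 < δ := by rw [hδ]; linarith
    have ev1 : ∀ᶠ n : ℕ in atTop,
        (n:ℝ) * (1 - F (a (n+1) * 1 + qtl F (n+1))) < Real.exp (-1) + δ :=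
      (fwd_t1 hF hapos hconv 1).eventually (eventually_lt_nhds (by linarith))
    have ev2 : ∀ᶠ n : ℕ in atTop,
        Real.exp (-(1-ε)) - δ < (n:ℝ) * (1 - F (a n * (1-ε) + qtl F n)) :=
      (fwd_hc hF hapos hconv (1-ε)).eventually (eventually_gt_nhds (by linarith))
    filter_upwards [ev1, ev2, fwd_shift2 hF hapos hconv hε0] with n h1 h2 h3
    by_contra hc
    push_neg at hc
    have harg : a (n+1) * 1 + qtl F (n+1) ≤ a n * (1-ε) + qtl F n := by
      have := h3.2; nlinarith
    have hmono : 1 - F (a n * (1-ε) + qtl F n) ≤ 1 - F (a (n+1) * 1 + qtl F (n+1)) := by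
      linarith [hF.1 harg]
    have : (n:ℝ) * (1 - F (a n * (1-ε) + qtl F n)) ≤
        (n:ℝ) * (1 - F (a (n+1) * 1 + qtl F (n+1))) :=
      mul_le_mul_of_nonneg_left hmono (Nat.cast_nonneg n)
    rw [hδ] at h1 h2
    linarith
  filter_upwards [hup, hlo] with n h1 h2
  have ha := hapos n
  have ha1 := hapos (n+1)
  constructor
  · rw [le_div_iff₀ ha]
    nlinarith
  · rw [div_le_iff₀ ha]
    nlinarith

lemma fwd_arat : Tendsto (fun n : ℕ => a n / a (n+1)) atTop (𝓝 1) := by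
  have := (fwd_ratio hF hapos hconv).inv₀ one_ne_zero
  rw [inv_one] at this
  apply this.congr
  intro n
  rw [inv_div]

lemma fwd_s2 : Tendsto (fun n : ℕ => (n:ℝ) * (1 - F (qtl F (n+1)))) atTop (𝓝 1) := by
  have := fwd_t1 hF hapos hconv 0
  rw [neg_zero, Real.exp_zero] at this
  apply this.congr
  intro n
  norm_num

lemma fwd_s3 (x : ℝ) :
    Tendsto (fun n : ℕ => (n:ℝ) * (1 - F (qtl F (n+1) + x * a n))) atTop
      (𝓝 (Real.exp (-x))) := by
  have hsmall := fwd_hsmall hF hapos hconv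
  apply squeeze_lims
  intro ε' hε'
  obtain ⟨ε, hε, he1, he2⟩ := exp_eps x hε'
  refine ⟨fun n => (n:ℝ) * (1 - F (a (n+1) * (x+ε) + qtl F (n+1))),
    fun n => (n:ℝ) * (1 - F (a n * x + qtl F n)),
    Real.exp (-(x+ε)), Real.exp (-x),
    fwd_t1 hF hapos hconv (x+ε), fwd_hc hF hapos hconv x, by linarith, by linarith, ?_⟩
  have harat := fwd_arat hF hapos hconv
  rw [Metric.tendsto_nhds] at harat
  have hεx : 0 < ε/(|x|+1) := by positivity
  filter_upwards [harat _ hεx, eventually_ge_atTop 1] with n hr hn1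
  rw [Real.dist_eq] at hr
  have ha := hapos n
  have ha1 := hapos (n+1)
  set r := a n / a (n+1) with hrdef
  have har : a n = r * a (n+1) := by rw [hrdef]; field_simp
  have hxr : x * r ≤ x + ε := by
    have h6 : x * (r - 1) ≤ |x| * |r - 1| := by
      calc x * (r-1) ≤ |x * (r-1)| := le_abs_self _
        _ = |x| * |r-1| := abs_mul _ _
    have h7 : |x| * |r-1| ≤ |x| * (ε/(|x|+1)) :=
      mul_le_mul_of_nonneg_left hr.le (abs_nonneg x)
    have h8 : |x| * (ε/(|x|+1)) ≤ ε := by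
      rw [mul_comm, div_mul_eq_mul_div, div_le_iff₀ (by positivity : (0:ℝ) < |x|+1)]
      nlinarith [abs_nonneg x]
    nlinarith [abs_nonneg x]
  have hptle : x * a n ≤ (x+ε) * a (n+1) := by
    calc x * a n = (x * r) * a (n+1) := by rw [har]; ring
      _ ≤ (x+ε) * a (n+1) := mul_le_mul_of_nonneg_right hxr ha1.le
  constructor
  · apply mul_le_mul_of_nonneg_left _ (Nat.cast_nonneg n)
    have harg : qtl F (n+1) + x * a n ≤ a (n+1) * (x+ε) + qtl F (n+1) := by
      nlinarith [hptle]
    linarith [hF.1 harg]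
  · apply mul_le_mul_of_nonneg_left _ (Nat.cast_nonneg n)
    have harg : a n * x + qtl F n ≤ qtl F (n+1) + x * a n := by
      have := qtl_mono hF hsmall hn1 (Nat.le_succ n)
      linarith [this]
    linarith [hF.1 harg]

lemma fwd_main : ∃ af : ℝ → ℝ, (∀ t, F t < 1 → 0 < af t) ∧
    ∀ x : ℝ, Tendsto (fun t => (1 - F (t + x * af t)) / (1 - F t))
      (upperEndFilter F) (𝓝 (Real.exp (-x))) := by
  classical
  have hsmall := fwd_hsmall hF hapos hconv
  set N : ℝ → ℕ := fun t => if h : ∃ k : ℕ, t < qtl F (k+1) then Nat.find h else 0 with hN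
  refine ⟨fun t => a (N t), fun t _ => hapos _, fun x => ?_⟩
  have hstruct : ∀ K : ℕ, 1 ≤ K → ∀ᶠ t in upperEndFilter F,
      K ≤ N t ∧ qtl F (N t) ≤ t ∧ t < qtl F (N t + 1) ∧ F t < 1 := by
    intro K hK
    filter_upwards [eventually_F_lt_one hF,
      eventually_gt_L hF (F_qtl_lt_one hF hsmall hK)] with t hFt hgt
    have hex : ∃ k : ℕ, t < qtl F (k+1) := by
      have hex' : ∃ t', t < t' ∧ F t' < 1 := by
        by_cases hb : BddAbove {x | F x < 1}
        · have h1 : t < sSup {x | F x < 1} := lt_sSup_of_lt_one hF hb hFt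
          exact ⟨(t + sSup {x | F x < 1})/2, by linarith,
            F_lt_one_of_lt hF hb (by linarith)⟩
        · exact ⟨t+1, by linarith, F_lt_one_of_unbdd hF hb _⟩
      obtain ⟨t', htt', ht'F⟩ := hex'
      obtain ⟨n, hn1, hn2⟩ :=
        ((le_qtl_eventually hF hsmall ht'F).and (eventually_ge_atTop 1)).exists
      refine ⟨n-1, ?_⟩
      have : n - 1 + 1 = n := by omega
      rw [this]
      linarith
    have hNt : N t = Nat.find hex := by rw [hN]; exact dif_pos hex
    have hfind : t < qtl F (Nat.find hex + 1) := Nat.find_spec hex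
    have hKle : K ≤ Nat.find hex := by
      by_contra h
      push_neg at h
      have h2 : qtl F (Nat.find hex + 1) ≤ qtl F K := qtl_mono hF hsmall (by omega) (by omega)
      linarith
    have hqle : qtl F (Nat.find hex) ≤ t := by
      have hmin := Nat.find_min hex (m := Nat.find hex - 1) (by omega)
      push_neg at hmin
      have heq : Nat.find hex - 1 + 1 = Nat.find hex := by omega
      rwa [heq] at hmin
    exact ⟨hNt ▸ hKle, hNt ▸ hqle, hNt ▸ hfind, hFt⟩
  have hNtop : Tendsto N (upperEndFilter F) atTop := by
    rw [tendsto_atTop]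
    intro K
    filter_upwards [hstruct (max K 1) (le_max_right _ _)] with t ht
    exact le_trans (le_max_left K 1) ht.1
  have hseqlo : Tendsto (fun n : ℕ =>
      ((n:ℝ) * (1 - F (qtl F (n+1) + x * a n))) / ((n:ℝ) * (1 - F (qtl F n))))
      atTop (𝓝 (Real.exp (-x))) := by
    have := (fwd_s3 hF hapos hconv x).div (fwd_nq hF hapos hconv) one_ne_zero
    simpa [Pi.div_def] using this
  have hseqhi : Tendsto (fun n : ℕ =>
      ((n:ℝ) * (1 - F (a n * x + qtl F n))) / ((n:ℝ) * (1 - F (qtl F (n+1)))))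
      atTop (𝓝 (Real.exp (-x))) := by
    have := (fwd_hc hF hapos hconv x).div (fwd_s2 hF hapos hconv) one_ne_zero
    simpa [Pi.div_def] using this
  apply tendsto_of_tendsto_of_tendsto_of_le_of_le' (hseqlo.comp hNtop) (hseqhi.comp hNtop)
  · -- lower bound
    filter_upwards [hstruct 1 le_rfl] with t ht
    obtain ⟨h1, hqle, hqlt, hFt⟩ := ht
    set n := N t with hn
    have hnpos : (0:ℝ) < (n:ℝ) := by exact_mod_cast Nat.lt_of_lt_of_le Nat.zero_lt_one h1
    have hDt : 0 < 1 - F t := by linarith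
    have hDn : 1 - F t ≤ 1 - F (qtl F n) := by linarith [hF.1 hqle]
    have hAle : 1 - F (qtl F (n+1) + x * a n) ≤ 1 - F (t + x * a n) := by
      have : t + x * a n ≤ qtl F (n+1) + x * a n := by linarith
      linarith [hF.1 this]
    have hA0 : 0 ≤ 1 - F (t + x * a n) := by linarith [F_le_one_s3 hF (t + x * a n)]
    simp only [Function.comp]
    rw [mul_div_mul_left _ _ (ne_of_gt hnpos)]
    exact div_le_div₀ hA0 hAle hDt hDn
  · -- upper bound
    filter_upwards [hstruct 1 le_rfl] with t ht
    obtain ⟨h1, hqle, hqlt, hFt⟩ := ht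
    set n := N t with hn
    have hnpos : (0:ℝ) < (n:ℝ) := by exact_mod_cast Nat.lt_of_lt_of_le Nat.zero_lt_one h1
    have hDt : 0 < 1 - F t := by linarith
    have hDn1 : 0 < 1 - F (qtl F (n+1)) := by
      linarith [F_qtl_lt_one hF hsmall (show 1 ≤ n+1 by omega)]
    have hDn1le : 1 - F (qtl F (n+1)) ≤ 1 - F t := by linarith [hF.1 hqlt.le]
    have hAle : 1 - F (t + x * a n) ≤ 1 - F (a n * x + qtl F n) := by
      have : a n * x + qtl F n ≤ t + x * a n := by linarith [hqle]
      linarith [hF.1 this]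
    have hA0 : 0 ≤ 1 - F (a n * x + qtl F n) := by linarith [F_le_one_s3 hF (a n * x + qtl F n)]
    simp only [Function.comp]
    rw [mul_div_mul_left _ _ (ne_of_gt hnpos)]
    exact div_le_div₀ hA0 hAle hDn1 hDn1le

end fwd

/-- **De Haan's Gumbel domain-of-attraction theorem.**  `F ∈ D(Λ)` iff there is
an auxiliary function `a`, positive on `(-∞, x₊)`, such that
`F̄(t + x a(t)) / F̄(t) → e^{-x}` as `t ↑ x₊`, for every `x ∈ ℝ`. -/
theorem deHaan_gumbel (F : ℝ → ℝ) (hF : IsDistFun F) :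
    MemDomAttr F gumbel ↔
      ∃ a : ℝ → ℝ, (∀ t, F t < 1 → 0 < a t) ∧
        ∀ x : ℝ, Tendsto (fun t => (1 - F (t + x * a t)) / (1 - F t))
          (upperEndFilter F) (𝓝 (Real.exp (-x))) := by
  constructor
  · rintro ⟨a, b, hapos, hconv⟩
    have hconv' : ∀ x : ℝ, Tendsto (fun n => F (a n * x + b n) ^ n) atTop (𝓝 (gumbel x)) := by
      intro x
      apply hconv x
      unfold gumbel
      exact (Real.continuous_exp.comp
        (continuous_neg.comp (Real.continuous_exp.comp continuous_neg))).continuousAt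
    exact fwd_main hF hapos hconv'
  · rintro ⟨a, hapos, hlim⟩
    exact back_main hF hapos hlim
end
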